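/- arXiv:2605.30946 — 6 statements merged into one kernel-verified Lean document; each statement's English description precedes it below -/
import Mathlib

section
/- Let N = 10, let g satisfy condition (g), and let f = e^g. If (v₁, R₁) and (v₂, R₂) are regular solutions with first zero of the equation v'' + (9/r)·v' + f(v) = 0 and v₁(0) < v₂(0), then R₁ < R₂; that is, the first zero of the regular radial solution is strictly increasing in the initial value (Type II bifurcation). -/
set_option maxHeartbeats 1000000

open Set Filter Topology


/-- One-sided derivative on `[0, ∞)`. -/
noncomputable def dIci (g : ℝ → ℝ) : ℝ → ℝ := derivWithin g (Set.Ici 0)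

/-- Condition (g): `g ∈ C³([0,∞))` with `g' > 0`, `g'' > 0`, `g'² - g'' ≥ 0`
and `2 g''² - g' g''' > 0` on `[0, ∞)`. -/
def ConditionG (g : ℝ → ℝ) : Prop :=
  ContDiffOn ℝ 3 g (Set.Ici 0) ∧
  ∀ u : ℝ, 0 ≤ u →
    0 < dIci g u ∧
    0 < dIci (dIci g) u ∧
    0 ≤ (dIci g u) ^ 2 - dIci (dIci g) u ∧
    0 < 2 * (dIci (dIci g) u) ^ 2 - dIci g u * dIci (dIci (dIci g)) u

/-- `(v, R)` is a regular solution with first zero of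
`v'' + ((N-1)/r) v' + f(v) = 0`: `R > 0`, `v ∈ C²([0,R])`, the equation holds
for `0 < r < R`, `v'(0) = 0`, `v > 0` on `[0,R)`, and `v(R) = 0`. -/
def IsRegularSolutionWithFirstZero (N : ℕ) (f v : ℝ → ℝ) (R : ℝ) : Prop :=
  0 < R ∧ (∀ r : ℝ, 0 ≤ r → r < R → 0 < v r) ∧ v R = 0 ∧
  ∃ v' v'' : ℝ → ℝ,
    (∀ r ∈ Set.Icc (0:ℝ) R, HasDerivWithinAt v (v' r) (Set.Icc 0 R) r) ∧
    (∀ r ∈ Set.Icc (0:ℝ) R, HasDerivWithinAt v' (v'' r) (Set.Icc 0 R) r) ∧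
    ContinuousOn v'' (Set.Icc 0 R) ∧
    v' 0 = 0 ∧
    ∀ r ∈ Set.Ioo (0:ℝ) R, v'' r + ((N : ℝ) - 1) / r * v' r + f (v r) = 0

lemma left_gt_of_deriv_neg {φ : ℝ → ℝ} {d x : ℝ} (h : HasDerivAt φ d x) (hd : d < 0) :
    ∀ᶠ y in 𝓝[<] x, φ x < φ y := by
  have hs : Filter.Tendsto (slope φ x) (𝓝[≠] x) (𝓝 d) :=
    hasDerivAt_iff_tendsto_slope.mp h
  have h1 : ∀ᶠ y in 𝓝[≠] x, slope φ x y < 0 := hs.eventually_lt_const hd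
  have h2 : ∀ᶠ y in 𝓝[<] x, slope φ x y < 0 :=
    h1.filter_mono (nhdsWithin_mono x fun y hy => ne_of_lt hy)
  filter_upwards [h2, self_mem_nhdsWithin] with y hsl hy
  have hyx : y - x < 0 := sub_neg.mpr hy
  rw [slope_def_field] at hsl
  rcases div_neg_iff.mp hsl with ⟨h3, h4⟩ | ⟨h3, h4⟩ <;> linarith

lemma left_lt_of_deriv_pos {φ : ℝ → ℝ} {d x : ℝ} (h : HasDerivAt φ d x) (hd : 0 < d) :
    ∀ᶠ y in 𝓝[<] x, φ y < φ x := by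
  have hs : Filter.Tendsto (slope φ x) (𝓝[≠] x) (𝓝 d) :=
    hasDerivAt_iff_tendsto_slope.mp h
  have h1 : ∀ᶠ y in 𝓝[≠] x, 0 < slope φ x y := hs.eventually_const_lt hd
  have h2 : ∀ᶠ y in 𝓝[<] x, 0 < slope φ x y :=
    h1.filter_mono (nhdsWithin_mono x fun y hy => ne_of_lt hy)
  filter_upwards [h2, self_mem_nhdsWithin] with y hsl hy
  have hyx : y - x < 0 := sub_neg.mpr hy
  rw [slope_def_field] at hsl
  rcases div_pos_iff.mp hsl with ⟨h3, h4⟩ | ⟨h3, h4⟩ <;> linarith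

lemma conditionG_derivs {g : ℝ → ℝ} (hg : ConditionG g) {u : ℝ} (hu : 0 < u) :
    HasDerivAt g (deriv g u) u ∧ HasDerivAt (deriv g) (deriv (deriv g) u) u ∧
      0 < deriv g u ∧ 0 < deriv (deriv g) u := by
  have hIoi : ContDiffOn ℝ 3 g (Set.Ioi 0) := hg.1.mono Set.Ioi_subset_Ici_self
  have hnb : Set.Ioi (0:ℝ) ∈ 𝓝 u := isOpen_Ioi.mem_nhds hu
  have hd1 : ContDiffOn ℝ 2 (deriv g) (Set.Ioi 0) :=
    hIoi.deriv_of_isOpen isOpen_Ioi (by norm_num)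
  have h1 : HasDerivAt g (deriv g u) u :=
    ((hIoi.contDiffAt hnb).differentiableAt (by norm_num)).hasDerivAt
  have h2 : HasDerivAt (deriv g) (deriv (deriv g) u) u :=
    ((hd1.contDiffAt hnb).differentiableAt (by norm_num)).hasDerivAt
  have e1 : dIci g u = deriv g u := derivWithin_of_mem_nhds (Ici_mem_nhds hu)
  have eEq : dIci g =ᶠ[𝓝 u] deriv g := by
    filter_upwards [hnb] with x hx
    exact derivWithin_of_mem_nhds (Ici_mem_nhds hx)
  have e2 : dIci (dIci g) u = deriv (deriv g) u := by
    rw [dIci, derivWithin_of_mem_nhds (Ici_mem_nhds hu)]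
    exact eEq.deriv_eq
  obtain ⟨p1, p2, -, -⟩ := hg.2 u (le_of_lt hu)
  exact ⟨h1, h2, e1 ▸ p1, e2 ▸ p2⟩

/-- `f` has derivative `g' e^g` at positive points. -/
lemma hasDerivAt_f {g f : ℝ → ℝ} (hg : ConditionG g)
    (hf : ∀ u : ℝ, 0 ≤ u → f u = Real.exp (g u)) {u : ℝ} (hu : 0 < u) :
    HasDerivAt f (deriv g u * Real.exp (g u)) u := by
  obtain ⟨h1, -, -, -⟩ := conditionG_derivs hg hu
  have h2 : HasDerivAt (fun x => Real.exp (g x)) (Real.exp (g u) * deriv g u) u :=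
    (Real.hasDerivAt_exp (g u)).comp u h1
  have h3 : f =ᶠ[𝓝 u] fun x => Real.exp (g x) := by
    filter_upwards [isOpen_Ioi.mem_nhds hu] with x hx
    exact hf x (le_of_lt hx)
  simpa [mul_comm] using h2.congr_of_eventuallyEq h3

lemma strictMonoOn_F1 {g : ℝ → ℝ} (hg : ConditionG g) :
    StrictMonoOn (fun u => deriv g u * Real.exp (g u)) (Set.Ioi 0) := by
  have hd : ∀ u ∈ Set.Ioi (0:ℝ), HasDerivAt (fun u => deriv g u * Real.exp (g u))
      (deriv (deriv g) u * Real.exp (g u) + deriv g u * (Real.exp (g u) * deriv g u)) u := by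
    intro u hu
    obtain ⟨h1, h2, -, -⟩ := conditionG_derivs hg hu
    exact h2.mul ((Real.hasDerivAt_exp (g u)).comp u h1)
  apply strictMonoOn_of_deriv_pos (convex_Ioi 0)
  · exact fun u hu => ((hd u hu).differentiableAt.continuousAt).continuousWithinAt
  · intro u hu
    rw [interior_Ioi] at hu
    rw [(hd u hu).deriv]
    obtain ⟨-, -, hg1, hg2⟩ := conditionG_derivs hg hu
    have := Real.exp_pos (g u)
    positivity
/-- The Hardy-critical quantity `E(r) = r² f'(v(r))`. -/
noncomputable def Efun (g v : ℝ → ℝ) (r : ℝ) : ℝ :=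
  r ^ 2 * (deriv g (v r) * Real.exp (g (v r)))

/-- Key a priori estimate: for `N = 10` the quantity `r² f'(v(r))` stays below
`(N-2)²/4 = 16` along any regular solution, and tends to `0` at the origin. -/
lemma key_estimate {g f v v' v'' : ℝ → ℝ} {R : ℝ} (hg : ConditionG g)
    (hf : ∀ u : ℝ, 0 ≤ u → f u = Real.exp (g u))
    (hR : 0 < R) (hpos : ∀ r : ℝ, 0 ≤ r → r < R → 0 < v r) (hvR : v R = 0)
    (hv : ∀ r ∈ Set.Icc (0:ℝ) R, HasDerivWithinAt v (v' r) (Set.Icc 0 R) r)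
    (hv' : ∀ r ∈ Set.Icc (0:ℝ) R, HasDerivWithinAt v' (v'' r) (Set.Icc 0 R) r)
    (hv'0 : v' 0 = 0)
    (hode : ∀ r ∈ Set.Ioo (0:ℝ) R, v'' r + ((10:ℝ) - 1) / r * v' r + f (v r) = 0) :
    (∀ r ∈ Set.Ioo (0:ℝ) R, Efun g v r ≤ 16) ∧
      Tendsto (Efun g v) (𝓝[Set.Ioo 0 R] 0) (𝓝 0) := by
  -- basic facts
  have hvc : ContinuousOn v (Set.Icc 0 R) := fun r hr => (hv r hr).continuousWithinAt
  have hv'c : ContinuousOn v' (Set.Icc 0 R) := fun r hr => (hv' r hr).continuousWithinAt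
  have hvD : ∀ r ∈ Set.Ioo (0:ℝ) R, HasDerivAt v (v' r) r := fun r hr =>
    (hv r (Set.Ioo_subset_Icc_self hr)).hasDerivAt (Icc_mem_nhds hr.1 hr.2)
  have hv'D : ∀ r ∈ Set.Ioo (0:ℝ) R, HasDerivAt v' (v'' r) r := fun r hr =>
    (hv' r (Set.Ioo_subset_Icc_self hr)).hasDerivAt (Icc_mem_nhds hr.1 hr.2)
  have hvnn : ∀ r ∈ Set.Icc (0:ℝ) R, 0 ≤ v r := by
    intro r hr
    rcases eq_or_lt_of_le hr.2 with h | h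
    · rw [h, hvR]
    · exact le_of_lt (hpos r hr.1 h)
  have hODE : ∀ r ∈ Set.Ioo (0:ℝ) R, v'' r = -(9 / r * v' r) - Real.exp (g (v r)) := by
    intro r hr
    have h := hode r hr
    have hfv : f (v r) = Real.exp (g (v r)) :=
      hf _ (hvnn r (Set.Ioo_subset_Icc_self hr))
    rw [hfv] at h
    norm_num at h
    linarith
  -- v' < 0 on (0, R]
  have hv'neg : ∀ r ∈ Set.Ioc (0:ℝ) R, v' r < 0 := by
    intro r hr
    have hWc : ContinuousOn (fun r => r ^ 9 * v' r) (Set.Icc 0 R) :=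
      (continuous_pow 9).continuousOn.mul hv'c
    have hWd : ∀ s ∈ interior (Set.Icc (0:ℝ) R), deriv (fun r => r ^ 9 * v' r) s < 0 := by
      intro s hs
      rw [interior_Icc] at hs
      have hD : HasDerivAt (fun r => r ^ 9 * v' r)
          ((9:ℕ) * s ^ (8:ℕ) * v' s + s ^ 9 * v'' s) s :=
        (hasDerivAt_pow 9 s).mul (hv'D s hs)
      rw [hD.deriv, hODE s hs]
      have hs0 : (0:ℝ) < s := hs.1
      have hexp := Real.exp_pos (g (v s))
      have h9 : s ^ 9 * (9 / s * v' s) = 9 * s ^ 8 * v' s := by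
        field_simp
      have hpow : (0:ℝ) < s ^ 9 := pow_pos hs0 9
      nlinarith [hpow, hexp]
    have hanti : StrictAntiOn (fun r => r ^ 9 * v' r) (Set.Icc 0 R) :=
      strictAntiOn_of_deriv_neg (convex_Icc 0 R) hWc hWd
    have h0m : (0:ℝ) ∈ Set.Icc (0:ℝ) R := ⟨le_rfl, le_of_lt hR⟩
    have hrm : r ∈ Set.Icc (0:ℝ) R := ⟨le_of_lt hr.1, hr.2⟩
    have := hanti h0m hrm hr.1
    simp only [ne_eq, OfNat.ofNat_ne_zero, not_false_eq_true, zero_pow, zero_mul] at this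
    nlinarith [pow_pos hr.1 9, this]
  -- Sfun
  set Sf : ℝ → ℝ := fun r => r * v' r * deriv g (v r) with hSf_def
  -- limits at the origin
  have h00 : (0:ℝ) ∈ Set.Icc (0:ℝ) R := ⟨le_rfl, le_of_lt hR⟩
  have hv00 : 0 < v 0 := hpos 0 le_rfl hR
  obtain ⟨hgd0, hg1d0, hg1p0, hg2p0⟩ := conditionG_derivs hg hv00
  have htv : Tendsto v (𝓝[Set.Ioo 0 R] 0) (𝓝 (v 0)) :=
    ((hvc 0 h00).mono Set.Ioo_subset_Icc_self)
  have htv' : Tendsto v' (𝓝[Set.Ioo 0 R] 0) (𝓝 0) := by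
    have := (hv'c 0 h00).mono Set.Ioo_subset_Icc_self
    rwa [ContinuousWithinAt, hv'0] at this
  have htg1 : Tendsto (fun r => deriv g (v r)) (𝓝[Set.Ioo 0 R] 0) (𝓝 (deriv g (v 0))) :=
    (hg1d0.continuousAt.tendsto).comp htv
  have htexp : Tendsto (fun r => Real.exp (g (v r))) (𝓝[Set.Ioo 0 R] 0)
      (𝓝 (Real.exp (g (v 0)))) :=
    (Real.continuous_exp.tendsto _).comp ((hgd0.continuousAt.tendsto).comp htv)
  have htid : Tendsto (fun r : ℝ => r) (𝓝[Set.Ioo 0 R] 0) (𝓝 0) :=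
    tendsto_id.mono_left nhdsWithin_le_nhds
  have hE0 : Tendsto (Efun g v) (𝓝[Set.Ioo 0 R] 0) (𝓝 0) := by
    have h1 : Tendsto (fun r : ℝ => r ^ 2) (𝓝[Set.Ioo 0 R] 0) (𝓝 0) := by
      simpa using htid.pow 2
    rw [show Efun g v = fun r => r ^ 2 * (deriv g (v r) * Real.exp (g (v r))) from rfl]
    simpa using h1.mul (htg1.mul htexp)
  have hS0 : Tendsto Sf (𝓝[Set.Ioo 0 R] 0) (𝓝 0) := by
    simpa using (htid.mul htv').mul htg1
  refine ⟨?_, hE0⟩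
  -- derivative formulas on the interior
  have hSder : ∀ r ∈ Set.Ioo (0:ℝ) R, HasDerivAt Sf
      (v' r * deriv g (v r) + r * v'' r * deriv g (v r)
        + r * (v' r) ^ 2 * deriv (deriv g) (v r)) r := by
    intro r hr
    have hu : 0 < v r := hpos r (le_of_lt hr.1) hr.2
    obtain ⟨hgd, hg1d, -, -⟩ := conditionG_derivs hg hu
    have hg1v : HasDerivAt (fun s => deriv g (v s)) (deriv (deriv g) (v r) * v' r) r :=
      hg1d.comp r (hvD r hr)
    have h := ((hasDerivAt_id r).mul (hv'D r hr)).mul hg1v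
    refine h.congr_deriv ?_
    simp; ring
  have hEder : ∀ r ∈ Set.Ioo (0:ℝ) R, HasDerivAt (Efun g v)
      (2 * r * (deriv g (v r) * Real.exp (g (v r)))
        + r ^ 2 * deriv (deriv g) (v r) * v' r * Real.exp (g (v r))
        + r ^ 2 * (deriv g (v r)) ^ 2 * v' r * Real.exp (g (v r))) r := by
    intro r hr
    have hu : 0 < v r := hpos r (le_of_lt hr.1) hr.2
    obtain ⟨hgd, hg1d, -, -⟩ := conditionG_derivs hg hu
    have hg1v : HasDerivAt (fun s => deriv g (v s)) (deriv (deriv g) (v r) * v' r) r :=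
      hg1d.comp r (hvD r hr)
    have hgv : HasDerivAt (fun s => g (v s)) (deriv g (v r) * v' r) r :=
      hgd.comp r (hvD r hr)
    have hexpv : HasDerivAt (fun s => Real.exp (g (v s)))
        (Real.exp (g (v r)) * (deriv g (v r) * v' r)) r :=
      hgv.exp
    have h := (hasDerivAt_pow 2 r).mul (hg1v.mul hexpv)
    have he : Efun g v = fun r => r ^ 2 * (deriv g (v r) * Real.exp (g (v r))) := rfl
    rw [he]
    refine h.congr_deriv ?_
    push_cast; simp only [Pi.mul_apply]; ring
  -- suffices: invariant region
  suffices hKey : ∀ r ∈ Set.Ioo (0:ℝ) R, Efun g v r + 4 * Sf r ≤ 8 ∧ -2 ≤ Sf r by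
    intro r hr
    obtain ⟨h1, h2⟩ := hKey r hr
    linarith
  by_contra hC
  push_neg at hC
  -- the set of "bad" radii
  set B : Set ℝ := {r | r ∈ Set.Ioo (0:ℝ) R ∧ (8 < Efun g v r + 4 * Sf r ∨ Sf r < -2)}
    with hB_def
  have hBne : B.Nonempty := by
    obtain ⟨b, hb, hbad⟩ := hC
    refine ⟨b, hb, ?_⟩
    rcases le_or_gt (Efun g v b + 4 * Sf b) 8 with h | h
    · exact Or.inr (hbad h)
    · exact Or.inl h
  have hBdd : BddBelow B := ⟨0, fun b hb => le_of_lt hb.1.1⟩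
  -- good behavior near the origin
  have hgood0 : ∀ᶠ r in 𝓝[Set.Ioo 0 R] 0, Efun g v r + 4 * Sf r < 8 ∧ -2 < Sf r := by
    have hA0 : Tendsto (fun r => Efun g v r + 4 * Sf r) (𝓝[Set.Ioo 0 R] 0) (𝓝 0) := by
      simpa using hE0.add (hS0.const_mul 4)
    exact (hA0.eventually_lt_const (by norm_num)).and (hS0.eventually_const_lt (by norm_num))
  obtain ⟨U, hUopen, hU0, hUsub⟩ := mem_nhdsWithin.mp hgood0
  obtain ⟨ε, hε, hball⟩ := Metric.isOpen_iff.mp hUopen 0 hU0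
  have hsmall : ∀ r, r ∈ Set.Ioo (0:ℝ) R → r ≤ ε / 2 → ¬ r ∈ B := by
    intro r hr hrε hrB
    have hrU : r ∈ U := by
      apply hball
      rw [Real.ball_eq_Ioo]
      constructor <;> simp <;> [linarith [hr.1]; linarith [hr.1]]
    have := hUsub ⟨hrU, hr⟩
    rcases hrB.2 with h | h <;> simp only [Set.mem_setOf_eq] at this <;> linarith [this.1, this.2]
  -- the infimum of the bad set
  set r₀ := sInf B with hr₀_def
  have hr₀lb : ε / 2 ≤ r₀ := by
    apply le_csInf hBne
    intro b hb
    by_contra hcon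
    push_neg at hcon
    exact hsmall b hb.1 (le_of_lt hcon) hb
  have hr₀pos : 0 < r₀ := lt_of_lt_of_le (by linarith) hr₀lb
  have hr₀R : r₀ < R := by
    obtain ⟨b, hb⟩ := hBne
    exact lt_of_le_of_lt (csInf_le hBdd hb) hb.1.2
  have hr₀Ioo : r₀ ∈ Set.Ioo (0:ℝ) R := ⟨hr₀pos, hr₀R⟩
  -- good on (0, r₀)
  have hgoodlt : ∀ r, 0 < r → r < r₀ → Efun g v r + 4 * Sf r ≤ 8 ∧ -2 ≤ Sf r := by
    intro r h1 h2
    by_contra hcon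
    push_neg at hcon
    have hrB : r ∈ B := by
      refine ⟨⟨h1, lt_trans h2 hr₀R⟩, ?_⟩
      rcases lt_or_ge 8 (Efun g v r + 4 * Sf r) with h | h
      · exact Or.inl h
      · exact Or.inr (hcon h)
    exact absurd (csInf_le hBdd hrB) (not_le.mpr h2)
  -- continuity at r₀
  have hEc : ContinuousAt (Efun g v) r₀ := (hEder r₀ hr₀Ioo).continuousAt
  have hSc : ContinuousAt Sf r₀ := (hSder r₀ hr₀Ioo).continuousAt
  have hAc : ContinuousAt (fun r => Efun g v r + 4 * Sf r) r₀ := hEc.add (hSc.const_mul 4)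
  have hevpos : ∀ᶠ r in 𝓝[<] r₀, 0 < r :=
    ((isOpen_Ioi.eventually_mem (show r₀ ∈ Set.Ioi (0:ℝ) from hr₀pos)).filter_mono
      nhdsWithin_le_nhds)
  -- limits from the left give the boundary values
  have hA₀ : Efun g v r₀ + 4 * Sf r₀ ≤ 8 := by
    refine le_of_tendsto (hAc.tendsto.mono_left (nhdsWithin_le_nhds : 𝓝[<] r₀ ≤ 𝓝 r₀)) ?_
    filter_upwards [hevpos, self_mem_nhdsWithin] with r h1 h2
    exact (hgoodlt r h1 h2).1
  have hS₀ : -2 ≤ Sf r₀ := by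
    refine ge_of_tendsto (hSc.tendsto.mono_left (nhdsWithin_le_nhds : 𝓝[<] r₀ ≤ 𝓝 r₀)) ?_
    filter_upwards [hevpos, self_mem_nhdsWithin] with r h1 h2
    exact (hgoodlt r h1 h2).2
  -- data at the exit point
  have hu₀ : 0 < v r₀ := hpos r₀ (le_of_lt hr₀pos) hr₀R
  obtain ⟨-, -, hg1p, hg2p⟩ := conditionG_derivs hg hu₀
  have hp₀ : v' r₀ < 0 := hv'neg r₀ ⟨hr₀pos, le_of_lt hr₀R⟩
  have hX₀ : 0 < Real.exp (g (v r₀)) := Real.exp_pos _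
  have hSd := hSder r₀ hr₀Ioo
  rw [hODE r₀ hr₀Ioo] at hSd
  have hSd2 : HasDerivAt Sf
      (-(8 * v' r₀ * deriv g (v r₀)) - r₀ * Real.exp (g (v r₀)) * deriv g (v r₀)
        + r₀ * (v' r₀) ^ 2 * deriv (deriv g) (v r₀)) r₀ := by
    convert hSd using 1
    field_simp
    ring
  have hEd := hEder r₀ hr₀Ioo
  rcases eq_or_lt_of_le hA₀ with hA8 | hAlt
  · -- boundary `E + 4S = 8`: the quantity is strictly decreasing there
    have hA8' : r₀ ^ 2 * (deriv g (v r₀) * Real.exp (g (v r₀)))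
        + 4 * (r₀ * v' r₀ * deriv g (v r₀)) = 8 := by
      have := hA8
      simp only [Efun, hSf_def] at this
      linarith
    have h8' : r₀ * deriv g (v r₀) * (r₀ * Real.exp (g (v r₀)) + 4 * v' r₀) = 8 := by
      linear_combination hA8'
    have hpos8 : 0 < r₀ * Real.exp (g (v r₀)) + 4 * v' r₀ := by
      nlinarith [mul_pos hr₀pos hg1p, h8']
    have hterm : deriv (deriv g) (v r₀) * (r₀ ^ 2 * v' r₀)
        * (r₀ * Real.exp (g (v r₀)) + 4 * v' r₀) < 0 :=
      mul_neg_of_neg_of_pos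
        (mul_neg_of_pos_of_neg hg2p (mul_neg_of_pos_of_neg (pow_pos hr₀pos 2) hp₀)) hpos8
    have hAd : HasDerivAt (fun r => Efun g v r + 4 * Sf r)
        ((2 * r₀ * (deriv g (v r₀) * Real.exp (g (v r₀)))
          + r₀ ^ 2 * deriv (deriv g) (v r₀) * v' r₀ * Real.exp (g (v r₀))
          + r₀ ^ 2 * (deriv g (v r₀)) ^ 2 * v' r₀ * Real.exp (g (v r₀)))
          + 4 * (-(8 * v' r₀ * deriv g (v r₀)) - r₀ * Real.exp (g (v r₀)) * deriv g (v r₀)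
            + r₀ * (v' r₀) ^ 2 * deriv (deriv g) (v r₀))) r₀ := hEd.add (hSd2.const_mul 4)
    have hid : r₀ * ((2 * r₀ * (deriv g (v r₀) * Real.exp (g (v r₀)))
          + r₀ ^ 2 * deriv (deriv g) (v r₀) * v' r₀ * Real.exp (g (v r₀))
          + r₀ ^ 2 * (deriv g (v r₀)) ^ 2 * v' r₀ * Real.exp (g (v r₀)))
          + 4 * (-(8 * v' r₀ * deriv g (v r₀)) - r₀ * Real.exp (g (v r₀)) * deriv g (v r₀)
            + r₀ * (v' r₀) ^ 2 * deriv (deriv g) (v r₀)))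
        = -4 * (r₀ * v' r₀ * deriv g (v r₀) + 2) ^ 2
          + (r₀ * v' r₀ * deriv g (v r₀) - 2)
            * (r₀ ^ 2 * (deriv g (v r₀) * Real.exp (g (v r₀)))
              + 4 * (r₀ * v' r₀ * deriv g (v r₀)) - 8)
          + deriv (deriv g) (v r₀) * (r₀ ^ 2 * v' r₀)
            * (r₀ * Real.exp (g (v r₀)) + 4 * v' r₀) := by ring
    have hzero : r₀ ^ 2 * (deriv g (v r₀) * Real.exp (g (v r₀)))
        + 4 * (r₀ * v' r₀ * deriv g (v r₀)) - 8 = 0 := by linarith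
    have hAd' : r₀ * ((2 * r₀ * (deriv g (v r₀) * Real.exp (g (v r₀)))
          + r₀ ^ 2 * deriv (deriv g) (v r₀) * v' r₀ * Real.exp (g (v r₀))
          + r₀ ^ 2 * (deriv g (v r₀)) ^ 2 * v' r₀ * Real.exp (g (v r₀)))
          + 4 * (-(8 * v' r₀ * deriv g (v r₀)) - r₀ * Real.exp (g (v r₀)) * deriv g (v r₀)
            + r₀ * (v' r₀) ^ 2 * deriv (deriv g) (v r₀))) < 0 := by
      rw [hid, hzero, mul_zero, add_zero]
      nlinarith [sq_nonneg (r₀ * v' r₀ * deriv g (v r₀) + 2), hterm]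
    have hAdneg : (2 * r₀ * (deriv g (v r₀) * Real.exp (g (v r₀)))
          + r₀ ^ 2 * deriv (deriv g) (v r₀) * v' r₀ * Real.exp (g (v r₀))
          + r₀ ^ 2 * (deriv g (v r₀)) ^ 2 * v' r₀ * Real.exp (g (v r₀)))
          + 4 * (-(8 * v' r₀ * deriv g (v r₀)) - r₀ * Real.exp (g (v r₀)) * deriv g (v r₀)
            + r₀ * (v' r₀) ^ 2 * deriv (deriv g) (v r₀)) < 0 := by
      rcases mul_neg_iff.mp hAd' with ⟨h1, h2⟩ | ⟨h1, h2⟩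
      · exact h2
      · linarith
    have hev := left_gt_of_deriv_neg hAd hAdneg
    obtain ⟨y, hy1, hy2, hy3⟩ := (hev.and (hevpos.and self_mem_nhdsWithin)).exists
    have := (hgoodlt y hy2 hy3).1
    linarith [hy1, hA8]
  · rcases eq_or_lt_of_le hS₀ with hS2 | hSgt
    · -- boundary `S = -2`: `S` is strictly increasing there
      have hS2' : r₀ * v' r₀ * deriv g (v r₀) = -2 := by
        have := hS2
        simp only [hSf_def] at this
        linarith
      have hAle : r₀ ^ 2 * (deriv g (v r₀) * Real.exp (g (v r₀)))
          + 4 * (r₀ * v' r₀ * deriv g (v r₀)) ≤ 8 := by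
        have := le_of_lt hAlt
        simp only [Efun, hSf_def] at this
        linarith
      have hq : 0 < r₀ ^ 2 * (v' r₀) ^ 2 * deriv (deriv g) (v r₀) :=
        mul_pos (mul_pos (pow_pos hr₀pos 2) (pow_two_pos_of_ne_zero (ne_of_lt hp₀))) hg2p
      have hs''pos : 0 < -(8 * v' r₀ * deriv g (v r₀)) - r₀ * Real.exp (g (v r₀)) * deriv g (v r₀)
          + r₀ * (v' r₀) ^ 2 * deriv (deriv g) (v r₀) := by
        have h1 : 0 < r₀ * (-(8 * v' r₀ * deriv g (v r₀))
            - r₀ * Real.exp (g (v r₀)) * deriv g (v r₀)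
            + r₀ * (v' r₀) ^ 2 * deriv (deriv g) (v r₀)) := by
          nlinarith [hq, hS2', hAle]
        rcases mul_pos_iff.mp h1 with ⟨h2, h3⟩ | ⟨h2, h3⟩
        · exact h3
        · linarith
      have hev := left_lt_of_deriv_pos hSd2 hs''pos
      obtain ⟨y, hy1, hy2, hy3⟩ := (hev.and (hevpos.and self_mem_nhdsWithin)).exists
      have := (hgoodlt y hy2 hy3).2
      rw [← hS2] at hy1
      linarith [hy1]
    · -- interior point: contradiction with minimality of `r₀`
      have hev : ∀ᶠ r in 𝓝 r₀, Efun g v r + 4 * Sf r < 8 ∧ -2 < Sf r :=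
        (hAc.tendsto.eventually_lt_const hAlt).and (hSc.tendsto.eventually_const_lt hSgt)
      obtain ⟨δ, hδ, hballδ⟩ := Metric.eventually_nhds_iff.mp hev
      have hle : r₀ + δ / 2 ≤ r₀ := by
        apply le_csInf hBne
        intro b hb
        by_contra hcon
        push_neg at hcon
        have hb0 : r₀ ≤ b := csInf_le hBdd hb
        have hdist : dist b r₀ < δ := by
          rw [Real.dist_eq, abs_lt]
          constructor <;> linarith
        have hgb := hballδ hdist
        rcases hb.2 with h | h <;> linarith [hgb.1, hgb.2]
      linarith

/-- For `N = 10`, `g` satisfying condition (g) and `f = e^g`, the first zero of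
the regular radial solution of `v'' + (9/r) v' + f(v) = 0` is strictly
increasing in the initial value `v(0)` (Type II bifurcation). -/
theorem first_zero_strictly_increasing_exp_g
    (g : ℝ → ℝ) (hg : ConditionG g) (f : ℝ → ℝ)
    (hf : ∀ u : ℝ, 0 ≤ u → f u = Real.exp (g u))
    (v₁ v₂ : ℝ → ℝ) (R₁ R₂ : ℝ)
    (h₁ : IsRegularSolutionWithFirstZero 10 f v₁ R₁)
    (h₂ : IsRegularSolutionWithFirstZero 10 f v₂ R₂)
    (h0 : v₁ 0 < v₂ 0) :
    R₁ < R₂ := by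
  by_contra hcon
  push_neg at hcon
  obtain ⟨hR₁, hpos₁, hvR₁, v₁', v₁'', hv₁, hv₁', hc₁, hv₁'0, hode₁⟩ := h₁
  obtain ⟨hR₂, hpos₂, hvR₂, v₂', v₂'', hv₂, hv₂', hc₂, hv₂'0, hode₂⟩ := h₂
  have hR21 : R₂ ≤ R₁ := hcon
  have hode₁' : ∀ r ∈ Set.Ioo (0:ℝ) R₁, v₁'' r + ((10:ℝ) - 1) / r * v₁' r + f (v₁ r) = 0 := by
    intro r hr; have := hode₁ r hr; push_cast at this ⊢; convert this using 2
  have hode₂' : ∀ r ∈ Set.Ioo (0:ℝ) R₂, v₂'' r + ((10:ℝ) - 1) / r * v₂' r + f (v₂ r) = 0 := by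
    intro r hr; have := hode₂ r hr; push_cast at this ⊢; convert this using 2
  obtain ⟨hE₂bound, hE₂0⟩ := key_estimate hg hf hR₂ hpos₂ hvR₂ hv₂ hv₂' hv₂'0 hode₂'
  set w : ℝ → ℝ := fun r => v₂ r - v₁ r with hw_def
  set w' : ℝ → ℝ := fun r => v₂' r - v₁' r with hw'_def
  have hsub : Set.Icc (0:ℝ) R₂ ⊆ Set.Icc (0:ℝ) R₁ := Set.Icc_subset_Icc le_rfl hR21
  have hw : ∀ r ∈ Set.Icc (0:ℝ) R₂, HasDerivWithinAt w (w' r) (Set.Icc 0 R₂) r :=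
    fun r hr => (hv₂ r hr).sub ((hv₁ r (hsub hr)).mono hsub)
  have hw' : ∀ r ∈ Set.Icc (0:ℝ) R₂,
      HasDerivWithinAt w' (v₂'' r - v₁'' r) (Set.Icc 0 R₂) r :=
    fun r hr => (hv₂' r hr).sub ((hv₁' r (hsub hr)).mono hsub)
  have hwc : ContinuousOn w (Set.Icc 0 R₂) := fun r hr => (hw r hr).continuousWithinAt
  have hw'c : ContinuousOn w' (Set.Icc 0 R₂) := fun r hr => (hw' r hr).continuousWithinAt
  have hw0 : 0 < w 0 := sub_pos.mpr h0
  have hwR : w R₂ ≤ 0 := by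
    rcases eq_or_lt_of_le hR21 with he | hlt
    · have : v₁ R₂ = 0 := by rw [he, hvR₁]
      simp [hw_def, hvR₂, this]
    · have := hpos₁ R₂ (le_of_lt hR₂) hlt
      simp only [hw_def, hvR₂]
      linarith
  -- first zero of w
  set Z : Set ℝ := {r | r ∈ Set.Icc (0:ℝ) R₂ ∧ w r = 0} with hZ_def
  have hZne : Z.Nonempty := by
    rcases eq_or_lt_of_le hwR with he | hlt
    · exact ⟨R₂, ⟨le_of_lt hR₂, le_rfl⟩, he⟩
    · obtain ⟨z, hz, hwz⟩ := intermediate_value_Icc' (le_of_lt hR₂) hwc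
        ⟨le_of_lt hlt, le_of_lt hw0⟩
      exact ⟨z, hz, hwz⟩
  have hZclosed : IsClosed Z := by
    have hZeq : Z = Set.Icc (0:ℝ) R₂ ∩ w ⁻¹' {0} := by
      ext x; simp [hZ_def]
    rw [hZeq]
    exact hwc.preimage_isClosed_of_isClosed isClosed_Icc isClosed_singleton
  have hZbdd : BddBelow Z := ⟨0, fun z hz => hz.1.1⟩
  set ρ := sInf Z with hρ_def
  have hρZ : ρ ∈ Z := hZclosed.csInf_mem hZne hZbdd
  have hwρ : w ρ = 0 := hρZ.2
  have hρpos : 0 < ρ := by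
    rcases eq_or_lt_of_le hρZ.1.1 with he | h
    · exfalso; rw [← he] at hwρ; linarith
    · exact h
  have hρR₂ : ρ ≤ R₂ := hρZ.1.2
  have hwpos : ∀ r, 0 ≤ r → r < ρ → 0 < w r := by
    intro r h0r hrρ
    by_contra hle
    push_neg at hle
    have hrIcc : r ∈ Set.Icc (0:ℝ) R₂ := ⟨h0r, le_trans (le_of_lt hrρ) hρR₂⟩
    rcases eq_or_lt_of_le hle with he | hlt
    · exact absurd (csInf_le hZbdd ⟨hrIcc, he⟩) (not_le.mpr hrρ)
    · obtain ⟨z, hz, hwz⟩ := intermediate_value_Icc' h0r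
        (hwc.mono (Set.Icc_subset_Icc le_rfl hrIcc.2)) ⟨le_of_lt hlt, le_of_lt hw0⟩
      have hzZ : z ∈ Z := ⟨⟨hz.1, le_trans hz.2 hrIcc.2⟩, hwz⟩
      exact absurd (csInf_le hZbdd hzZ) (not_le.mpr (lt_of_le_of_lt hz.2 hrρ))
  -- the Sturm functional
  set Q : ℝ → ℝ := fun r => r ^ 5 * w' r + 4 * (r ^ 4 * w r) with hQ_def
  have hIccρ : Set.Icc (0:ℝ) ρ ⊆ Set.Icc (0:ℝ) R₂ := Set.Icc_subset_Icc le_rfl hρR₂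
  have hQc : ContinuousOn Q (Set.Icc 0 ρ) :=
    (((continuous_pow 5).continuousOn.mul (hw'c.mono hIccρ)).add
      (((continuous_pow 4).continuousOn.mul (hwc.mono hIccρ)).const_smul (4:ℝ))).congr
      (fun x hx => by simp [hQ_def, smul_eq_mul])
  -- mean value bound for f
  have hΔf : ∀ r, 0 < r → r < ρ →
      f (v₂ r) - f (v₁ r) ≤ (deriv g (v₂ r) * Real.exp (g (v₂ r))) * w r := by
    intro r hr1 hr2
    have hv₁p : 0 < v₁ r :=
      hpos₁ r (le_of_lt hr1) (lt_of_lt_of_le hr2 (le_trans hρR₂ hR21))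
    have hwr : 0 < w r := hwpos r (le_of_lt hr1) hr2
    have hlt : v₁ r < v₂ r := by
      have : 0 < v₂ r - v₁ r := hwr
      linarith
    have hfc : ContinuousOn f (Set.Icc (v₁ r) (v₂ r)) := by
      have hsub2 : Set.Icc (v₁ r) (v₂ r) ⊆ Set.Ici (0:ℝ) :=
        fun x hx => le_trans (le_of_lt hv₁p) hx.1
      have hcg : ContinuousOn (fun x => Real.exp (g x)) (Set.Icc (v₁ r) (v₂ r)) :=
        Real.continuous_exp.comp_continuousOn ((hg.1.continuousOn).mono hsub2)
      exact hcg.congr fun x hx => hf x (hsub2 hx)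
    have hfd : ∀ u ∈ Set.Ioo (v₁ r) (v₂ r),
        HasDerivAt f (deriv g u * Real.exp (g u)) u :=
      fun u hu => hasDerivAt_f hg hf (lt_trans hv₁p hu.1)
    obtain ⟨ξ, hξ, hslope⟩ := exists_hasDerivAt_eq_slope f _ hlt hfc hfd
    have hξpos : 0 < ξ := lt_trans hv₁p hξ.1
    rw [eq_div_iff (ne_of_gt (sub_pos.mpr hlt))] at hslope
    have hle : deriv g ξ * Real.exp (g ξ)
        ≤ deriv g (v₂ r) * Real.exp (g (v₂ r)) :=
      le_of_lt ((strictMonoOn_F1 hg) (Set.mem_Ioi.mpr hξpos)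
        (Set.mem_Ioi.mpr (lt_trans hv₁p hlt)) hξ.2)
    have hww : w r = v₂ r - v₁ r := rfl
    calc f (v₂ r) - f (v₁ r) = deriv g ξ * Real.exp (g ξ) * w r := by
          rw [hww]; linarith [hslope]
      _ ≤ deriv g (v₂ r) * Real.exp (g (v₂ r)) * w r :=
          mul_le_mul_of_nonneg_right hle (le_of_lt hwr)
  -- derivative of Q
  have hQd : ∀ r, 0 < r → r < ρ → HasDerivAt Q
      (r ^ 3 * (16 * w r - r ^ 2 * (f (v₂ r) - f (v₁ r)))) r := by
    intro r hr1 hr2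
    have hrR₂ : r ∈ Set.Ioo (0:ℝ) R₂ := ⟨hr1, lt_of_lt_of_le hr2 hρR₂⟩
    have hrR₁ : r ∈ Set.Ioo (0:ℝ) R₁ := ⟨hr1, lt_of_lt_of_le hrR₂.2 hR21⟩
    have hwd : HasDerivAt w (w' r) r :=
      (hw r (Set.Ioo_subset_Icc_self hrR₂)).hasDerivAt (Icc_mem_nhds hrR₂.1 hrR₂.2)
    have hw'd : HasDerivAt w' (v₂'' r - v₁'' r) r :=
      (hw' r (Set.Ioo_subset_Icc_self hrR₂)).hasDerivAt (Icc_mem_nhds hrR₂.1 hrR₂.2)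
    have h := ((hasDerivAt_pow 5 r).mul hw'd).add
      (((hasDerivAt_pow 4 r).mul hwd).const_mul 4)
    refine h.congr_deriv ?_
    have h₂' := hode₂' r hrR₂
    have h₁' := hode₁' r hrR₁
    have e₂ : v₂'' r = -(9 / r * v₂' r) - f (v₂ r) := by norm_num at h₂'; linarith
    have e₁ : v₁'' r = -(9 / r * v₁' r) - f (v₁ r) := by norm_num at h₁'; linarith
    rw [e₁, e₂]
    have hww' : w' r = v₂' r - v₁' r := rfl
    have hww : w r = v₂ r - v₁ r := rfl
    rw [hww', hww]
    field_simp
    ring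
  -- Q is monotone on [0, ρ]
  have hQmono : MonotoneOn Q (Set.Icc 0 ρ) := by
    apply monotoneOn_of_deriv_nonneg (convex_Icc 0 ρ) hQc
    · intro r hr
      rw [interior_Icc] at hr
      exact (hQd r hr.1 hr.2).differentiableAt.differentiableWithinAt
    · intro r hr
      rw [interior_Icc] at hr
      rw [(hQd r hr.1 hr.2).deriv]
      have hwr := hwpos r (le_of_lt hr.1) hr.2
      have hb := hΔf r hr.1 hr.2
      have hE := hE₂bound r ⟨hr.1, lt_of_lt_of_le hr.2 hρR₂⟩
      simp only [Efun] at hE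
      have h1 : r ^ 2 * (f (v₂ r) - f (v₁ r))
          ≤ r ^ 2 * (deriv g (v₂ r) * Real.exp (g (v₂ r))) * w r := by
        nlinarith [sq_nonneg r, hb]
      have h2 : r ^ 2 * (deriv g (v₂ r) * Real.exp (g (v₂ r))) * w r ≤ 16 * w r :=
        mul_le_mul_of_nonneg_right hE (le_of_lt hwr)
      have h3 : 0 ≤ 16 * w r - r ^ 2 * (f (v₂ r) - f (v₁ r)) := by linarith
      exact mul_nonneg (pow_nonneg (le_of_lt hr.1) 3) h3
  -- strict monotonicity near the origin
  have hEev : ∀ᶠ r in 𝓝[Set.Ioo 0 R₂] 0, Efun g v₂ r < 16 :=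
    hE₂0.eventually_lt_const (by norm_num)
  obtain ⟨U, hUopen, hU0, hUsub⟩ := mem_nhdsWithin.mp hEev
  obtain ⟨ε, hε, hball⟩ := Metric.isOpen_iff.mp hUopen 0 hU0
  set rb := min (ε / 2) (ρ / 2) with hrb_def
  have hrbpos : 0 < rb := lt_min (by linarith) (by linarith)
  have hrbρ : rb < ρ := lt_of_le_of_lt (min_le_right _ _) (by linarith)
  have hEsmall : ∀ r, 0 < r → r ≤ rb → Efun g v₂ r < 16 := by
    intro r h1 h2
    have hrρ : r < ρ := lt_of_le_of_lt h2 hrbρ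
    have hrR₂ : r ∈ Set.Ioo (0:ℝ) R₂ := ⟨h1, lt_of_lt_of_le hrρ hρR₂⟩
    have hrU : r ∈ U := by
      apply hball
      rw [Real.ball_eq_Ioo]
      constructor
      · simp; linarith [lt_of_le_of_lt h2 (lt_of_le_of_lt (min_le_left _ _) (by linarith : ε/2 < ε))]
      · simp
        have : r ≤ ε / 2 := le_trans h2 (min_le_left _ _)
        linarith
    exact hUsub ⟨hrU, hrR₂⟩
  have hQstrict : StrictMonoOn Q (Set.Icc 0 rb) := by
    apply strictMonoOn_of_deriv_pos (convex_Icc 0 rb)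
      (hQc.mono (Set.Icc_subset_Icc le_rfl (le_of_lt hrbρ)))
    intro r hr
    rw [interior_Icc] at hr
    have hrρ : r < ρ := lt_trans hr.2 hrbρ
    rw [(hQd r hr.1 hrρ).deriv]
    have hwr := hwpos r (le_of_lt hr.1) hrρ
    have hb := hΔf r hr.1 hrρ
    have hE := hEsmall r hr.1 (le_of_lt hr.2)
    simp only [Efun] at hE
    have h1 : r ^ 2 * (f (v₂ r) - f (v₁ r))
        ≤ r ^ 2 * (deriv g (v₂ r) * Real.exp (g (v₂ r))) * w r := by
      nlinarith [sq_nonneg r, hb]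
    have h2 : r ^ 2 * (deriv g (v₂ r) * Real.exp (g (v₂ r))) * w r < 16 * w r := by
      apply mul_lt_mul_of_pos_right hE hwr
    have h3 : 0 < 16 * w r - r ^ 2 * (f (v₂ r) - f (v₁ r)) := by linarith
    exact mul_pos (pow_pos hr.1 3) h3
  have hQ0 : Q 0 = 0 := by simp [hQ_def]
  have hQrb : 0 < Q rb := by
    have := hQstrict (Set.left_mem_Icc.mpr (le_of_lt hrbpos))
      (Set.right_mem_Icc.mpr (le_of_lt hrbpos)) hrbpos
    rwa [hQ0] at this
  have hQρ : Q rb ≤ Q ρ :=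
    hQmono ⟨le_of_lt hrbpos, le_of_lt hrbρ⟩ ⟨le_of_lt hρpos, le_rfl⟩ (le_of_lt hrbρ)
  -- but Q(ρ) ≤ 0 since w ≥ 0 on [0,ρ) and w(ρ) = 0
  have hw'ρ : w' ρ ≤ 0 := by
    have hd : HasDerivWithinAt w (w' ρ) (Set.Icc 0 R₂) ρ := hw ρ ⟨le_of_lt hρpos, hρR₂⟩
    have hd2 : HasDerivWithinAt w (w' ρ) (Set.Ico 0 ρ) ρ :=
      hd.mono fun x hx => ⟨hx.1, le_trans (le_of_lt hx.2) hρR₂⟩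
    have hslope := hasDerivWithinAt_iff_tendsto_slope.mp hd2
    have hnotmem : ρ ∉ Set.Ico (0:ℝ) ρ := fun h => lt_irrefl ρ h.2
    rw [Set.diff_singleton_eq_self hnotmem] at hslope
    have hne : (𝓝[Set.Ico (0:ℝ) ρ] ρ).NeBot := by
      rw [← mem_closure_iff_nhdsWithin_neBot, closure_Ico (ne_of_lt hρpos)]
      exact ⟨le_of_lt hρpos, le_rfl⟩
    refine le_of_tendsto hslope ?_
    filter_upwards [self_mem_nhdsWithin] with r hr
    have hwr := hwpos r hr.1 hr.2
    rw [slope_def_field]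
    apply div_nonpos_of_nonneg_of_nonpos
    · rw [hwρ]; linarith
    · linarith [hr.2]
  have hQρval : Q ρ = ρ ^ 5 * w' ρ := by simp [hQ_def, hwρ]
  nlinarith [pow_pos hρpos 5, hw'ρ, hQrb, hQρ, hQρval]
end

section
/- Let N ≥ 3 be an integer and let f ∈ C²([0,∞)) with f > 0, f' > 0, f'' > 0 on [0,∞). Let R > 0 and let v̂ ∈ C²((0,R]) satisfy: v̂(r) → ∞ and |v̂'(r)| → ∞ as r → 0⁺; v̂(r) > 0 for 0 < r < R; v̂(R) = 0; and v̂'' + ((N−1)/r)·v̂' + f(v̂) ≥ 0 on (0,R]. Let Q ∈ C((0,R]) with Q(r) > 0, and let Z ∈ C²((0,R]) be positive and satisfy Z'' + ((N−1)/r)·Z' + Q·Z = 0 on (0,R]. Assume f'(v̂(r)) ≤ Q(r) for 0 < r ≤ R, and that r^{N−1}·v̂(r)·Z'(r) → 0 and r^{N−1}·v̂'(r)·Z(r) → 0 as r → 0⁺. Then: (i) every regular solution (v, R₀) with first zero of v'' + ((N−1)/r)·v' + f(v) = 0 satisfies R₀ < R and v(r) < v̂(r) for 0 < r ≤ R₀;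 and (ii) if (v₁, R₁) and (v₂, R₂) are two such regular solutions with v₁(0) < v₂(0), then v₁(r) < v₂(r) for 0 ≤ r ≤ R₁, and hence R₁ < R₂. -/
open Set Filter Topology

lemma deriv_nonpos_at_first_zero {w : ℝ → ℝ} {d r₁ : ℝ} (hr₁ : 0 < r₁)
    (hd : HasDerivWithinAt w d (Set.Ioc 0 r₁) r₁)
    (h0 : w r₁ = 0) (hpos : ∀ r ∈ Set.Ioo 0 r₁, 0 < w r) : d ≤ 0 := by
  have hslope : Tendsto (slope w r₁) (𝓝[Set.Ioc 0 r₁ \ {r₁}] r₁) (𝓝 d) :=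
    hasDerivWithinAt_iff_tendsto_slope.mp hd
  have hsub : Set.Ioo 0 r₁ ⊆ Set.Ioc 0 r₁ \ {r₁} := by
    intro x hx; exact ⟨⟨hx.1, le_of_lt hx.2⟩, ne_of_lt hx.2⟩
  have hslope' : Tendsto (slope w r₁) (𝓝[Set.Ioo 0 r₁] r₁) (𝓝 d) :=
    hslope.mono_left (nhdsWithin_mono _ hsub)
  have hne : (𝓝[Set.Ioo 0 r₁] r₁).NeBot := by
    rw [nhdsWithin_Ioo_eq_nhdsLT hr₁]; infer_instance
  refine le_of_tendsto hslope' ?_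
  filter_upwards [self_mem_nhdsWithin] with x hx
  rw [slope_def_field, h0, sub_zero]
  exact div_nonpos_of_nonneg_of_nonpos (hpos x hx).le (by linarith [hx.2])

lemma fprime_strictMono {f' f'' : ℝ → ℝ}
    (hf''def : ∀ u : ℝ, 0 ≤ u → HasDerivWithinAt f' (f'' u) (Set.Ici 0) u)
    (hf''pos : ∀ u : ℝ, 0 ≤ u → 0 < f'' u) :
    StrictMonoOn f' (Set.Ici 0) := by
  apply strictMonoOn_of_deriv_pos (convex_Ici 0)
  · exact fun u hu => (hf''def u hu).continuousWithinAt
  · intro x hx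
    rw [interior_Ici] at hx
    have h : HasDerivAt f' (f'' x) x :=
      (hf''def x hx.le).hasDerivAt (Ici_mem_nhds hx)
    rw [h.deriv]
    exact hf''pos x hx.le

lemma f_mvt_strict {f f' f'' : ℝ → ℝ}
    (hf'def : ∀ u : ℝ, 0 ≤ u → HasDerivWithinAt f (f' u) (Set.Ici 0) u)
    (hf''def : ∀ u : ℝ, 0 ≤ u → HasDerivWithinAt f' (f'' u) (Set.Ici 0) u)
    (hf''pos : ∀ u : ℝ, 0 ≤ u → 0 < f'' u)
    {p q : ℝ} (hp : 0 ≤ p) (hpq : p < q) :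
    f q - f p < f' q * (q - p) := by
  have hmono := fprime_strictMono hf''def hf''pos
  have hcont : ContinuousOn f (Set.Icc p q) := fun u hu =>
    ((hf'def u (hp.trans hu.1)).continuousWithinAt).mono (fun x hx => hp.trans hx.1)
  have hderiv : ∀ x ∈ Set.Ioo p q, HasDerivAt f (f' x) x := fun x hx =>
    (hf'def x (hp.trans hx.1.le)).hasDerivAt (Ici_mem_nhds (lt_of_le_of_lt hp hx.1))
  obtain ⟨c, hc, hceq⟩ := exists_hasDerivAt_eq_slope f f' hpq hcont hderiv
  have hlt : f' c < f' q := hmono (hp.trans hc.1.le) (hp.trans hpq.le) hc.2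
  have heq : f q - f p = f' c * (q - p) := by
    rw [hceq]
    rw [div_mul_cancel₀]
    exact sub_ne_zero.mpr hpq.ne'
  rw [heq]
  exact mul_lt_mul_of_pos_right hlt (by linarith)

lemma core_contradiction (N : ℕ) (hN : 3 ≤ N) (R : ℝ)
    (Q Z Z' Z'' : ℝ → ℝ)
    (hZ' : ∀ r ∈ Set.Ioc (0:ℝ) R, HasDerivWithinAt Z (Z' r) (Set.Ioc 0 R) r)
    (hZ'' : ∀ r ∈ Set.Ioc (0:ℝ) R, HasDerivWithinAt Z' (Z'' r) (Set.Ioc 0 R) r)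
    (hZpos : ∀ r ∈ Set.Ioc (0:ℝ) R, 0 < Z r)
    (hZeq : ∀ r ∈ Set.Ioc (0:ℝ) R, Z'' r + ((N : ℝ) - 1) / r * Z' r + Q r * Z r = 0)
    (r₁ : ℝ) (hr₁ : 0 < r₁) (hr₁R : r₁ ≤ R)
    (w w' w'' : ℝ → ℝ)
    (hw : ∀ r ∈ Set.Ioc (0:ℝ) r₁, HasDerivWithinAt w (w' r) (Set.Ioc 0 r₁) r)
    (hw' : ∀ r ∈ Set.Ioc (0:ℝ) r₁, HasDerivWithinAt w' (w'' r) (Set.Ioc 0 r₁) r)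
    (hwpos : ∀ r ∈ Set.Ioo (0:ℝ) r₁, 0 < w r)
    (hwz : w r₁ = 0)
    (hstrict : ∀ r ∈ Set.Ioo (0:ℝ) r₁, 0 < w'' r + ((N : ℝ) - 1) / r * w' r + Q r * w r)
    (hPlim : Tendsto (fun r : ℝ => r ^ (N - 1) * (Z r * w' r - w r * Z' r))
      (𝓝[>] (0:ℝ)) (𝓝 0)) : False := by
  set P : ℝ → ℝ := fun r => r ^ (N - 1) * (Z r * w' r - w r * Z' r) with hPdef
  have hsubIoc : Set.Ioc (0:ℝ) r₁ ⊆ Set.Ioc 0 R := Set.Ioc_subset_Ioc_right hr₁R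
  have hPderiv : ∀ x ∈ Set.Ioo (0:ℝ) r₁,
      HasDerivAt P (x ^ (N - 1) * Z x *
        (w'' x + ((N : ℝ) - 1) / x * w' x + Q x * w x)) x := by
    intro x hx
    have hx0 : (0:ℝ) < x := hx.1
    have hxr₁ : x < r₁ := hx.2
    have hxR : x < R := lt_of_lt_of_le hxr₁ hr₁R
    have hmem₁ : x ∈ Set.Ioc (0:ℝ) r₁ := ⟨hx0, hxr₁.le⟩
    have hmem₂ : x ∈ Set.Ioc (0:ℝ) R := ⟨hx0, hxR.le⟩
    have hn₁ : Set.Ioc (0:ℝ) r₁ ∈ 𝓝 x := Ioc_mem_nhds hx0 hxr₁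
    have hn₂ : Set.Ioc (0:ℝ) R ∈ 𝓝 x := Ioc_mem_nhds hx0 hxR
    have hwx : HasDerivAt w (w' x) x := (hw x hmem₁).hasDerivAt hn₁
    have hw'x : HasDerivAt w' (w'' x) x := (hw' x hmem₁).hasDerivAt hn₁
    have hZx : HasDerivAt Z (Z' x) x := (hZ' x hmem₂).hasDerivAt hn₂
    have hZ'x : HasDerivAt Z' (Z'' x) x := (hZ'' x hmem₂).hasDerivAt hn₂
    have hpow : HasDerivAt (fun r : ℝ => r ^ (N - 1))
        ((N - 1 : ℕ) * x ^ (N - 1 - 1)) x := hasDerivAt_pow (N - 1) x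
    have hinner : HasDerivAt (fun r => Z r * w' r - w r * Z' r)
        (Z' x * w' x + Z x * w'' x - (w' x * Z' x + w x * Z'' x)) x :=
      (hZx.mul hw'x).sub (hwx.mul hZ'x)
    have hP0 := hpow.mul hinner
    refine hP0.congr_deriv ?_
    have hZ''eq : Z'' x = -(((N : ℝ) - 1) / x * Z' x) - Q x * Z x := by
      have := hZeq x hmem₂; linarith
    have hcast : ((N - 1 : ℕ) : ℝ) = (N : ℝ) - 1 := by
      rw [Nat.cast_sub (by omega)]; norm_num
    have hexp1 : N - 1 - 1 = N - 2 := by omega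
    have hexp2 : N - 1 = (N - 2) + 1 := by omega
    rw [hZ''eq, hcast, hexp1, hexp2, pow_succ]
    field_simp
    ring
  have key : ∀ a b : ℝ, 0 < a → a < b → b ≤ r₁ → P a < P b := by
    intro a b ha hab hbr₁
    have hmono : StrictMonoOn P (Set.Icc a b) := by
      apply strictMonoOn_of_deriv_pos (convex_Icc a b)
      · intro x hx
        rcases eq_or_lt_of_le (hx.2.trans hbr₁) with hxr | hxr
        · have hIcc_sub : Set.Icc a b ⊆ Set.Ioc 0 r₁ := fun y hy =>
            ⟨lt_of_lt_of_le ha hy.1, hy.2.trans hbr₁⟩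
          have hmem₁ : x ∈ Set.Ioc (0:ℝ) r₁ := hIcc_sub hx
          have hmem₂ : x ∈ Set.Ioc (0:ℝ) R := hsubIoc hmem₁
          have c1 : ContinuousWithinAt Z (Set.Icc a b) x :=
            ((hZ' x hmem₂).continuousWithinAt).mono (hIcc_sub.trans hsubIoc)
          have c2 : ContinuousWithinAt Z' (Set.Icc a b) x :=
            ((hZ'' x hmem₂).continuousWithinAt).mono (hIcc_sub.trans hsubIoc)
          have c3 : ContinuousWithinAt w (Set.Icc a b) x :=
            ((hw x hmem₁).continuousWithinAt).mono hIcc_sub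
          have c4 : ContinuousWithinAt w' (Set.Icc a b) x :=
            ((hw' x hmem₁).continuousWithinAt).mono hIcc_sub
          exact ((continuous_pow (N-1)).continuousWithinAt).mul
            ((c1.mul c4).sub (c3.mul c2))
        · exact ((hPderiv x ⟨lt_of_lt_of_le ha hx.1, hxr⟩).continuousAt).continuousWithinAt
      · intro x hx
        rw [interior_Icc] at hx
        have hx' : x ∈ Set.Ioo (0:ℝ) r₁ := ⟨ha.trans hx.1, lt_of_lt_of_le hx.2 hbr₁⟩
        rw [(hPderiv x hx').deriv]
        have h1 : (0:ℝ) < x ^ (N - 1) := pow_pos hx'.1 _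
        have h2 : 0 < Z x := hZpos x (hsubIoc ⟨hx'.1, hx'.2.le⟩)
        exact mul_pos (mul_pos h1 h2) (hstrict x hx')
    exact hmono (Set.left_mem_Icc.mpr hab.le) (Set.right_mem_Icc.mpr hab.le) hab
  have hPnonneg : ∀ a ∈ Set.Ioo (0:ℝ) r₁, 0 ≤ P a := by
    intro a ha
    refine le_of_tendsto hPlim ?_
    filter_upwards [Ioo_mem_nhdsGT ha.1] with s hs
    exact (key s a hs.1 hs.2 ha.2.le).le
  have hw'r₁ : w' r₁ ≤ 0 :=
    deriv_nonpos_at_first_zero hr₁ (hw r₁ ⟨hr₁, le_refl _⟩) hwz hwpos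
  have hPr₁ : P r₁ ≤ 0 := by
    have hZr₁ : 0 < Z r₁ := hZpos r₁ ⟨hr₁, hr₁R⟩
    have : P r₁ = r₁ ^ (N - 1) * (Z r₁ * w' r₁) := by
      simp [hPdef, hwz]
    rw [this]
    exact mul_nonpos_of_nonneg_of_nonpos (pow_pos hr₁ _).le
      (mul_nonpos_of_nonneg_of_nonpos hZr₁.le hw'r₁)
  have h1 : 0 ≤ P (r₁ / 2) := hPnonneg _ ⟨by linarith, by linarith⟩
  have h2 : P (r₁ / 2) < P r₁ := key _ _ (by linarith) (by linarith) le_rfl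
  linarith
/-- Comparison with a singular stable subsolution: every regular solution stays
below `v̂`, its first zero is `< R`, and solutions (and hence first zeros) are
ordered according to their initial values. -/
theorem comparison_with_singular_subsolution
    (N : ℕ) (hN : 3 ≤ N)
    -- `f ∈ C²([0,∞))` with `f > 0`, `f' > 0`, `f'' > 0`
    (f f' f'' : ℝ → ℝ)
    (hf'def : ∀ u : ℝ, 0 ≤ u → HasDerivWithinAt f (f' u) (Set.Ici 0) u)
    (hf''def : ∀ u : ℝ, 0 ≤ u → HasDerivWithinAt f' (f'' u) (Set.Ici 0) u)
    (hf''cont : ContinuousOn f'' (Set.Ici 0))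
    (hfpos : ∀ u : ℝ, 0 ≤ u → 0 < f u)
    (hf'pos : ∀ u : ℝ, 0 ≤ u → 0 < f' u)
    (hf''pos : ∀ u : ℝ, 0 ≤ u → 0 < f'' u)
    (R : ℝ) (hR : 0 < R)
    -- `v̂ ∈ C²((0,R])`
    (vh vh' vh'' : ℝ → ℝ)
    (hvh' : ∀ r ∈ Set.Ioc (0:ℝ) R, HasDerivWithinAt vh (vh' r) (Set.Ioc 0 R) r)
    (hvh'' : ∀ r ∈ Set.Ioc (0:ℝ) R, HasDerivWithinAt vh' (vh'' r) (Set.Ioc 0 R) r)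
    (hvh''cont : ContinuousOn vh'' (Set.Ioc 0 R))
    -- `v̂(r) → ∞` and `|v̂'(r)| → ∞` as `r → 0⁺`
    (hvh_inf : Filter.Tendsto vh (nhdsWithin 0 (Set.Ioi 0)) Filter.atTop)
    (hvh'_inf : Filter.Tendsto (fun r => |vh' r|) (nhdsWithin 0 (Set.Ioi 0)) Filter.atTop)
    -- `v̂ > 0` on `(0,R)` and `v̂(R) = 0`
    (hvh_pos : ∀ r ∈ Set.Ioo (0:ℝ) R, 0 < vh r)
    (hvhR : vh R = 0)
    -- subsolution inequality on `(0,R]`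
    (hsub : ∀ r ∈ Set.Ioc (0:ℝ) R, 0 ≤ vh'' r + ((N : ℝ) - 1) / r * vh' r + f (vh r))
    -- `Q ∈ C((0,R])`, `Q > 0`
    (Q : ℝ → ℝ) (hQcont : ContinuousOn Q (Set.Ioc 0 R))
    (hQpos : ∀ r ∈ Set.Ioc (0:ℝ) R, 0 < Q r)
    -- `Z ∈ C²((0,R])` positive solving `Z'' + ((N-1)/r) Z' + Q Z = 0`
    (Z Z' Z'' : ℝ → ℝ)
    (hZ' : ∀ r ∈ Set.Ioc (0:ℝ) R, HasDerivWithinAt Z (Z' r) (Set.Ioc 0 R) r)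
    (hZ'' : ∀ r ∈ Set.Ioc (0:ℝ) R, HasDerivWithinAt Z' (Z'' r) (Set.Ioc 0 R) r)
    (hZ''cont : ContinuousOn Z'' (Set.Ioc 0 R))
    (hZpos : ∀ r ∈ Set.Ioc (0:ℝ) R, 0 < Z r)
    (hZeq : ∀ r ∈ Set.Ioc (0:ℝ) R, Z'' r + ((N : ℝ) - 1) / r * Z' r + Q r * Z r = 0)
    -- `f'(v̂(r)) ≤ Q(r)` on `(0,R]`
    (hcomp : ∀ r ∈ Set.Ioc (0:ℝ) R, f' (vh r) ≤ Q r)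
    -- boundary conditions at the origin
    (hlim1 : Filter.Tendsto (fun r : ℝ => r ^ (N - 1) * vh r * Z' r)
      (nhdsWithin 0 (Set.Ioi 0)) (nhds 0))
    (hlim2 : Filter.Tendsto (fun r : ℝ => r ^ (N - 1) * vh' r * Z r)
      (nhdsWithin 0 (Set.Ioi 0)) (nhds 0)) :
    (∀ v R₀, IsRegularSolutionWithFirstZero N f v R₀ →
      R₀ < R ∧ ∀ r ∈ Set.Ioc (0:ℝ) R₀, v r < vh r) ∧
    (∀ v₁ v₂ R₁ R₂, IsRegularSolutionWithFirstZero N f v₁ R₁ →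
      IsRegularSolutionWithFirstZero N f v₂ R₂ → v₁ 0 < v₂ 0 →
      (∀ r ∈ Set.Icc (0:ℝ) R₁, v₁ r < v₂ r) ∧ R₁ < R₂) := by
  have hZr : Tendsto (fun r : ℝ => r ^ (N - 1) * Z r) (𝓝[>] (0:ℝ)) (𝓝 0) := by
    have habs : Tendsto (fun r : ℝ => |r ^ (N - 1) * vh' r * Z r|) (𝓝[>] (0:ℝ)) (𝓝 0) := by
      simpa using hlim2.abs
    refine squeeze_zero' ?_ ?_ habs
    · filter_upwards [Ioo_mem_nhdsGT hR] with r hr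
      exact (mul_pos (pow_pos hr.1 _) (hZpos r ⟨hr.1, hr.2.le⟩)).le
    · filter_upwards [Ioo_mem_nhdsGT hR,
        hvh'_inf.eventually (eventually_ge_atTop 1)] with r hr h1
      have hZp := hZpos r ⟨hr.1, hr.2.le⟩
      have ha : (0:ℝ) ≤ r ^ (N - 1) * Z r := (mul_pos (pow_pos hr.1 _) hZp).le
      have heq : |r ^ (N - 1) * vh' r * Z r| = (r ^ (N - 1) * Z r) * |vh' r| := by
        rw [show r ^ (N - 1) * vh' r * Z r = (r ^ (N - 1) * Z r) * vh' r by ring,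
          abs_mul, abs_of_nonneg ha]
      rw [heq]
      exact le_mul_of_one_le_right ha h1
  have hZ'r : Tendsto (fun r : ℝ => r ^ (N - 1) * Z' r) (𝓝[>] (0:ℝ)) (𝓝 0) := by
    rw [tendsto_zero_iff_abs_tendsto_zero]
    have habs : Tendsto (fun r : ℝ => |r ^ (N - 1) * vh r * Z' r|) (𝓝[>] (0:ℝ)) (𝓝 0) := by
      simpa using hlim1.abs
    refine squeeze_zero' (Eventually.of_forall fun r => abs_nonneg _) ?_ habs
    filter_upwards [hvh_inf.eventually (eventually_ge_atTop 1)] with r h1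
    have heq : |r ^ (N - 1) * vh r * Z' r| = |vh r| * |r ^ (N - 1) * Z' r| := by
      rw [show r ^ (N - 1) * vh r * Z' r = vh r * (r ^ (N - 1) * Z' r) by ring, abs_mul]
    rw [heq]
    exact le_mul_of_one_le_left (abs_nonneg _) (le_trans h1 (le_abs_self _))
  have part1 : ∀ v R₀, IsRegularSolutionWithFirstZero N f v R₀ →
      R₀ < R ∧ ∀ r ∈ Set.Ioc (0:ℝ) R₀, v r < vh r := by
    rintro v R₀ ⟨hR₀, hvpos, hvR₀, v', v'', hv', hv'', hv''cont, hv'0, hveq⟩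
    set ρ := min R R₀ with hρdef
    have hρpos : 0 < ρ := lt_min hR hR₀
    have hρR : ρ ≤ R := min_le_left _ _
    have hρR₀ : ρ ≤ R₀ := min_le_right _ _
    have hvcont : ContinuousOn v (Set.Icc 0 R₀) := fun r hr => (hv' r hr).continuousWithinAt
    have claim : ∀ r ∈ Set.Ioc (0:ℝ) ρ, v r < vh r := by
      by_contra hcon
      push_neg at hcon
      obtain ⟨r₀, hr₀mem, hr₀le⟩ := hcon
      obtain ⟨M, hM⟩ := isCompact_Icc.exists_bound_of_continuousOn hvcont
      have hvle : ∀ r ∈ Set.Icc (0:ℝ) R₀, v r ≤ M := fun r hr =>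
        le_trans (le_abs_self _) (by simpa [Real.norm_eq_abs] using hM r hr)
      have hev : ∀ᶠ r in 𝓝[>] (0:ℝ), M + 1 ≤ vh r :=
        hvh_inf.eventually (eventually_ge_atTop (M + 1))
      obtain ⟨δ, hδpos, hδ⟩ := (nhdsGT_basis (0:ℝ)).eventually_iff.mp hev
      have hr₀δ : δ ≤ r₀ := by
        by_contra hlt
        push_neg at hlt
        have h1 := hδ (Set.mem_Ioo.mpr ⟨hr₀mem.1, hlt⟩)
        have h2 := hvle r₀ ⟨hr₀mem.1.le, hr₀mem.2.trans hρR₀⟩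
        linarith
      set T : Set ℝ := Set.Icc δ ρ ∩ (fun r => v r - vh r) ⁻¹' Set.Ici 0 with hTdef
      have hTsub : T ⊆ Set.Icc δ ρ := Set.inter_subset_left
      have hgcont : ContinuousOn (fun r => v r - vh r) (Set.Icc δ ρ) := by
        apply ContinuousOn.sub
        · exact hvcont.mono (fun x hx => ⟨le_trans hδpos.le hx.1, hx.2.trans hρR₀⟩)
        · have hvhcont : ContinuousOn vh (Set.Ioc 0 R) :=
            fun r hr => (hvh' r hr).continuousWithinAt
          exact hvhcont.mono (fun x hx => ⟨lt_of_lt_of_le hδpos hx.1, hx.2.trans hρR⟩)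
      have hTclosed : IsClosed T :=
        hgcont.preimage_isClosed_of_isClosed isClosed_Icc isClosed_Ici
      have hTne : r₀ ∈ T := ⟨⟨hr₀δ, hr₀mem.2⟩, by
        simp only [Set.mem_preimage, Set.mem_Ici]; linarith⟩
      have hTbdd : BddBelow T := ⟨δ, fun x hx => (hTsub hx).1⟩
      set r₁ := sInf T with hr₁def
      have hr₁T : r₁ ∈ T := hTclosed.csInf_mem ⟨r₀, hTne⟩ hTbdd
      have hr₁pos : 0 < r₁ := lt_of_lt_of_le hδpos (hTsub hr₁T).1
      have hr₁ρ : r₁ ≤ ρ := (hTsub hr₁T).2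
      have hr₁R : r₁ ≤ R := hr₁ρ.trans hρR
      have hr₁R₀ : r₁ ≤ R₀ := hr₁ρ.trans hρR₀
      have hsub1 : Set.Ioc (0:ℝ) r₁ ⊆ Set.Ioc 0 R := Set.Ioc_subset_Ioc_right hr₁R
      have hsub2 : Set.Ioc (0:ℝ) r₁ ⊆ Set.Icc 0 R₀ := fun x hx =>
        ⟨hx.1.le, hx.2.trans hr₁R₀⟩
      have hwpos : ∀ r ∈ Set.Ioo (0:ℝ) r₁, 0 < vh r - v r := by
        intro r hr
        rcases lt_or_ge r δ with h | h
        · have h1 := hδ (Set.mem_Ioo.mpr ⟨hr.1, h⟩)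
          have h2 := hvle r ⟨hr.1.le, hr.2.le.trans hr₁R₀⟩
          linarith
        · have hnotT : r ∉ T := fun hrT => absurd (csInf_le hTbdd hrT) (not_le.mpr hr.2)
          have hx : ¬ (0 ≤ v r - vh r) := fun hge =>
            hnotT ⟨⟨h, hr.2.le.trans hr₁ρ⟩, hge⟩
          linarith
      have hwz : vh r₁ - v r₁ = 0 := by
        have hle : vh r₁ ≤ v r₁ := by
          have h := hr₁T.2
          simp only [Set.mem_preimage, Set.mem_Ici] at h
          linarith
        have hc : ContinuousWithinAt (fun r => vh r - v r) (Set.Ioc 0 r₁) r₁ :=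
          (((hvh' r₁ ⟨hr₁pos, hr₁R⟩).continuousWithinAt).mono hsub1).sub
            (((hv' r₁ ⟨hr₁pos.le, hr₁R₀⟩).continuousWithinAt).mono hsub2)
        have hne : (𝓝[Set.Ioo 0 r₁] r₁).NeBot := by
          rw [nhdsWithin_Ioo_eq_nhdsLT hr₁pos]; infer_instance
        have ht : Tendsto (fun r => vh r - v r) (𝓝[Set.Ioo 0 r₁] r₁)
            (𝓝 (vh r₁ - v r₁)) :=
          Filter.Tendsto.mono_left hc (nhdsWithin_mono _ Set.Ioo_subset_Ioc_self)
        have h0 : 0 ≤ vh r₁ - v r₁ := ge_of_tendsto ht (by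
          filter_upwards [self_mem_nhdsWithin] with x hx
          exact (hwpos x hx).le)
        linarith
      apply core_contradiction N hN R Q Z Z' Z'' hZ' hZ'' hZpos hZeq r₁ hr₁pos hr₁R
        (fun r => vh r - v r) (fun r => vh' r - v' r) (fun r => vh'' r - v'' r)
        ?_ ?_ hwpos hwz ?_ ?_
      · intro r hr
        exact ((hvh' r (hsub1 hr)).mono hsub1).sub ((hv' r (hsub2 hr)).mono hsub2)
      · intro r hr
        exact ((hvh'' r (hsub1 hr)).mono hsub1).sub ((hv'' r (hsub2 hr)).mono hsub2)
      · intro r hr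
        have hrR : r ∈ Set.Ioc (0:ℝ) R := hsub1 ⟨hr.1, hr.2.le⟩
        have hrR₀ : r ∈ Set.Ioo (0:ℝ) R₀ := ⟨hr.1, lt_of_lt_of_le hr.2 hr₁R₀⟩
        have h1 := hsub r hrR
        have h2 := hveq r hrR₀
        have hvr : 0 < v r := hvpos r hr.1.le hrR₀.2
        have hw0 := hwpos r hr
        have h5 := f_mvt_strict hf'def hf''def hf''pos hvr.le
          (by linarith : v r < vh r)
        have h6 := hcomp r hrR
        have h7 : f' (vh r) * (vh r - v r) ≤ Q r * (vh r - v r) :=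
          mul_le_mul_of_nonneg_right h6 (by linarith)
        have hexp : ((N:ℝ) - 1) / r * (vh' r - v' r)
            = ((N:ℝ) - 1) / r * vh' r - ((N:ℝ) - 1) / r * v' r := by ring
        linarith [hexp]
      · have h0R₀ : (0:ℝ) ∈ Set.Icc (0:ℝ) R₀ := ⟨le_refl 0, hR₀.le⟩
        have hv'T : Tendsto v' (𝓝[>] (0:ℝ)) (𝓝 (v' 0)) := by
          have h := (hv'' 0 h0R₀).continuousWithinAt
          rw [← nhdsWithin_Ioc_eq_nhdsGT hR₀]
          exact Filter.Tendsto.mono_left h (nhdsWithin_mono _ Set.Ioc_subset_Icc_self)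
        have hvT : Tendsto v (𝓝[>] (0:ℝ)) (𝓝 (v 0)) := by
          have h := (hv' 0 h0R₀).continuousWithinAt
          rw [← nhdsWithin_Ioc_eq_nhdsGT hR₀]
          exact Filter.Tendsto.mono_left h (nhdsWithin_mono _ Set.Ioc_subset_Icc_self)
        have hcomb := ((hlim2.sub (hZr.mul hv'T)).sub hlim1).add (hZ'r.mul hvT)
        have hgoal : Tendsto (fun r : ℝ =>
            r ^ (N - 1) * (Z r * (vh' r - v' r) - (vh r - v r) * Z' r))
            (𝓝[>] (0:ℝ)) (𝓝 (0 - 0 * v' 0 - 0 + 0 * v 0)) :=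
          hcomb.congr (fun r => by ring)
        simpa using hgoal
    have hR₀R : R₀ < R := by
      by_contra hge
      push_neg at hge
      have hρR' : ρ = R := min_eq_left hge
      have h := claim R ⟨hR, le_of_eq hρR'.symm⟩
      have hvRnn : 0 ≤ v R := by
        rcases eq_or_lt_of_le hge with he | hl
        · rw [he]; exact le_of_eq hvR₀.symm
        · exact (hvpos R hR.le hl).le
      rw [hvhR] at h
      linarith
    refine ⟨hR₀R, fun r hr => claim r ⟨hr.1, ?_⟩⟩
    have hmin : ρ = R₀ := min_eq_right hR₀R.le
    rw [hmin]
    exact hr.2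
  refine ⟨part1, ?_⟩
  rintro v₁ v₂ R₁ R₂ hs1 hs2 h12
  obtain ⟨hR₂R, hv₂lt⟩ := part1 v₂ R₂ hs2
  obtain ⟨hR₁, hv₁pos, hv₁R₁, u₁', u₁'', hu₁', hu₁'', hu₁''cont, hu₁'0, hu₁eq⟩ := hs1
  obtain ⟨hR₂, hv₂pos, hv₂R₂, u₂', u₂'', hu₂', hu₂'', hu₂''cont, hu₂'0, hu₂eq⟩ := hs2
  set ρ := min R₁ R₂ with hρdef
  have hρpos : 0 < ρ := lt_min hR₁ hR₂
  have hρ1 : ρ ≤ R₁ := min_le_left _ _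
  have hρ2 : ρ ≤ R₂ := min_le_right _ _
  have hρR : ρ ≤ R := hρ2.trans hR₂R.le
  have hc1 : ContinuousOn v₁ (Set.Icc 0 R₁) := fun r hr => (hu₁' r hr).continuousWithinAt
  have hc2 : ContinuousOn v₂ (Set.Icc 0 R₂) := fun r hr => (hu₂' r hr).continuousWithinAt
  have claim : ∀ r ∈ Set.Icc (0:ℝ) ρ, v₁ r < v₂ r := by
    by_contra hcon
    push_neg at hcon
    obtain ⟨r₀, hr₀mem, hr₀le⟩ := hcon
    set T : Set ℝ := Set.Icc 0 ρ ∩ (fun r => v₁ r - v₂ r) ⁻¹' Set.Ici 0 with hTdef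
    have hTsub : T ⊆ Set.Icc 0 ρ := Set.inter_subset_left
    have hgcont : ContinuousOn (fun r => v₁ r - v₂ r) (Set.Icc 0 ρ) :=
      (hc1.mono (Set.Icc_subset_Icc_right hρ1)).sub
        (hc2.mono (Set.Icc_subset_Icc_right hρ2))
    have hTclosed : IsClosed T :=
      hgcont.preimage_isClosed_of_isClosed isClosed_Icc isClosed_Ici
    have hTne : r₀ ∈ T := ⟨hr₀mem, by
      simp only [Set.mem_preimage, Set.mem_Ici]; linarith⟩
    have hTbdd : BddBelow T := ⟨0, fun x hx => (hTsub hx).1⟩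
    set r₁ := sInf T with hr₁def
    have hr₁T : r₁ ∈ T := hTclosed.csInf_mem ⟨r₀, hTne⟩ hTbdd
    have hr₁ρ : r₁ ≤ ρ := (hTsub hr₁T).2
    have hr₁nonneg : 0 ≤ r₁ := (hTsub hr₁T).1
    have hr₁ne : r₁ ≠ 0 := by
      intro h
      have h2 := hr₁T.2
      simp only [Set.mem_preimage, Set.mem_Ici, h] at h2
      linarith
    have hr₁pos : 0 < r₁ := lt_of_le_of_ne hr₁nonneg (Ne.symm hr₁ne)
    have hr₁R : r₁ ≤ R := hr₁ρ.trans hρR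
    have hsubA : Set.Ioc (0:ℝ) r₁ ⊆ Set.Icc 0 R₁ := fun x hx =>
      ⟨hx.1.le, hx.2.trans (hr₁ρ.trans hρ1)⟩
    have hsubB : Set.Ioc (0:ℝ) r₁ ⊆ Set.Icc 0 R₂ := fun x hx =>
      ⟨hx.1.le, hx.2.trans (hr₁ρ.trans hρ2)⟩
    have hwpos : ∀ r ∈ Set.Ioo (0:ℝ) r₁, 0 < v₂ r - v₁ r := by
      intro r hr
      have hnotT : r ∉ T := fun hrT => absurd (csInf_le hTbdd hrT) (not_le.mpr hr.2)
      have hx : ¬ (0 ≤ v₁ r - v₂ r) := fun hge =>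
        hnotT ⟨⟨hr.1.le, hr.2.le.trans hr₁ρ⟩, hge⟩
      linarith
    have hwz : v₂ r₁ - v₁ r₁ = 0 := by
      have hle : v₂ r₁ ≤ v₁ r₁ := by
        have h := hr₁T.2
        simp only [Set.mem_preimage, Set.mem_Ici] at h
        linarith
      have hc : ContinuousWithinAt (fun r => v₂ r - v₁ r) (Set.Ioc 0 r₁) r₁ :=
        (((hu₂' r₁ (hsubB ⟨hr₁pos, le_refl _⟩)).continuousWithinAt).mono hsubB).sub
          (((hu₁' r₁ (hsubA ⟨hr₁pos, le_refl _⟩)).continuousWithinAt).mono hsubA)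
      have hne : (𝓝[Set.Ioo 0 r₁] r₁).NeBot := by
        rw [nhdsWithin_Ioo_eq_nhdsLT hr₁pos]; infer_instance
      have ht : Tendsto (fun r => v₂ r - v₁ r) (𝓝[Set.Ioo 0 r₁] r₁)
          (𝓝 (v₂ r₁ - v₁ r₁)) :=
        Filter.Tendsto.mono_left hc (nhdsWithin_mono _ Set.Ioo_subset_Ioc_self)
      have h0 : 0 ≤ v₂ r₁ - v₁ r₁ := ge_of_tendsto ht (by
        filter_upwards [self_mem_nhdsWithin] with x hx
        exact (hwpos x hx).le)
      linarith
    have hf'mono := (fprime_strictMono hf''def hf''pos).monotoneOn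
    apply core_contradiction N hN R Q Z Z' Z'' hZ' hZ'' hZpos hZeq r₁ hr₁pos hr₁R
      (fun r => v₂ r - v₁ r) (fun r => u₂' r - u₁' r) (fun r => u₂'' r - u₁'' r)
      ?_ ?_ hwpos hwz ?_ ?_
    · intro r hr
      exact ((hu₂' r (hsubB hr)).mono hsubB).sub ((hu₁' r (hsubA hr)).mono hsubA)
    · intro r hr
      exact ((hu₂'' r (hsubB hr)).mono hsubB).sub ((hu₁'' r (hsubA hr)).mono hsubA)
    · intro r hr
      have hr1 : r ∈ Set.Ioo (0:ℝ) R₁ := ⟨hr.1, lt_of_lt_of_le hr.2 (hr₁ρ.trans hρ1)⟩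
      have hr2 : r ∈ Set.Ioo (0:ℝ) R₂ := ⟨hr.1, lt_of_lt_of_le hr.2 (hr₁ρ.trans hρ2)⟩
      have hrR2 : r ∈ Set.Ioc (0:ℝ) R₂ := ⟨hr.1, hr2.2.le⟩
      have hrR : r ∈ Set.Ioc (0:ℝ) R := ⟨hr.1, (hr2.2.trans hR₂R).le⟩
      have h1 := hu₁eq r hr1
      have h2 := hu₂eq r hr2
      have hv1 : 0 < v₁ r := hv₁pos r hr.1.le hr1.2
      have hv2p : 0 < v₂ r := hv₂pos r hr.1.le hr2.2
      have hw0 := hwpos r hr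
      have hvh2 : v₂ r < vh r := hv₂lt r hrR2
      have h5 := f_mvt_strict hf'def hf''def hf''pos hv1.le
        (by linarith : v₁ r < v₂ r)
      have h6 : f' (v₂ r) ≤ Q r := by
        have hm : f' (v₂ r) ≤ f' (vh r) := hf'mono
          (Set.mem_Ici.mpr hv2p.le)
          (Set.mem_Ici.mpr (by linarith : (0:ℝ) ≤ vh r)) hvh2.le
        exact hm.trans (hcomp r hrR)
      have h7 : f' (v₂ r) * (v₂ r - v₁ r) ≤ Q r * (v₂ r - v₁ r) :=
        mul_le_mul_of_nonneg_right h6 (by linarith)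
      have hexp : ((N:ℝ) - 1) / r * (u₂' r - u₁' r)
          = ((N:ℝ) - 1) / r * u₂' r - ((N:ℝ) - 1) / r * u₁' r := by ring
      linarith [hexp]
    · have h0R₁ : (0:ℝ) ∈ Set.Icc (0:ℝ) R₁ := ⟨le_refl 0, hR₁.le⟩
      have h0R₂ : (0:ℝ) ∈ Set.Icc (0:ℝ) R₂ := ⟨le_refl 0, hR₂.le⟩
      have t1 : Tendsto u₁' (𝓝[>] (0:ℝ)) (𝓝 (u₁' 0)) := by
        have h := (hu₁'' 0 h0R₁).continuousWithinAt
        rw [← nhdsWithin_Ioc_eq_nhdsGT hR₁]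
        exact Filter.Tendsto.mono_left h (nhdsWithin_mono _ Set.Ioc_subset_Icc_self)
      have t2 : Tendsto u₂' (𝓝[>] (0:ℝ)) (𝓝 (u₂' 0)) := by
        have h := (hu₂'' 0 h0R₂).continuousWithinAt
        rw [← nhdsWithin_Ioc_eq_nhdsGT hR₂]
        exact Filter.Tendsto.mono_left h (nhdsWithin_mono _ Set.Ioc_subset_Icc_self)
      have t3 : Tendsto v₁ (𝓝[>] (0:ℝ)) (𝓝 (v₁ 0)) := by
        have h := (hu₁' 0 h0R₁).continuousWithinAt
        rw [← nhdsWithin_Ioc_eq_nhdsGT hR₁]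
        exact Filter.Tendsto.mono_left h (nhdsWithin_mono _ Set.Ioc_subset_Icc_self)
      have t4 : Tendsto v₂ (𝓝[>] (0:ℝ)) (𝓝 (v₂ 0)) := by
        have h := (hu₂' 0 h0R₂).continuousWithinAt
        rw [← nhdsWithin_Ioc_eq_nhdsGT hR₂]
        exact Filter.Tendsto.mono_left h (nhdsWithin_mono _ Set.Ioc_subset_Icc_self)
      have hcomb := (hZr.mul (t2.sub t1)).sub (hZ'r.mul (t4.sub t3))
      have hgoal : Tendsto (fun r : ℝ =>
          r ^ (N - 1) * (Z r * (u₂' r - u₁' r) - (v₂ r - v₁ r) * Z' r))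
          (𝓝[>] (0:ℝ)) (𝓝 (0 * (u₂' 0 - u₁' 0) - 0 * (v₂ 0 - v₁ 0))) :=
        hcomb.congr (fun r => by ring)
      simpa using hgoal
  have hR₁R₂ : R₁ < R₂ := by
    by_contra hge
    push_neg at hge
    have hρ2' : ρ = R₂ := min_eq_right hge
    have h := claim R₂ ⟨hR₂.le, le_of_eq hρ2'.symm⟩
    have hv1nn : 0 ≤ v₁ R₂ := by
      rcases eq_or_lt_of_le hge with he | hl
      · rw [he]; exact le_of_eq hv₁R₁.symm
      · exact (hv₁pos R₂ hR₂.le hl).le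
    rw [hv₂R₂] at h
    linarith
  refine ⟨fun r hr => claim r ⟨hr.1, ?_⟩, hR₁R₂⟩
  have hmin : ρ = R₁ := min_eq_left hR₁R₂.le
  rw [hmin]
  exact hr.2
end

section
/- Let N ≥ 6 be an integer and q < N/2 a real number. Let f ∈ C²([0,∞)) satisfy f > 0, f' > 0, f'' > 0 and F(0) < ∞. Assume there exist M ≥ 0 and real numbers q₀, q₁ with 1/2 < q₀ < 1 < q₁ < (N+2)/4 such that q₀ ≤ f'(u)·F(u) ≤ q₁ for all u ≥ M. Let R > 0 and let v be a smooth positive function on (0,R) with v(R) = 0 such that F(v(r)) = (r²/(2N−4q))·(1 + θ(r)) for 0 < r < R, where θ ∈ C¹((0,R)), θ(r) → 0 and r·θ'(r) → 0 as r → 0⁺. If moreover v'' + ((N−1)/r)·v' + f(v) ≥ 0 on (0,R] and f'(v(r)) ≤ (N−2)²/(4r²) for 0 < r ≤ R, then for any two regular solutions (v₁, R₁) and (v₂, R₂) with first zero of v'' + ((N−1)/r)·v' + f(v) = 0 with v₁(0) < v₂(0), one has R₁ < R₂; that is, the first zero is strictly increasing in the initial value. -/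
open Set MeasureTheory Filter Topology

/-- `F(u) = ∫_u^∞ ds / f(s)`. -/
noncomputable def Fint (f : ℝ → ℝ) (u : ℝ) : ℝ := ∫ s in Set.Ioi u, (f s)⁻¹

namespace FZ

variable {f f' : ℝ → ℝ}





theorem Fint_split (hInt : IntegrableOn (fun s => (f s)⁻¹) (Ioi 0))
    {x y : ℝ} (hx : 0 ≤ x) (hxy : x ≤ y) :
    Fint f x = (∫ s in x..y, (f s)⁻¹) + Fint f y := by
  have hIx : IntegrableOn (fun s => (f s)⁻¹) (Ioi x) := by
    rcases eq_or_lt_of_le hx with h | h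
    · exact h ▸ hInt
    · exact hInt.mono_set (fun t ht => lt_trans h ht)
  have hIoc : IntegrableOn (fun s => (f s)⁻¹) (Ioc x y) := hIx.mono_set Ioc_subset_Ioi_self
  have hIy : IntegrableOn (fun s => (f s)⁻¹) (Ioi y) := hIx.mono_set (Ioi_subset_Ioi hxy)
  have hu : Ioi x = Ioc x y ∪ Ioi y := (Ioc_union_Ioi_eq_Ioi hxy).symm
  rw [Fint, Fint, intervalIntegral.integral_of_le hxy, hu,
    setIntegral_union (Ioc_disjoint_Ioi le_rfl) measurableSet_Ioi hIoc hIy]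

theorem Fint_nonneg (hfpos : ∀ u : ℝ, 0 ≤ u → 0 < f u) {u : ℝ} (hu : 0 ≤ u) :
    0 ≤ Fint f u := by
  refine setIntegral_nonneg measurableSet_Ioi fun s hs => ?_
  exact le_of_lt (inv_pos.mpr (hfpos s (le_of_lt (lt_of_le_of_lt hu hs))))

theorem Fint_pos (hInt : IntegrableOn (fun s => (f s)⁻¹) (Ioi 0))
    (hfpos : ∀ u : ℝ, 0 ≤ u → 0 < f u) {u : ℝ} (hu : 0 ≤ u) :
    0 < Fint f u := by
  have h := Fint_split hInt hu (le_of_lt (lt_add_one u))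
  have hIuo : IntervalIntegrable (fun s => (f s)⁻¹) volume u (u+1) := by
    rw [intervalIntegrable_iff_integrableOn_Ioc_of_le (by linarith)]
    exact hInt.mono_set (fun t ht => lt_of_le_of_lt hu ht.1)
  have hpos : 0 < ∫ s in u..(u+1), (f s)⁻¹ := by
    refine intervalIntegral.intervalIntegral_pos_of_pos_on hIuo ?_ (lt_add_one u)
    exact fun t ht => inv_pos.mpr (hfpos t (le_of_lt (lt_of_le_of_lt hu ht.1)))
  have h2 := Fint_nonneg hfpos (by linarith : (0:ℝ) ≤ u + 1)
  linarith

theorem Fint_antitoneOn (hInt : IntegrableOn (fun s => (f s)⁻¹) (Ioi 0))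
    (hfpos : ∀ u : ℝ, 0 ≤ u → 0 < f u) :
    AntitoneOn (Fint f) (Ici 0) := by
  intro x hx y hy hxy
  rw [Fint_split hInt hx hxy]
  have : 0 ≤ ∫ s in x..y, (f s)⁻¹ := by
    refine intervalIntegral.integral_nonneg hxy fun t ht => ?_
    exact le_of_lt (inv_pos.mpr (hfpos t (le_trans hx ht.1)))
  linarith

theorem Fint_tendsto_atTop (hInt : IntegrableOn (fun s => (f s)⁻¹) (Ioi 0)) :
    Tendsto (Fint f) atTop (nhds 0) := by
  have h1 : Tendsto (fun u : ℝ => ∫ s in (0:ℝ)..u, (f s)⁻¹) atTop (nhds (Fint f 0)) :=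
    MeasureTheory.intervalIntegral_tendsto_integral_Ioi 0 hInt tendsto_id
  have h2 : ∀ᶠ u in (atTop : Filter ℝ), Fint f u = Fint f 0 - ∫ s in (0:ℝ)..u, (f s)⁻¹ := by
    filter_upwards [eventually_ge_atTop (0:ℝ)] with u hu
    rw [Fint_split hInt le_rfl hu]; ring
  rw [tendsto_congr' h2]
  have := (tendsto_const_nhds (x := Fint f 0) (f := (atTop: Filter ℝ))).sub h1
  simpa using this

theorem f_contOn {f' : ℝ → ℝ} (hf'def : ∀ u : ℝ, 0 ≤ u → HasDerivWithinAt f (f' u) (Set.Ici 0) u) :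
    ContinuousOn f (Ici 0) := fun x hx => (hf'def x hx).continuousWithinAt

theorem Fint_hasDerivAt (hInt : IntegrableOn (fun s => (f s)⁻¹) (Ioi 0))
    (hcont : ContinuousOn f (Ici 0)) (hfpos : ∀ u : ℝ, 0 ≤ u → 0 < f u)
    {u : ℝ} (hu : 0 < u) :
    HasDerivAt (Fint f) (-(f u)⁻¹) u := by
  have hinvcont : ContinuousOn (fun s => (f s)⁻¹) (Ioi 0) := by
    refine ContinuousOn.inv₀ (hcont.mono Ioi_subset_Ici_self) ?_
    exact fun s hs => ne_of_gt (hfpos s (le_of_lt hs))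
  have hIub : IntervalIntegrable (fun s => (f s)⁻¹) volume u (u + 1) := by
    rw [intervalIntegrable_iff_integrableOn_Ioc_of_le (by linarith)]
    exact hInt.mono_set (fun t ht => lt_trans hu ht.1)
  have hmeas : StronglyMeasurableAtFilter (fun s => (f s)⁻¹) (nhds u) volume :=
    hinvcont.stronglyMeasurableAtFilter isOpen_Ioi u hu
  have hca : ContinuousAt (fun s => (f s)⁻¹) u :=
    hinvcont.continuousAt (Ioi_mem_nhds hu)
  have hD : HasDerivAt (fun x => ∫ s in x..(u+1), (f s)⁻¹) (-(f u)⁻¹) u :=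
    intervalIntegral.integral_hasDerivAt_left hIub hmeas hca
  have hD2 : HasDerivAt (fun x => (∫ s in x..(u+1), (f s)⁻¹) + Fint f (u+1)) (-(f u)⁻¹) u :=
    hD.add_const _
  refine hD2.congr_of_eventuallyEq ?_
  filter_upwards [Ioo_mem_nhds hu (lt_add_one u)] with x hx
  exact Fint_split hInt (le_of_lt hx.1) (le_of_lt hx.2)
section PB
variable (hInt : IntegrableOn (fun s => (f s)⁻¹) (Ioi 0))
  (hcont : ContinuousOn f (Ici 0)) (hfpos : ∀ u : ℝ, 0 ≤ u → 0 < f u)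
  (hf'def : ∀ u : ℝ, 0 ≤ u → HasDerivWithinAt f (f' u) (Set.Ici 0) u)
  {M q₁ : ℝ} (hq₁ : 1 < q₁)
  (hbound : ∀ u : ℝ, M ≤ u → f' u * Fint f u ≤ q₁)

include hInt hcont hfpos hf'def hq₁ hbound

theorem P_bound :
    ∀ u, max M 1 ≤ u →
      f u * Fint f u ≤ f (max M 1) * Fint f (max M 1) + (q₁ - 1) * (u - max M 1) := by
  set M₁ := max M 1 with hM₁
  have hM₁pos : (0:ℝ) < M₁ := lt_of_lt_of_le zero_lt_one (le_max_right _ _)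
  have hFcont : ContinuousOn (Fint f) (Ici M₁) := fun x hx =>
    ((Fint_hasDerivAt hInt hcont hfpos (lt_of_lt_of_le hM₁pos hx)).continuousAt).continuousWithinAt
  have hder : ∀ x ∈ Ioi M₁,
      HasDerivAt (fun u => f u * Fint f u - (q₁ - 1) * u)
        (f' x * Fint f x - 1 - (q₁ - 1)) x := by
    intro x hx
    have hx0 : (0:ℝ) < x := lt_trans hM₁pos hx
    have h1 : HasDerivAt f (f' x) x :=
      (hf'def x (le_of_lt hx0)).hasDerivAt (Ici_mem_nhds hx0)
    have h2 := Fint_hasDerivAt hInt hcont hfpos hx0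
    have h3 := (h1.mul h2).sub ((hasDerivAt_id x).const_mul (q₁ - 1))
    refine h3.congr_deriv ?_
    have hfx : f x ≠ 0 := ne_of_gt (hfpos x (le_of_lt hx0))
    field_simp
    ring
  have hanti : AntitoneOn (fun u => f u * Fint f u - (q₁ - 1) * u) (Ici M₁) := by
    refine antitoneOn_of_deriv_nonpos (convex_Ici M₁) ?_ ?_ ?_
    · refine ContinuousOn.sub (ContinuousOn.mul ?_ hFcont) (by fun_prop)
      exact hcont.mono (fun x hx => le_trans (le_of_lt hM₁pos) hx)
    · rw [interior_Ici]
      exact fun x hx => ((hder x hx).differentiableAt).differentiableWithinAt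
    · rw [interior_Ici]
      intro x hx
      rw [(hder x hx).deriv]
      have hb := hbound x (le_trans (le_max_left _ _) (le_of_lt hx))
      linarith
  intro u hu
  have := hanti (self_mem_Ici) hu hu
  simp only at this
  linarith

theorem F_decay :
    ∀ u, max M 1 ≤ u →
      Fint f u * (f (max M 1) * Fint f (max M 1) + (q₁ - 1) * (u - max M 1)) ^ ((q₁-1)⁻¹ : ℝ)
        ≤ Fint f (max M 1) * (f (max M 1) * Fint f (max M 1)) ^ ((q₁-1)⁻¹ : ℝ) := by
  set M₁ := max M 1 with hM₁
  have hM₁pos : (0:ℝ) < M₁ := lt_of_lt_of_le zero_lt_one (le_max_right _ _)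
  set a : ℝ := f M₁ * Fint f M₁ with ha
  have hapos : 0 < a :=
    mul_pos (hfpos M₁ (le_of_lt hM₁pos)) (Fint_pos hInt hfpos (le_of_lt hM₁pos))
  set β : ℝ := (q₁ - 1)⁻¹ with hβ
  have hβpos : 0 < β := inv_pos.mpr (by linarith)
  set c : ℝ → ℝ := fun u => a + (q₁ - 1) * (u - M₁) with hc
  have hcpos : ∀ u, M₁ ≤ u → 0 < c u := by
    intro u hu; simp only [hc]; nlinarith
  have hFcont : ContinuousOn (Fint f) (Ici M₁) := fun x hx =>
    ((Fint_hasDerivAt hInt hcont hfpos (lt_of_lt_of_le hM₁pos hx)).continuousAt).continuousWithinAt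
  have hder : ∀ x ∈ Ioi M₁,
      HasDerivAt (fun u => Fint f u * c u ^ β)
        (-(f x)⁻¹ * c x ^ β + Fint f x * ((q₁ - 1) * β * c x ^ (β - 1))) x := by
    intro x hx
    have hx0 : (0:ℝ) < x := lt_trans hM₁pos hx
    have h2 := Fint_hasDerivAt hInt hcont hfpos hx0
    have hcd : HasDerivAt c (q₁ - 1) x := by
      have : HasDerivAt (fun u : ℝ => a + (q₁ - 1) * (u - M₁)) (q₁ - 1) x := by
        simpa using (((hasDerivAt_id x).sub_const M₁).const_mul (q₁ - 1)).const_add a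
      exact this
    have hcr : HasDerivAt (fun u => c u ^ β) ((q₁ - 1) * β * c x ^ (β - 1)) x :=
      hcd.rpow_const (Or.inl (ne_of_gt (hcpos x (le_of_lt hx))))
    exact h2.mul hcr
  have hanti : AntitoneOn (fun u => Fint f u * c u ^ β) (Ici M₁) := by
    refine antitoneOn_of_deriv_nonpos (convex_Ici M₁) ?_ ?_ ?_
    · refine hFcont.mul (ContinuousOn.rpow_const ?_ ?_)
      · fun_prop
      · exact fun x hx => Or.inl (ne_of_gt (hcpos x hx))
    · rw [interior_Ici]
      exact fun x hx => ((hder x hx).differentiableAt).differentiableWithinAt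
    · rw [interior_Ici]
      intro x hx
      rw [(hder x hx).deriv]
      have hx0 : (0:ℝ) < x := lt_trans hM₁pos hx
      have hcx : 0 < c x := hcpos x (le_of_lt hx)
      have hfx : 0 < f x := hfpos x (le_of_lt hx0)
      have hPb := P_bound hInt hcont hfpos hf'def hq₁ hbound x (le_of_lt hx)
      have hsplit : c x ^ β = c x ^ (β - 1) * c x := by
        rw [← Real.rpow_add_one (ne_of_gt hcx) (β - 1)]
        norm_num
      have hq₁β : (q₁ - 1) * β = 1 := mul_inv_cancel₀ (by linarith)
      rw [hsplit, hq₁β]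
      have hrp : (0:ℝ) ≤ c x ^ (β - 1) := Real.rpow_nonneg (le_of_lt hcx) _
      have key : Fint f x ≤ c x / f x := by
        rw [le_div_iff₀ hfx]
        calc Fint f x * f x = f x * Fint f x := by ring
        _ ≤ a + (q₁ - 1) * (x - M₁) := hPb
        _ = c x := rfl
      have h1 : -(f x)⁻¹ * (c x ^ (β - 1) * c x) + Fint f x * (1 * c x ^ (β - 1))
          = c x ^ (β - 1) * (Fint f x - c x / f x) := by
        field_simp
        ring
      rw [h1]
      exact mul_nonpos_of_nonneg_of_nonpos hrp (by linarith)
  intro u hu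
  have := hanti (self_mem_Ici) hu hu
  simpa [hc] using this

end PB

theorem rpow_tendsto_zero {p : ℝ} (hp : 0 < p) :
    Tendsto (fun r : ℝ => r ^ p) (𝓝[>] (0:ℝ)) (𝓝 0) := by
  have h := (Real.continuousAt_rpow_const 0 p (Or.inr (le_of_lt hp))).tendsto
  rw [Real.zero_rpow (ne_of_gt hp)] at h
  exact h.mono_left nhdsWithin_le_nhds

theorem f'_mono {f'' : ℝ → ℝ}
    (hf''def : ∀ u : ℝ, 0 ≤ u → HasDerivWithinAt f' (f'' u) (Set.Ici 0) u)
    (hf''pos : ∀ u : ℝ, 0 ≤ u → 0 < f'' u) :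
    MonotoneOn f' (Ici 0) := by
  refine (strictMonoOn_of_deriv_pos (convex_Ici 0)
    (fun x hx => (hf''def x hx).continuousWithinAt) ?_).monotoneOn
  rw [interior_Ici]
  intro x hx
  rw [((hf''def x (le_of_lt hx)).hasDerivAt (Ici_mem_nhds hx)).deriv]
  exact hf''pos x (le_of_lt hx)

theorem convex_ineq {f'' : ℝ → ℝ}
    (hf'def : ∀ u : ℝ, 0 ≤ u → HasDerivWithinAt f (f' u) (Set.Ici 0) u)
    (hf''def : ∀ u : ℝ, 0 ≤ u → HasDerivWithinAt f' (f'' u) (Set.Ici 0) u)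
    (hf''pos : ∀ u : ℝ, 0 ≤ u → 0 < f'' u)
    {a b : ℝ} (ha : 0 ≤ a) (hab : a ≤ b) : f b - f a ≤ f' b * (b - a) := by
  rcases eq_or_lt_of_le hab with h | h
  · subst h; simp
  have hmono : MonotoneOn (fun t => f' b * t - f t) (Icc a b) := by
    refine monotoneOn_of_deriv_nonneg (convex_Icc a b) ?_ ?_ ?_
    · refine (continuousOn_const.mul continuousOn_id).sub ?_
      exact fun x hx => ((hf'def x (le_trans ha hx.1)).continuousWithinAt).mono
        (fun y hy => le_trans ha hy.1)
    · rw [interior_Icc]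
      intro x hx
      have hx0 : (0:ℝ) < x := lt_of_le_of_lt ha hx.1
      have hd : HasDerivAt (fun t => f' b * t - f t) (f' b - f' x) x := by
        exact (((hasDerivAt_id x).const_mul (f' b)).sub
          ((hf'def x (le_of_lt hx0)).hasDerivAt (Ici_mem_nhds hx0))).congr_deriv (by ring)
      exact hd.differentiableAt.differentiableWithinAt
    · rw [interior_Icc]
      intro x hx
      have hx0 : (0:ℝ) < x := lt_of_le_of_lt ha hx.1
      have hd : HasDerivAt (fun t => f' b * t - f t) (f' b - f' x) x := by
        exact (((hasDerivAt_id x).const_mul (f' b)).sub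
          ((hf'def x (le_of_lt hx0)).hasDerivAt (Ici_mem_nhds hx0))).congr_deriv (by ring)
      rw [hd.deriv]
      have := f'_mono hf''def hf''pos (le_of_lt hx0 : (0:ℝ) ≤ x)
        (le_trans ha hab) (le_of_lt hx.2)
      linarith
  have := hmono (left_mem_Icc.mpr hab) (right_mem_Icc.mpr hab) hab
  simp only at this
  linarith



section Vlims
variable {N : ℕ} {q M q₁ R : ℝ} {v v' θ θ' : ℝ → ℝ}

theorem v_tendsto_atTop
    (hInt : IntegrableOn (fun s => (f s)⁻¹) (Ioi 0))
    (hfpos : ∀ u : ℝ, 0 ≤ u → 0 < f u)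
    (hR : 0 < R)
    (hvpos : ∀ r ∈ Set.Ioo (0:ℝ) R, 0 < v r)
    (hform : ∀ r ∈ Set.Ioo (0:ℝ) R,
      Fint f (v r) = r ^ 2 / (2 * (N : ℝ) - 4 * q) * (1 + θ r))
    (hθ0 : Tendsto θ (𝓝[>] (0:ℝ)) (nhds 0)) :
    Tendsto v (𝓝[>] (0:ℝ)) atTop := by
  have hIoo : Ioo (0:ℝ) R ∈ 𝓝[>] (0:ℝ) := Ioo_mem_nhdsGT_of_mem ⟨le_rfl, hR⟩
  have hFv : Tendsto (fun r => Fint f (v r)) (𝓝[>] (0:ℝ)) (𝓝 0) := by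
    have h1 : Tendsto (fun r : ℝ => r ^ 2 / (2 * (N : ℝ) - 4 * q) * (1 + θ r))
        (𝓝[>] (0:ℝ)) (𝓝 0) := by
      have hsq : Tendsto (fun r : ℝ => r ^ 2 / (2 * (N : ℝ) - 4 * q)) (𝓝[>] (0:ℝ)) (𝓝 0) := by
        have := ((continuous_pow 2).tendsto (0:ℝ)).div_const (2 * (N : ℝ) - 4 * q)
        simpa using this.mono_left nhdsWithin_le_nhds
      have hθ1 : Tendsto (fun r => 1 + θ r) (𝓝[>] (0:ℝ)) (𝓝 1) := by
        simpa using (tendsto_const_nhds (x := (1:ℝ))).add hθ0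
      simpa using hsq.mul hθ1
    refine h1.congr' ?_
    filter_upwards [hIoo] with r hr
    exact (hform r hr).symm
  rw [tendsto_atTop]
  intro b
  have hb0 : (0:ℝ) ≤ max b 0 := le_max_right _ _
  have hFb : 0 < Fint f (max b 0) := Fint_pos hInt hfpos hb0
  filter_upwards [hIoo, hFv.eventually_lt_const hFb] with r hr hlt
  by_contra hcon
  push_neg at hcon
  have hvb : v r ≤ max b 0 := le_trans (le_of_lt hcon) (le_max_left _ _)
  have := Fint_antitoneOn hInt hfpos (le_of_lt (hvpos r hr)) hb0 hvb
  linarith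

theorem v'_formula
    (hInt : IntegrableOn (fun s => (f s)⁻¹) (Ioi 0))
    (hcont : ContinuousOn f (Ici 0))
    (hfpos : ∀ u : ℝ, 0 ≤ u → 0 < f u)
    (hR : 0 < R)
    (hv' : ∀ r ∈ Set.Ioc (0:ℝ) R, HasDerivWithinAt v (v' r) (Set.Ioc 0 R) r)
    (hvpos : ∀ r ∈ Set.Ioo (0:ℝ) R, 0 < v r)
    (hθ' : ∀ r ∈ Set.Ioo (0:ℝ) R, HasDerivAt θ (θ' r) r)
    (hform : ∀ r ∈ Set.Ioo (0:ℝ) R,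
      Fint f (v r) = r ^ 2 / (2 * (N : ℝ) - 4 * q) * (1 + θ r)) :
    ∀ r ∈ Set.Ioo (0:ℝ) R, v' r =
      -(f (v r)) * ((2*r/(2 * (N : ℝ) - 4 * q)) * (1 + θ r)
        + r^2/(2 * (N : ℝ) - 4 * q) * θ' r) := by
  intro r hr
  set A : ℝ := 2 * (N : ℝ) - 4 * q with hA
  have hrpos := hr.1
  have hvD : HasDerivAt v (v' r) r :=
    (hv' r ⟨hr.1, le_of_lt hr.2⟩).hasDerivAt (Ioc_mem_nhds hr.1 hr.2)
  have hvr : 0 < v r := hvpos r hr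
  have hFD : HasDerivAt (Fint f) (-(f (v r))⁻¹) (v r) :=
    Fint_hasDerivAt hInt hcont hfpos hvr
  have hcomp : HasDerivAt (fun x => Fint f (v x)) (-(f (v r))⁻¹ * v' r) r :=
    (hFD.comp r hvD : )
  have hGD : HasDerivAt (fun x : ℝ => x ^ 2 / A * (1 + θ x))
      ((2*r/A) * (1 + θ r) + r^2/A * θ' r) r := by
    have h1 : HasDerivAt (fun x : ℝ => x ^ 2 / A) (2*r/A) r := by
      simpa using (hasDerivAt_pow 2 r).div_const A
    have h2 : HasDerivAt (fun x : ℝ => 1 + θ x) (θ' r) r := (hθ' r hr).const_add 1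
    exact h1.mul h2
  have heq : (fun x => Fint f (v x)) =ᶠ[𝓝 r] (fun x : ℝ => x ^ 2 / A * (1 + θ x)) := by
    filter_upwards [Ioo_mem_nhds hr.1 hr.2] with x hx
    exact hform x hx
  have huniq : -(f (v r))⁻¹ * v' r = (2*r/A) * (1 + θ r) + r^2/A * θ' r :=
    (hcomp.congr_of_eventuallyEq heq.symm).unique hGD
  have hfne : f (v r) ≠ 0 := ne_of_gt (hfpos _ (le_of_lt hvr))
  have h3 : f (v r) * (-(f (v r))⁻¹ * v' r)
      = f (v r) * ((2*r/A) * (1 + θ r) + r^2/A * θ' r) := by rw [huniq]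
  have h4 : f (v r) * (-(f (v r))⁻¹ * v' r) = -(v' r) := by
    field_simp
  rw [h4] at h3
  rw [neg_mul]
  linarith


set_option maxHeartbeats 1000000 in
theorem key_limits
    (hN : 6 ≤ N) (hq : q < (N:ℝ)/2)
    (hInt : IntegrableOn (fun s => (f s)⁻¹) (Ioi 0))
    (hcont : ContinuousOn f (Ici 0))
    (hfpos : ∀ u : ℝ, 0 ≤ u → 0 < f u)
    (hf'def : ∀ u : ℝ, 0 ≤ u → HasDerivWithinAt f (f' u) (Set.Ici 0) u)
    (hq₁ : 1 < q₁) (hq₁S : q₁ < ((N:ℝ)+2)/4)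
    (hbound : ∀ u : ℝ, M ≤ u → f' u * Fint f u ≤ q₁)
    (hR : 0 < R)
    (hv' : ∀ r ∈ Set.Ioc (0:ℝ) R, HasDerivWithinAt v (v' r) (Set.Ioc 0 R) r)
    (hvpos : ∀ r ∈ Set.Ioo (0:ℝ) R, 0 < v r)
    (hθ' : ∀ r ∈ Set.Ioo (0:ℝ) R, HasDerivAt θ (θ' r) r)
    (hform : ∀ r ∈ Set.Ioo (0:ℝ) R,
      Fint f (v r) = r ^ 2 / (2 * (N : ℝ) - 4 * q) * (1 + θ r))
    (hθ0 : Tendsto θ (𝓝[>] (0:ℝ)) (nhds 0))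
    (hθ'0 : Tendsto (fun r => r * θ' r) (𝓝[>] (0:ℝ)) (nhds 0)) :
    Tendsto (fun r => r ^ (((N:ℝ)-2)/2) * v r) (𝓝[>] (0:ℝ)) (𝓝 0) ∧
    Tendsto (fun r => r ^ ((N:ℝ)/2) * v' r) (𝓝[>] (0:ℝ)) (𝓝 0) := by
  have hN6 : (6:ℝ) ≤ (N:ℝ) := by exact_mod_cast hN
  set M₁ : ℝ := max M 1 with hM₁
  have hM₁pos : (0:ℝ) < M₁ := lt_of_lt_of_le zero_lt_one (le_max_right _ _)
  have hApos : (0:ℝ) < 2 * (N : ℝ) - 4 * q := by linarith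
  have hmpos : (0:ℝ) < ((N:ℝ)-2)/2 := by linarith
  set a : ℝ := f M₁ * Fint f M₁ with ha
  have hapos : 0 < a :=
    mul_pos (hfpos M₁ (le_of_lt hM₁pos)) (Fint_pos hInt hfpos (le_of_lt hM₁pos))
  set β : ℝ := (q₁ - 1)⁻¹ with hβ
  have hq₁1 : (0:ℝ) < q₁ - 1 := by linarith
  have hβpos : 0 < β := inv_pos.mpr hq₁1
  set B : ℝ := Fint f M₁ * a ^ (β:ℝ) with hB
  have hBpos : 0 < B :=
    mul_pos (Fint_pos hInt hfpos (le_of_lt hM₁pos)) (Real.rpow_pos_of_pos hapos _)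
  set X : ℝ → ℝ := fun r => a + (q₁ - 1) * (v r - M₁) with hX
  have hvtop : Tendsto v (𝓝[>] (0:ℝ)) atTop :=
    v_tendsto_atTop hInt hfpos hR hvpos hform hθ0
  have hIoo : Ioo (0:ℝ) R ∈ 𝓝[>] (0:ℝ) := Ioo_mem_nhdsGT_of_mem ⟨le_rfl, hR⟩
  have hE2 : ∀ᶠ r in 𝓝[>] (0:ℝ), M₁ ≤ v r := hvtop.eventually_ge_atTop M₁
  have hE3 : ∀ᶠ r in 𝓝[>] (0:ℝ), θ r ∈ Ioo (-(1/2) : ℝ) (1/2) :=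
    hθ0.eventually (Ioo_mem_nhds (by norm_num) (by norm_num))
  have hE4 : ∀ᶠ r in 𝓝[>] (0:ℝ), r * θ' r ∈ Ioo (-1 : ℝ) 1 :=
    hθ'0.eventually (Ioo_mem_nhds (by norm_num) (by norm_num))
  have hXpos : ∀ r, M₁ ≤ v r → 0 < X r := by
    intro r h; simp only [hX]; nlinarith
  have hFlow : ∀ r ∈ Ioo (0:ℝ) R, θ r ∈ Ioo (-(1/2):ℝ) (1/2) →
      r^2/(2*(2 * (N : ℝ) - 4 * q)) ≤ Fint f (v r) := by
    intro r hr hθr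
    rw [hform r hr]
    have h1 : (1:ℝ)/2 ≤ 1 + θ r := by have := hθr.1; linarith
    have h2 : r^2/(2*(2 * (N : ℝ) - 4 * q)) = r^2/(2 * (N : ℝ) - 4 * q) * (1/2) := by
      rw [div_mul_eq_mul_div, div_eq_div_iff (by linarith) (by linarith)]
      ring
    rw [h2]
    exact mul_le_mul_of_nonneg_left h1 (by positivity)
  -- main pointwise bound
  have hckey : ∀ᶠ r in 𝓝[>] (0:ℝ),
      r ^ (((N:ℝ)-2)/2) * X r
        ≤ (4*((N:ℝ)-2*q)*B) ^ (q₁-1:ℝ) * r ^ (((N:ℝ)-2)/2 - 2*(q₁-1) : ℝ) := by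
    filter_upwards [hIoo, hE2, hE3, self_mem_nhdsWithin] with r hr hM hθr hrpos
    have hrpos' : (0:ℝ) < r := hrpos
    have hXr : 0 < X r := hXpos r hM
    have hFd := F_decay hInt hcont hfpos hf'def hq₁ hbound (v r) hM
    have hFd' : Fint f (v r) * (X r) ^ (β:ℝ) ≤ B := by
      simpa only [hX, ← hM₁, ← ha, ← hβ, ← hB] using hFd
    have hFl := hFlow r hr hθr
    have hXβpos : (0:ℝ) < (X r) ^ (β:ℝ) := Real.rpow_pos_of_pos hXr _
    have hDpos : (0:ℝ) < 4*((N:ℝ)-2*q)*B := by nlinarith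
    have h5 : (X r) ^ (β:ℝ) ≤ 4*((N:ℝ)-2*q)*B/r^2 := by
      rw [le_div_iff₀ (by positivity : (0:ℝ) < r^2)]
      have c1 : (X r) ^ (β:ℝ) * r^2
          = (r^2/(2*(2 * (N : ℝ) - 4 * q)) * (X r) ^ (β:ℝ)) * (2*(2 * (N : ℝ) - 4 * q)) := by
        field_simp
      rw [c1]
      calc (r^2/(2*(2 * (N : ℝ) - 4 * q)) * (X r) ^ (β:ℝ)) * (2*(2 * (N : ℝ) - 4 * q))
          ≤ (Fint f (v r) * (X r) ^ (β:ℝ)) * (2*(2 * (N : ℝ) - 4 * q)) := by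
            refine mul_le_mul_of_nonneg_right
              (mul_le_mul_of_nonneg_right hFl (le_of_lt hXβpos)) (by linarith)
      _ ≤ B * (2*(2 * (N : ℝ) - 4 * q)) := by
            refine mul_le_mul_of_nonneg_right hFd' (by linarith)
      _ = 4*((N:ℝ)-2*q)*B := by ring
    have h6 : X r ≤ (4*((N:ℝ)-2*q)*B/r^2) ^ (q₁-1:ℝ) := by
      have e1 : ((X r) ^ (β:ℝ)) ^ (β⁻¹:ℝ) = X r := by
        rw [← Real.rpow_mul (le_of_lt hXr), mul_inv_cancel₀ (ne_of_gt hβpos),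
          Real.rpow_one]
      have e2 : (β⁻¹ : ℝ) = q₁ - 1 := by rw [hβ, inv_inv]
      calc X r = ((X r) ^ (β:ℝ)) ^ (β⁻¹:ℝ) := e1.symm
      _ ≤ (4*((N:ℝ)-2*q)*B/r^2) ^ (β⁻¹:ℝ) :=
          Real.rpow_le_rpow (le_of_lt hXβpos) h5 (le_of_lt (inv_pos.mpr hβpos))
      _ = (4*((N:ℝ)-2*q)*B/r^2) ^ (q₁-1:ℝ) := by rw [e2]
    have hDpos' : (0:ℝ) < 4*((N:ℝ)-2*q)*B := hDpos
    have h7 : (4*((N:ℝ)-2*q)*B/r^2) ^ (q₁-1:ℝ)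
        = (4*((N:ℝ)-2*q)*B) ^ (q₁-1:ℝ) / r ^ (2*(q₁-1):ℝ) := by
      rw [Real.div_rpow (le_of_lt hDpos') (by positivity)]
      congr 1
      rw [← Real.rpow_natCast r 2, ← Real.rpow_mul (le_of_lt hrpos')]
      norm_num
    have h8 : r ^ (((N:ℝ)-2)/2 - 2*(q₁-1) : ℝ) = r ^ (((N:ℝ)-2)/2 : ℝ) / r ^ (2*(q₁-1):ℝ) :=
      Real.rpow_sub hrpos' _ _
    rw [h8]
    rw [h7] at h6
    calc r ^ (((N:ℝ)-2)/2) * X r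
        ≤ r ^ (((N:ℝ)-2)/2) * ((4*((N:ℝ)-2*q)*B) ^ (q₁-1:ℝ) / r ^ (2*(q₁-1):ℝ)) :=
          mul_le_mul_of_nonneg_left h6 (Real.rpow_nonneg (le_of_lt hrpos') _)
    _ = (4*((N:ℝ)-2*q)*B) ^ (q₁-1:ℝ) * (r ^ (((N:ℝ)-2)/2 : ℝ) / r ^ (2*(q₁-1):ℝ)) := by
          ring
  have hϵ : (0:ℝ) < ((N:ℝ)-2)/2 - 2*(q₁-1) := by linarith
  have hlim1 : Tendsto (fun r => r ^ (((N:ℝ)-2)/2) * X r) (𝓝[>] (0:ℝ)) (𝓝 0) := by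
    have hlb : ∀ᶠ r in 𝓝[>] (0:ℝ), 0 ≤ r ^ (((N:ℝ)-2)/2) * X r := by
      filter_upwards [hE2, self_mem_nhdsWithin] with r hM hrpos
      exact mul_nonneg (Real.rpow_nonneg (le_of_lt hrpos) _) (le_of_lt (hXpos r hM))
    have hg : Tendsto (fun r : ℝ => (4*((N:ℝ)-2*q)*B) ^ (q₁-1:ℝ) * r ^ (((N:ℝ)-2)/2 - 2*(q₁-1) : ℝ))
        (𝓝[>] (0:ℝ)) (𝓝 0) := by
      have := (rpow_tendsto_zero hϵ).const_mul ((4*((N:ℝ)-2*q)*B) ^ (q₁-1:ℝ))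
      simpa using this
    exact squeeze_zero' hlb hckey hg
  constructor
  · -- limit of r^m * v r
    have h9 : Tendsto
        (fun r => ((r ^ (((N:ℝ)-2)/2) * X r) - (a - (q₁-1)*M₁) * r ^ (((N:ℝ)-2)/2)) / (q₁-1))
        (𝓝[>] (0:ℝ)) (𝓝 0) := by
      have := (hlim1.sub ((rpow_tendsto_zero hmpos).const_mul (a - (q₁-1)*M₁))).div_const (q₁-1)
      simpa using this
    refine h9.congr (fun r => ?_)
    simp only [hX]
    field_simp
    ring
  · -- limit of r^{N/2} * v' r
    have hv'f := v'_formula hInt hcont hfpos hR hv' hvpos hθ' hform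
    have hbound2 : ∀ᶠ r in 𝓝[>] (0:ℝ),
        ‖r ^ ((N:ℝ)/2) * v' r‖ ≤ 8 * (r ^ (((N:ℝ)-2)/2) * X r) := by
      filter_upwards [hIoo, hE2, hE3, hE4, self_mem_nhdsWithin] with r hr hM hθr hθ'r hrpos
      have hrpos' : (0:ℝ) < r := hrpos
      have hXr : 0 < X r := hXpos r hM
      have hfv : 0 < f (v r) := hfpos _ (le_of_lt (hvpos r hr))
      have hP := P_bound hInt hcont hfpos hf'def hq₁ hbound (v r) hM
      have hP' : f (v r) * Fint f (v r) ≤ X r := by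
        simpa only [hX, ← hM₁, ← ha] using hP
      have hFl := hFlow r hr hθr
      have hfb : f (v r) * r^2 ≤ 2*(2 * (N : ℝ) - 4 * q)*(X r) := by
        have c1 : f (v r) * r^2
            = (f (v r) * (r^2/(2*(2 * (N : ℝ) - 4 * q)))) * (2*(2 * (N : ℝ) - 4 * q)) := by
          field_simp
        rw [c1]
        calc (f (v r) * (r^2/(2*(2 * (N : ℝ) - 4 * q)))) * (2*(2 * (N : ℝ) - 4 * q))
            ≤ (f (v r) * Fint f (v r)) * (2*(2 * (N : ℝ) - 4 * q)) := by
              refine mul_le_mul_of_nonneg_right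
                (mul_le_mul_of_nonneg_left hFl (le_of_lt hfv)) (by linarith)
        _ ≤ X r * (2*(2 * (N : ℝ) - 4 * q)) := by
              refine mul_le_mul_of_nonneg_right hP' (by linarith)
        _ = 2*(2 * (N : ℝ) - 4 * q)*(X r) := by ring
      have hYb : |2*r/(2 * (N : ℝ) - 4 * q)*(1 + θ r) + r^2/(2 * (N : ℝ) - 4 * q)*θ' r|
          ≤ 4*r/(2 * (N : ℝ) - 4 * q) := by
        have hY1 : |2*r/(2 * (N : ℝ) - 4 * q)*(1 + θ r)| ≤ 3*r/(2 * (N : ℝ) - 4 * q) := by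
          rw [abs_mul, abs_of_pos (div_pos (by linarith) hApos : (0:ℝ) < 2*r/(2 * (N : ℝ) - 4 * q))]
          have h1 : |1 + θ r| ≤ 3/2 := by
            rw [abs_le]; constructor
            · linarith [hθr.1]
            · linarith [hθr.2]
          have h2 : (0:ℝ) < 2*r/(2 * (N : ℝ) - 4 * q) := div_pos (by linarith) hApos
          calc 2*r/(2 * (N : ℝ) - 4 * q) * |1 + θ r|
              ≤ 2*r/(2 * (N : ℝ) - 4 * q) * (3/2) := mul_le_mul_of_nonneg_left h1 (le_of_lt h2)
          _ = 3*r/(2 * (N : ℝ) - 4 * q) := by ring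
        have hY2 : |r^2/(2 * (N : ℝ) - 4 * q)*θ' r| ≤ r/(2 * (N : ℝ) - 4 * q) := by
          have e : r^2/(2 * (N : ℝ) - 4 * q)*θ' r
              = (r/(2 * (N : ℝ) - 4 * q)) * (r * θ' r) := by ring
          rw [e, abs_mul, abs_of_pos (div_pos hrpos' hApos : (0:ℝ) < r/(2 * (N : ℝ) - 4 * q))]
          have h1 : |r * θ' r| ≤ 1 := by
            rw [abs_le]; constructor
            · linarith [hθ'r.1]
            · linarith [hθ'r.2]
          have h2 : (0:ℝ) < r/(2 * (N : ℝ) - 4 * q) := div_pos hrpos' hApos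
          calc r/(2 * (N : ℝ) - 4 * q) * |r * θ' r|
              ≤ r/(2 * (N : ℝ) - 4 * q) * 1 := mul_le_mul_of_nonneg_left h1 (le_of_lt h2)
          _ = r/(2 * (N : ℝ) - 4 * q) := by ring
        calc |2*r/(2 * (N : ℝ) - 4 * q)*(1 + θ r) + r^2/(2 * (N : ℝ) - 4 * q)*θ' r|
            ≤ |2*r/(2 * (N : ℝ) - 4 * q)*(1 + θ r)| + |r^2/(2 * (N : ℝ) - 4 * q)*θ' r| :=
            abs_add_le _ _
        _ ≤ 3*r/(2 * (N : ℝ) - 4 * q) + r/(2 * (N : ℝ) - 4 * q) := add_le_add hY1 hY2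
        _ = 4*r/(2 * (N : ℝ) - 4 * q) := by ring
      have hv'b : |v' r| * r ≤ 8 * X r := by
        rw [hv'f r hr]
        rw [abs_mul, abs_neg, abs_of_pos hfv]
        calc f (v r) * |2*r/(2 * (N : ℝ) - 4 * q)*(1 + θ r)
              + r^2/(2 * (N : ℝ) - 4 * q)*θ' r| * r
            ≤ f (v r) * (4*r/(2 * (N : ℝ) - 4 * q)) * r := by
              refine mul_le_mul_of_nonneg_right
                (mul_le_mul_of_nonneg_left hYb (le_of_lt hfv)) (le_of_lt hrpos')
        _ = (f (v r) * r^2) * (4/(2 * (N : ℝ) - 4 * q)) := by ring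
        _ ≤ (2*(2 * (N : ℝ) - 4 * q)*(X r)) * (4/(2 * (N : ℝ) - 4 * q)) := by
            refine mul_le_mul_of_nonneg_right hfb (by positivity)
        _ = 8 * X r := by field_simp; ring
      have hsplit : r ^ ((N:ℝ)/2) = r ^ (((N:ℝ)-2)/2 : ℝ) * r := by
        rw [show (N:ℝ)/2 = ((N:ℝ)-2)/2 + 1 by ring, Real.rpow_add hrpos',
          Real.rpow_one]
      rw [Real.norm_eq_abs, abs_mul, abs_of_nonneg (Real.rpow_nonneg (le_of_lt hrpos') _),
        hsplit]
      calc r ^ (((N:ℝ)-2)/2 : ℝ) * r * |v' r| = r ^ (((N:ℝ)-2)/2 : ℝ) * (|v' r| * r) := by ring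
      _ ≤ r ^ (((N:ℝ)-2)/2 : ℝ) * (8 * X r) :=
          mul_le_mul_of_nonneg_left hv'b (Real.rpow_nonneg (le_of_lt hrpos') _)
      _ = 8 * (r ^ (((N:ℝ)-2)/2 : ℝ) * X r) := by ring
    exact squeeze_zero_norm' hbound2 (by simpa using hlim1.const_mul 8)

end Vlims

theorem noTouch (N : ℕ) (hN : 6 ≤ N) {z z' z'' : ℝ → ℝ} {r₀ : ℝ} (hr₀ : 0 < r₀)
    (hz' : ∀ r ∈ Ioc 0 r₀, HasDerivWithinAt z (z' r) (Ioc 0 r₀) r)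
    (hz'' : ∀ r ∈ Ioc 0 r₀, HasDerivWithinAt z' (z'' r) (Ioc 0 r₀) r)
    (hineq : ∀ r ∈ Ioo 0 r₀,
      0 ≤ z'' r + ((N:ℝ)-1)/r * z' r + ((N:ℝ)-2)^2/(4*r^2) * z r)
    (hzpos : ∀ r ∈ Ioo 0 r₀, 0 < z r)
    (hz0 : z r₀ ≤ 0)
    (hW0 : Tendsto (fun r => r ^ ((N:ℝ)/2) * z' r
        + (((N:ℝ)-2)/2) * r ^ (((N:ℝ)-2)/2) * z r) (𝓝[>] (0:ℝ)) (𝓝 0)) :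
    False := by
  have hN6 : (6:ℝ) ≤ (N:ℝ) := by exact_mod_cast hN
  set m : ℝ := ((N:ℝ)-2)/2 with hm
  have hmpos : 0 < m := by rw [hm]; linarith
  set W : ℝ → ℝ := fun r => r ^ ((N:ℝ)/2) * z' r + m * r ^ m * z r with hWdef
  have hr₀mem : r₀ ∈ Ioc (0:ℝ) r₀ := ⟨hr₀, le_rfl⟩
  -- derivative of W
  have hWder : ∀ r ∈ Ioo 0 r₀, HasDerivAt W
      (r ^ ((N:ℝ)/2) * (z'' r + ((N:ℝ)-1)/r * z' r + ((N:ℝ)-2)^2/(4*r^2) * z r)) r := by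
    intro r hr
    have hrpos : (0:ℝ) < r := hr.1
    have hrne : r ≠ 0 := ne_of_gt hrpos
    have hnhds : Ioc (0:ℝ) r₀ ∈ 𝓝 r := Ioc_mem_nhds hr.1 hr.2
    have hzD : HasDerivAt z (z' r) r := (hz' r ⟨hr.1, le_of_lt hr.2⟩).hasDerivAt hnhds
    have hz'D : HasDerivAt z' (z'' r) r := (hz'' r ⟨hr.1, le_of_lt hr.2⟩).hasDerivAt hnhds
    have hp1 : HasDerivAt (fun x : ℝ => x ^ ((N:ℝ)/2)) ((N:ℝ)/2 * r ^ ((N:ℝ)/2 - 1)) r :=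
      Real.hasDerivAt_rpow_const (Or.inl hrne)
    have hp2 : HasDerivAt (fun x : ℝ => m * x ^ m) (m * (m * r ^ (m - 1))) r :=
      (Real.hasDerivAt_rpow_const (p := m) (Or.inl hrne)).const_mul m
    have hD := (hp1.mul hz'D).add (hp2.mul hzD)
    refine hD.congr_deriv ?_
    have e1 : r ^ ((N:ℝ)/2 - 1) = r ^ ((N:ℝ)/2) / r := by
      rw [Real.rpow_sub hrpos, Real.rpow_one]
    have e3 : r ^ m = r ^ ((N:ℝ)/2) / r := by
      rw [hm]
      rw [show ((N:ℝ)-2)/2 = (N:ℝ)/2 - 1 by ring, Real.rpow_sub hrpos, Real.rpow_one]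
    have e2 : r ^ (m - 1) = r ^ ((N:ℝ)/2) / r ^ 2 := by
      rw [show m - 1 = (N:ℝ)/2 - 2 by rw [hm]; ring, Real.rpow_sub hrpos]
      norm_num [Real.rpow_natCast]
    rw [e1, e2, e3, hm]
    have hr2 : r ^ 2 ≠ 0 := pow_ne_zero 2 hrne
    field_simp
    ring
  -- continuity of W on Ioc
  have hzc : ContinuousOn z (Ioc 0 r₀) := fun x hx => (hz' x hx).continuousWithinAt
  have hz'c : ContinuousOn z' (Ioc 0 r₀) := fun x hx => (hz'' x hx).continuousWithinAt
  have hrpowc : ∀ p : ℝ, ContinuousOn (fun x : ℝ => x ^ (p:ℝ)) (Ioc 0 r₀) := by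
    intro p x hx
    exact (Real.continuousAt_rpow_const x p (Or.inl (ne_of_gt hx.1))).continuousWithinAt
  have hWcont : ContinuousOn W (Ioc 0 r₀) := by
    exact ((hrpowc _).mul hz'c).add (((continuousOn_const.mul (hrpowc m)).mul hzc))
  -- monotone
  have hWmono : MonotoneOn W (Ioc 0 r₀) := by
    refine monotoneOn_of_deriv_nonneg (convex_Ioc 0 r₀) hWcont ?_ ?_
    · rw [interior_Ioc]
      exact fun x hx => ((hWder x hx).differentiableAt).differentiableWithinAt
    · rw [interior_Ioc]
      intro x hx
      rw [(hWder x hx).deriv]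
      exact mul_nonneg (Real.rpow_nonneg (le_of_lt hx.1) _) (hineq x hx)
  -- W nonneg
  have hWnonneg : ∀ x ∈ Ioc (0:ℝ) r₀, 0 ≤ W x := by
    intro x hx
    refine le_of_tendsto hW0 ?_
    have hmem : Ioc (0:ℝ) x ∈ 𝓝[>] (0:ℝ) := Ioc_mem_nhdsGT_of_mem ⟨le_rfl, hx.1⟩
    filter_upwards [hmem] with y hy
    exact hWmono ⟨hy.1, le_trans hy.2 hx.2⟩ hx hy.2
  -- z' r₀ ≤ 0
  have hz'r₀ : z' r₀ ≤ 0 := by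
    have hd : HasDerivWithinAt z (z' r₀) (Ioo 0 r₀) r₀ :=
      (hz' r₀ hr₀mem).mono Ioo_subset_Ioc_self
    rw [hasDerivWithinAt_iff_tendsto_slope] at hd
    have hdiff : Ioo (0:ℝ) r₀ \ {r₀} = Ioo 0 r₀ := by
      rw [diff_singleton_eq_self]; simp
    rw [hdiff] at hd
    have hne : (𝓝[Ioo (0:ℝ) r₀] r₀).NeBot := by
      rw [← mem_closure_iff_nhdsWithin_neBot, closure_Ioo (ne_of_lt hr₀)]
      exact ⟨le_of_lt hr₀, le_rfl⟩
    refine le_of_tendsto hd ?_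
    filter_upwards [self_mem_nhdsWithin] with y hy
    have h1 : 0 < z y - z r₀ := by have := hzpos y hy; linarith
    have h2 : y - r₀ < 0 := by have := hy.2; linarith
    rw [slope_def_field]
    rw [div_eq_mul_inv]
    exact mul_nonpos_of_nonneg_of_nonpos (by linarith) (le_of_lt (inv_neg''.mpr h2)) |>.trans (le_refl 0)
  -- W r₀ ≤ 0, hence W ≡ 0
  have hWr₀ : W r₀ ≤ 0 := by
    have t1 : r₀ ^ ((N:ℝ)/2) * z' r₀ ≤ 0 :=
      mul_nonpos_of_nonneg_of_nonpos (Real.rpow_nonneg (le_of_lt hr₀) _) hz'r₀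
    have t2 : m * r₀ ^ m * z r₀ ≤ 0 :=
      mul_nonpos_of_nonneg_of_nonpos
        (mul_nonneg (le_of_lt hmpos) (Real.rpow_nonneg (le_of_lt hr₀) _)) hz0
    simp only [hWdef]; linarith
  have hWzero : ∀ x ∈ Ioc (0:ℝ) r₀, W x = 0 := by
    intro x hx
    have h1 := hWnonneg x hx
    have h2 := hWmono hx hr₀mem hx.2
    linarith
  -- g = r^m z is constant
  set g : ℝ → ℝ := fun r => r ^ m * z r with hgdef
  have hgder : ∀ r ∈ Ioo 0 r₀, HasDerivAt g (W r / r) r := by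
    intro r hr
    have hrpos : (0:ℝ) < r := hr.1
    have hrne : r ≠ 0 := ne_of_gt hrpos
    have hnhds : Ioc (0:ℝ) r₀ ∈ 𝓝 r := Ioc_mem_nhds hr.1 hr.2
    have hzD : HasDerivAt z (z' r) r := (hz' r ⟨hr.1, le_of_lt hr.2⟩).hasDerivAt hnhds
    have hp2 : HasDerivAt (fun x : ℝ => x ^ m) (m * r ^ (m - 1)) r :=
      Real.hasDerivAt_rpow_const (Or.inl hrne)
    have hD := hp2.mul hzD
    refine hD.congr_deriv ?_
    have e3 : r ^ ((N:ℝ)/2) = r ^ m * r := by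
      rw [hm, show ((N:ℝ)-2)/2 = (N:ℝ)/2 - 1 by ring, Real.rpow_sub hrpos, Real.rpow_one]
      field_simp
    have e4 : r ^ (m - 1) = r ^ m / r := by rw [Real.rpow_sub hrpos, Real.rpow_one]
    simp only [hWdef]
    rw [e3, e4]
    field_simp
    ring
  have hgmono : MonotoneOn g (Ioc 0 r₀) := by
    refine monotoneOn_of_deriv_nonneg (convex_Ioc 0 r₀) ((hrpowc m).mul hzc) ?_ ?_
    · rw [interior_Ioc]
      exact fun x hx => ((hgder x hx).differentiableAt).differentiableWithinAt
    · rw [interior_Ioc]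
      intro x hx
      rw [(hgder x hx).deriv, hWzero x ⟨hx.1, le_of_lt hx.2⟩]
      simp
  -- contradiction at r₀/2
  have hhalf : r₀/2 ∈ Ioo (0:ℝ) r₀ := ⟨by linarith, by linarith⟩
  have hghalf : 0 < g (r₀/2) :=
    mul_pos (Real.rpow_pos_of_pos hhalf.1 m) (hzpos _ hhalf)
  have hgr₀ : g r₀ ≤ 0 :=
    mul_nonpos_of_nonneg_of_nonpos (Real.rpow_nonneg (le_of_lt hr₀) _) hz0
  have := hgmono ⟨hhalf.1, le_of_lt hhalf.2⟩ hr₀mem (le_of_lt hhalf.2)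
  linarith


end FZ

/-- Existence of a stable singular subsolution of the prescribed asymptotic
form implies that the first zero of the regular solution is strictly
increasing in the initial value (Type II bifurcation). -/
theorem first_zero_strictly_increasing_of_stable_subsolution
    (N : ℕ) (hN : 6 ≤ N) (q : ℝ) (hq : q < (N : ℝ) / 2)
    -- `f ∈ C²([0,∞))` with `f > 0`, `f' > 0`, `f'' > 0` and `F(0) < ∞`
    (f f' f'' : ℝ → ℝ)
    (hf'def : ∀ u : ℝ, 0 ≤ u → HasDerivWithinAt f (f' u) (Set.Ici 0) u)
    (hf''def : ∀ u : ℝ, 0 ≤ u → HasDerivWithinAt f' (f'' u) (Set.Ici 0) u)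
    (hf''cont : ContinuousOn f'' (Set.Ici 0))
    (hfpos : ∀ u : ℝ, 0 ≤ u → 0 < f u)
    (hf'pos : ∀ u : ℝ, 0 ≤ u → 0 < f' u)
    (hf''pos : ∀ u : ℝ, 0 ≤ u → 0 < f'' u)
    (hInt : MeasureTheory.IntegrableOn (fun s => (f s)⁻¹) (Set.Ioi 0))
    -- `q₀ ≤ f'(u) F(u) ≤ q₁` for `u ≥ M`
    (M q₀ q₁ : ℝ) (hM : 0 ≤ M)
    (hq₀ : 1 / 2 < q₀) (hq₀1 : q₀ < 1) (hq₁ : 1 < q₁) (hq₁S : q₁ < ((N : ℝ) + 2) / 4)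
    (hbound : ∀ u : ℝ, M ≤ u → q₀ ≤ f' u * Fint f u ∧ f' u * Fint f u ≤ q₁)
    -- the subsolution `v`, positive on `(0,R)` with `v(R) = 0`
    (R : ℝ) (hR : 0 < R)
    (v v' v'' : ℝ → ℝ)
    (hv' : ∀ r ∈ Set.Ioc (0:ℝ) R, HasDerivWithinAt v (v' r) (Set.Ioc 0 R) r)
    (hv'' : ∀ r ∈ Set.Ioc (0:ℝ) R, HasDerivWithinAt v' (v'' r) (Set.Ioc 0 R) r)
    (hv''cont : ContinuousOn v'' (Set.Ioc 0 R))
    (hvpos : ∀ r ∈ Set.Ioo (0:ℝ) R, 0 < v r)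
    (hvR : v R = 0)
    -- `F(v(r)) = (r²/(2N-4q)) (1 + θ(r))` with `θ ∈ C¹((0,R))`,
    -- `θ(r) → 0` and `r θ'(r) → 0` as `r → 0⁺`
    (θ θ' : ℝ → ℝ)
    (hθ' : ∀ r ∈ Set.Ioo (0:ℝ) R, HasDerivAt θ (θ' r) r)
    (hθ'cont : ContinuousOn θ' (Set.Ioo 0 R))
    (hform : ∀ r ∈ Set.Ioo (0:ℝ) R,
      Fint f (v r) = r ^ 2 / (2 * (N : ℝ) - 4 * q) * (1 + θ r))
    (hθ0 : Filter.Tendsto θ (nhdsWithin 0 (Set.Ioi 0)) (nhds 0))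
    (hθ'0 : Filter.Tendsto (fun r => r * θ' r) (nhdsWithin 0 (Set.Ioi 0)) (nhds 0))
    -- subsolution and stability inequalities
    (hsub : ∀ r ∈ Set.Ioc (0:ℝ) R, 0 ≤ v'' r + ((N : ℝ) - 1) / r * v' r + f (v r))
    (hstab : ∀ r ∈ Set.Ioc (0:ℝ) R, f' (v r) ≤ ((N : ℝ) - 2) ^ 2 / (4 * r ^ 2)) :
    ∀ v₁ v₂ R₁ R₂, IsRegularSolutionWithFirstZero N f v₁ R₁ →
      IsRegularSolutionWithFirstZero N f v₂ R₂ → v₁ 0 < v₂ 0 → R₁ < R₂ := by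
  intro v₁ v₂ R₁ R₂ hreg1 hreg2 h12
  have hN6 : (6:ℝ) ≤ (N:ℝ) := by exact_mod_cast hN
  have hcontf : ContinuousOn f (Set.Ici 0) := FZ.f_contOn hf'def
  have hbd : ∀ u : ℝ, M ≤ u → f' u * Fint f u ≤ q₁ := fun u hu => (hbound u hu).2
  obtain ⟨hvm, hv'm⟩ := FZ.key_limits hN hq hInt hcontf hfpos hf'def hq₁ hq₁S hbd hR
    hv' hvpos hθ' hform hθ0 hθ'0
  have hvtop := FZ.v_tendsto_atTop hInt hfpos hR hvpos hform hθ0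
  have hf'mono : MonotoneOn f' (Set.Ici 0) := FZ.f'_mono hf''def hf''pos
  have hNhalf : (0:ℝ) < (N:ℝ)/2 := by linarith
  have hmpos : (0:ℝ) < ((N:ℝ)-2)/2 := by linarith
  -- ===== the crossing lemma =====
  have cross : ∀ u Ru, IsRegularSolutionWithFirstZero N f u Ru →
      Ru < R ∧ ∀ r ∈ Set.Ioc (0:ℝ) Ru, u r < v r := by
    rintro u Ru ⟨hRu, hupos, huR, u', u'', hu', hu'', hu''c, hu'0, hueq⟩
    set c₀ := min Ru R with hc₀
    have hc₀pos : 0 < c₀ := lt_min hRu hR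
    have hc₀Ru : c₀ ≤ Ru := min_le_left _ _
    have hc₀R : c₀ ≤ R := min_le_right _ _
    have huc : ContinuousOn u (Set.Icc 0 Ru) := fun x hx => (hu' x hx).continuousWithinAt
    have hu'c : ContinuousOn u' (Set.Icc 0 Ru) := fun x hx => (hu'' x hx).continuousWithinAt
    obtain ⟨Bu, hBu⟩ := (isCompact_Icc (a:=(0:ℝ)) (b:=Ru)).exists_bound_of_continuousOn huc
    obtain ⟨Bu', hBu'⟩ := (isCompact_Icc (a:=(0:ℝ)) (b:=Ru)).exists_bound_of_continuousOn hu'c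
    have hunn : ∀ r ∈ Set.Icc (0:ℝ) Ru, 0 ≤ u r := by
      intro r hr
      rcases lt_or_eq_of_le hr.2 with h | h
      · exact le_of_lt (hupos r hr.1 h)
      · rw [h, huR]
    have main : ∀ r ∈ Set.Ioc (0:ℝ) c₀, u r < v r := by
      by_contra hcon
      push_neg at hcon
      obtain ⟨r₁, hr₁, hr₁le⟩ := hcon
      have hδev : ∀ᶠ r in nhdsWithin 0 (Set.Ioi 0), Bu < v r := hvtop.eventually_gt_atTop Bu
      obtain ⟨δ₀, hδ₀mem, hδ₀⟩ := mem_nhdsGT_iff_exists_Ioo_subset.mp hδev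
      have hδ₀pos : (0:ℝ) < δ₀ := hδ₀mem
      have hzδ : ∀ r, r ∈ Set.Ioo (0:ℝ) δ₀ → r ∈ Set.Icc (0:ℝ) Ru → u r < v r := by
        intro r hr hr'
        have h1 : u r ≤ Bu := le_trans (le_abs_self _) (hBu r hr')
        exact lt_of_le_of_lt h1 (hδ₀ hr)
      set δ := min δ₀ c₀ with hδ
      have hδpos : 0 < δ := lt_min hδ₀pos hc₀pos
      set z : ℝ → ℝ := fun r => v r - u r with hz
      set T := Set.Icc δ c₀ ∩ z ⁻¹' Set.Iic 0 with hT
      have hzTc : ContinuousOn z (Set.Icc δ c₀) := by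
        refine ContinuousOn.sub ?_ ?_
        · have hvcont : ContinuousOn v (Set.Ioc 0 R) :=
            fun x hx => (hv' x hx).continuousWithinAt
          exact hvcont.mono
            (fun x hx => ⟨lt_of_lt_of_le hδpos hx.1, le_trans hx.2 hc₀R⟩)
        · exact huc.mono (fun x hx => ⟨le_trans (le_of_lt hδpos) hx.1, le_trans hx.2 hc₀Ru⟩)
      have hTclosed : IsClosed T :=
        hzTc.preimage_isClosed_of_isClosed isClosed_Icc isClosed_Iic
      have hr₁T : r₁ ∈ T := by
        have hr₁δ₀ : δ₀ ≤ r₁ := by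
          by_contra hl
          push_neg at hl
          have := hzδ r₁ ⟨hr₁.1, hl⟩ ⟨le_of_lt hr₁.1, le_trans hr₁.2 hc₀Ru⟩
          linarith
        refine ⟨⟨le_trans (min_le_left _ _) hr₁δ₀, hr₁.2⟩, ?_⟩
        simp only [Set.mem_preimage, Set.mem_Iic, hz]
        linarith
      have hTbdd : BddBelow T := ⟨δ, fun t ht => ht.1.1⟩
      set r₀ := sInf T with hr₀def
      have hr₀T : r₀ ∈ T := hTclosed.csInf_mem ⟨r₁, hr₁T⟩ hTbdd
      have hr₀pos : 0 < r₀ := lt_of_lt_of_le hδpos hr₀T.1.1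
      have hr₀c₀ : r₀ ≤ c₀ := hr₀T.1.2
      have hzr₀ : z r₀ ≤ 0 := hr₀T.2
      have hmin : ∀ r ∈ Set.Ioo (0:ℝ) r₀, 0 < z r := by
        intro r hr
        by_cases hlt : r < δ₀
        · have := hzδ r ⟨hr.1, hlt⟩
            ⟨le_of_lt hr.1, le_trans (le_of_lt hr.2) (le_trans hr₀c₀ hc₀Ru)⟩
          simp only [hz]; linarith
        · push_neg at hlt
          by_contra hc2
          push_neg at hc2
          have hrT : r ∈ T := by
            refine ⟨⟨le_trans (min_le_left _ _) hlt, le_trans (le_of_lt hr.2) hr₀c₀⟩, ?_⟩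
            simpa using hc2
          exact absurd (csInf_le hTbdd hrT) (not_le.mpr hr.2)
      -- prepare noTouch
      have hsub1 : Set.Ioc (0:ℝ) r₀ ⊆ Set.Ioc 0 R :=
        Set.Ioc_subset_Ioc le_rfl (le_trans hr₀c₀ hc₀R)
      have hsub2 : Set.Ioc (0:ℝ) r₀ ⊆ Set.Icc 0 Ru := fun x hx =>
        ⟨le_of_lt hx.1, le_trans hx.2 (le_trans hr₀c₀ hc₀Ru)⟩
      refine FZ.noTouch N hN hr₀pos
        (z := z) (z' := fun r => v' r - u' r) (z'' := fun r => v'' r - u'' r)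
        ?_ ?_ ?_ hmin hzr₀ ?_
      · intro r hr
        exact ((hv' r (hsub1 hr)).mono hsub1).sub ((hu' r (hsub2 hr)).mono hsub2)
      · intro r hr
        exact ((hv'' r (hsub1 hr)).mono hsub1).sub ((hu'' r (hsub2 hr)).mono hsub2)
      · intro r hr
        have hrIoc : r ∈ Set.Ioc (0:ℝ) R :=
          ⟨hr.1, le_trans (le_of_lt hr.2) (le_trans hr₀c₀ hc₀R)⟩
        have h1 := hsub r hrIoc
        have hrRu : r < Ru := lt_of_lt_of_le hr.2 (le_trans hr₀c₀ hc₀Ru)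
        have h2 := hueq r ⟨hr.1, hrRu⟩
        have hzr : 0 < z r := hmin r hr
        have huge0 : 0 ≤ u r := le_of_lt (hupos r (le_of_lt hr.1) hrRu)
        have huv : u r ≤ v r := by simp only [hz] at hzr; linarith
        have hcvx := FZ.convex_ineq hf'def hf''def hf''pos huge0 huv
        have hst := hstab r hrIoc
        have hfz : f (v r) - f (u r) ≤ ((N:ℝ)-2)^2/(4*r^2) * (v r - u r) := by
          calc f (v r) - f (u r) ≤ f' (v r) * (v r - u r) := hcvx
          _ ≤ ((N:ℝ)-2)^2/(4*r^2) * (v r - u r) := by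
              refine mul_le_mul_of_nonneg_right hst ?_
              simp only [hz] at hzr; linarith
        have e : ((N:ℝ)-1)/r*(v' r - u' r)
            = ((N:ℝ)-1)/r*(v' r) - ((N:ℝ)-1)/r*(u' r) := by ring
        simp only [hz]
        rw [e]
        linarith
      · -- boundary behaviour of W at 0
        have hu'lim : Filter.Tendsto (fun r => r ^ ((N:ℝ)/2) * u' r)
            (nhdsWithin 0 (Set.Ioi 0)) (nhds 0) := by
          refine squeeze_zero_norm' (a := fun r => Bu' * r ^ ((N:ℝ)/2)) ?_ ?_
          · filter_upwards [Ioo_mem_nhdsGT_of_mem ⟨le_rfl, hRu⟩] with r hr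
            have h1 : |u' r| ≤ Bu' := by
              simpa [Real.norm_eq_abs] using hBu' r ⟨le_of_lt hr.1, le_of_lt hr.2⟩
            rw [Real.norm_eq_abs, abs_mul,
              abs_of_nonneg (Real.rpow_nonneg (le_of_lt hr.1) _)]
            calc r ^ ((N:ℝ)/2) * |u' r| ≤ r ^ ((N:ℝ)/2) * Bu' :=
                mul_le_mul_of_nonneg_left h1 (Real.rpow_nonneg (le_of_lt hr.1) _)
            _ = Bu' * r ^ ((N:ℝ)/2) := mul_comm _ _
          · have := (FZ.rpow_tendsto_zero hNhalf).const_mul Bu'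
            simpa using this
        have hulim : Filter.Tendsto (fun r => r ^ (((N:ℝ)-2)/2) * u r)
            (nhdsWithin 0 (Set.Ioi 0)) (nhds 0) := by
          refine squeeze_zero_norm' (a := fun r => Bu * r ^ (((N:ℝ)-2)/2)) ?_ ?_
          · filter_upwards [Ioo_mem_nhdsGT_of_mem ⟨le_rfl, hRu⟩] with r hr
            have h1 : |u r| ≤ Bu := by
              simpa [Real.norm_eq_abs] using hBu r ⟨le_of_lt hr.1, le_of_lt hr.2⟩
            rw [Real.norm_eq_abs, abs_mul,
              abs_of_nonneg (Real.rpow_nonneg (le_of_lt hr.1) _)]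
            calc r ^ (((N:ℝ)-2)/2) * |u r| ≤ r ^ (((N:ℝ)-2)/2) * Bu :=
                mul_le_mul_of_nonneg_left h1 (Real.rpow_nonneg (le_of_lt hr.1) _)
            _ = Bu * r ^ (((N:ℝ)-2)/2) := mul_comm _ _
          · have := (FZ.rpow_tendsto_zero hmpos).const_mul Bu
            simpa using this
        have hcomb := (hv'm.sub hu'lim).add
          (((hvm.sub hulim)).const_mul (((N:ℝ)-2)/2))
        have hcomb' : Filter.Tendsto
            (fun r => r ^ ((N:ℝ)/2) * (v' r - u' r)
              + (((N:ℝ)-2)/2) * r ^ (((N:ℝ)-2)/2) * (v r - u r))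
            (nhdsWithin 0 (Set.Ioi 0)) (nhds 0) := by
          have heq : ∀ r : ℝ, (r ^ ((N:ℝ)/2) * v' r - r ^ ((N:ℝ)/2) * u' r)
              + (((N:ℝ)-2)/2) * (r ^ (((N:ℝ)-2)/2) * v r - r ^ (((N:ℝ)-2)/2) * u r)
              = r ^ ((N:ℝ)/2) * (v' r - u' r)
              + (((N:ℝ)-2)/2) * r ^ (((N:ℝ)-2)/2) * (v r - u r) := by
            intro r; ring
          have := hcomb.congr heq
          simpa using this
        exact hcomb'
    have hRuR : Ru < R := by
      by_contra hcon2
      push_neg at hcon2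
      have hc₀R' : c₀ = R := by rw [hc₀, min_eq_right hcon2]
      have hmain := main R ⟨hR, by rw [hc₀R']⟩
      have hu0 : 0 ≤ u R := hunn R ⟨le_of_lt hR, hcon2⟩
      rw [hvR] at hmain
      linarith
    refine ⟨hRuR, fun r hr => main r ⟨hr.1, ?_⟩⟩
    rw [hc₀, min_eq_left (le_of_lt hRuR)]
    exact hr.2
  -- ===== final comparison of two regular solutions =====
  obtain ⟨hcr1R, hcr1⟩ := cross v₁ R₁ hreg1
  obtain ⟨hcr2R, hcr2⟩ := cross v₂ R₂ hreg2
  obtain ⟨hR₁, h1pos, h1R, u₁', u₁'', hu₁', hu₁'', hu₁''c, hu₁'0, hu₁eq⟩ := hreg1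
  obtain ⟨hR₂, h2pos, h2R, u₂', u₂'', hu₂', hu₂'', hu₂''c, hu₂'0, hu₂eq⟩ := hreg2
  by_contra hcon
  push_neg at hcon
  -- hcon : R₂ ≤ R₁
  have hIccsub : Set.Icc (0:ℝ) R₂ ⊆ Set.Icc 0 R₁ := Set.Icc_subset_Icc le_rfl hcon
  have hc₁ : ContinuousOn v₁ (Set.Icc 0 R₁) := fun x hx => (hu₁' x hx).continuousWithinAt
  have hc₂ : ContinuousOn v₂ (Set.Icc 0 R₂) := fun x hx => (hu₂' x hx).continuousWithinAt
  have hc₁' : ContinuousOn u₁' (Set.Icc 0 R₁) := fun x hx => (hu₁'' x hx).continuousWithinAt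
  have hc₂' : ContinuousOn u₂' (Set.Icc 0 R₂) := fun x hx => (hu₂'' x hx).continuousWithinAt
  obtain ⟨B₁, hB₁⟩ := (isCompact_Icc (a:=(0:ℝ)) (b:=R₁)).exists_bound_of_continuousOn hc₁
  obtain ⟨B₂, hB₂⟩ := (isCompact_Icc (a:=(0:ℝ)) (b:=R₂)).exists_bound_of_continuousOn hc₂
  obtain ⟨B₁', hB₁'⟩ := (isCompact_Icc (a:=(0:ℝ)) (b:=R₁)).exists_bound_of_continuousOn hc₁'
  obtain ⟨B₂', hB₂'⟩ := (isCompact_Icc (a:=(0:ℝ)) (b:=R₂)).exists_bound_of_continuousOn hc₂'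
  set z : ℝ → ℝ := fun r => v₂ r - v₁ r with hz
  have hz0pos : 0 < z 0 := by simp only [hz]; linarith
  have hzc : ContinuousOn z (Set.Icc 0 R₂) := hc₂.sub (hc₁.mono hIccsub)
  have hv₁nn : ∀ r ∈ Set.Icc (0:ℝ) R₁, 0 ≤ v₁ r := by
    intro r hr
    rcases lt_or_eq_of_le hr.2 with h | h
    · exact le_of_lt (h1pos r hr.1 h)
    · rw [h, h1R]
  set T := Set.Icc (0:ℝ) R₂ ∩ z ⁻¹' Set.Iic 0 with hT
  have hTclosed : IsClosed T :=
    hzc.preimage_isClosed_of_isClosed isClosed_Icc isClosed_Iic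
  have hR₂T : R₂ ∈ T := by
    refine ⟨⟨le_of_lt hR₂, le_rfl⟩, ?_⟩
    simp only [Set.mem_preimage, Set.mem_Iic, hz, h2R]
    have := hv₁nn R₂ ⟨le_of_lt hR₂, hcon⟩
    linarith
  have hTbdd : BddBelow T := ⟨0, fun t ht => ht.1.1⟩
  set ρ := sInf T with hρdef
  have hρT : ρ ∈ T := hTclosed.csInf_mem ⟨R₂, hR₂T⟩ hTbdd
  have hρR₂ : ρ ≤ R₂ := hρT.1.2
  have hzρ : z ρ ≤ 0 := hρT.2
  have hρpos : 0 < ρ := by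
    have hev : ∀ᶠ y in nhdsWithin 0 (Set.Icc (0:ℝ) R₂), 0 < z y :=
      (hzc 0 ⟨le_rfl, le_of_lt hR₂⟩).eventually (eventually_gt_nhds hz0pos)
    obtain ⟨ε, hε, hballsub⟩ := Metric.mem_nhdsWithin_iff.mp hev
    have hle : min ε R₂ ≤ ρ := by
      refine le_csInf ⟨R₂, hR₂T⟩ ?_
      intro t ht
      by_contra hlt
      push_neg at hlt
      have htball : t ∈ Metric.ball (0:ℝ) ε := by
        rw [Metric.mem_ball, Real.dist_eq, sub_zero,
          abs_of_nonneg ht.1.1]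
        exact lt_of_lt_of_le hlt (min_le_left _ _)
      have := hballsub ⟨htball, ht.1⟩
      have h2 := ht.2
      simp only [Set.mem_preimage, Set.mem_Iic] at h2
      simp only [Set.mem_setOf_eq] at this
      linarith
    exact lt_of_lt_of_le (lt_min hε hR₂) hle
  have hmin2 : ∀ r ∈ Set.Ioo (0:ℝ) ρ, 0 < z r := by
    intro r hr
    by_contra hc2
    push_neg at hc2
    have hrT : r ∈ T := by
      refine ⟨⟨le_of_lt hr.1, le_trans (le_of_lt hr.2) hρR₂⟩, ?_⟩
      simpa using hc2
    exact absurd (csInf_le hTbdd hrT) (not_le.mpr hr.2)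
  have hsub2 : Set.Ioc (0:ℝ) ρ ⊆ Set.Icc 0 R₂ := fun x hx =>
    ⟨le_of_lt hx.1, le_trans hx.2 hρR₂⟩
  have hsub1 : Set.Ioc (0:ℝ) ρ ⊆ Set.Icc 0 R₁ := fun x hx => hIccsub (hsub2 hx)
  refine FZ.noTouch N hN hρpos
    (z := z) (z' := fun r => u₂' r - u₁' r) (z'' := fun r => u₂'' r - u₁'' r)
    ?_ ?_ ?_ hmin2 hzρ ?_
  · intro r hr
    exact ((hu₂' r (hsub2 hr)).mono hsub2).sub ((hu₁' r (hsub1 hr)).mono hsub1)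
  · intro r hr
    exact ((hu₂'' r (hsub2 hr)).mono hsub2).sub ((hu₁'' r (hsub1 hr)).mono hsub1)
  · intro r hr
    have hrR₂ : r < R₂ := lt_of_lt_of_le hr.2 hρR₂
    have hrR₁ : r < R₁ := lt_of_lt_of_le hrR₂ hcon
    have h1 := hu₂eq r ⟨hr.1, hrR₂⟩
    have h2 := hu₁eq r ⟨hr.1, hrR₁⟩
    have hzr : 0 < z r := hmin2 r hr
    have hv₁r : 0 < v₁ r := h1pos r (le_of_lt hr.1) hrR₁
    have hv₂r : 0 < v₂ r := h2pos r (le_of_lt hr.1) hrR₂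
    have h12r : v₁ r ≤ v₂ r := by simp only [hz] at hzr; linarith
    have hcvx := FZ.convex_ineq hf'def hf''def hf''pos (le_of_lt hv₁r) h12r
    have hv₂v : v₂ r < v r := hcr2 r ⟨hr.1, le_of_lt hrR₂⟩
    have hst : f' (v₂ r) ≤ ((N:ℝ)-2)^2/(4*r^2) := by
      have hrR : r ≤ R := le_of_lt (lt_trans hrR₂ hcr2R)
      have hmono := hf'mono (Set.mem_Ici.mpr (le_of_lt hv₂r))
        (Set.mem_Ici.mpr (le_of_lt (lt_trans hv₂r hv₂v))) (le_of_lt hv₂v)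
      exact le_trans hmono (hstab r ⟨hr.1, hrR⟩)
    have hfz : f (v₂ r) - f (v₁ r) ≤ ((N:ℝ)-2)^2/(4*r^2) * (v₂ r - v₁ r) := by
      calc f (v₂ r) - f (v₁ r) ≤ f' (v₂ r) * (v₂ r - v₁ r) := hcvx
      _ ≤ ((N:ℝ)-2)^2/(4*r^2) * (v₂ r - v₁ r) := by
          refine mul_le_mul_of_nonneg_right hst ?_
          simp only [hz] at hzr; linarith
    have e : ((N:ℝ)-1)/r*(u₂' r - u₁' r)
        = ((N:ℝ)-1)/r*(u₂' r) - ((N:ℝ)-1)/r*(u₁' r) := by ring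
    simp only [hz]
    rw [e]
    linarith
  · -- boundary: z, z' bounded near 0
    have hb : ∀ᶠ r in nhdsWithin 0 (Set.Ioi 0),
        ‖r ^ ((N:ℝ)/2) * (u₂' r - u₁' r)
          + (((N:ℝ)-2)/2) * r ^ (((N:ℝ)-2)/2) * (z r)‖
        ≤ (B₂' + B₁') * r ^ ((N:ℝ)/2)
          + (((N:ℝ)-2)/2) * ((B₂ + B₁) * r ^ (((N:ℝ)-2)/2)) := by
      filter_upwards [Ioo_mem_nhdsGT_of_mem ⟨le_rfl, hR₂⟩] with r hr
      have hrmem₂ : r ∈ Set.Icc (0:ℝ) R₂ := ⟨le_of_lt hr.1, le_of_lt hr.2⟩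
      have hrmem₁ : r ∈ Set.Icc (0:ℝ) R₁ := hIccsub hrmem₂
      have h1 : |u₂' r - u₁' r| ≤ B₂' + B₁' := by
        have := hB₂' r hrmem₂
        have := hB₁' r hrmem₁
        simp only [Real.norm_eq_abs] at *
        calc |u₂' r - u₁' r| ≤ |u₂' r| + |u₁' r| := abs_sub _ _
        _ ≤ B₂' + B₁' := by linarith [hB₂' r hrmem₂, hB₁' r hrmem₁]
      have h2 : |z r| ≤ B₂ + B₁ := by
        simp only [hz]
        calc |v₂ r - v₁ r| ≤ |v₂ r| + |v₁ r| := abs_sub _ _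
        _ ≤ B₂ + B₁ := by
            have a1 := hB₂ r hrmem₂
            have a2 := hB₁ r hrmem₁
            simp only [Real.norm_eq_abs] at a1 a2
            linarith
      have hp1 : (0:ℝ) ≤ r ^ ((N:ℝ)/2) := Real.rpow_nonneg (le_of_lt hr.1) _
      have hp2 : (0:ℝ) ≤ r ^ (((N:ℝ)-2)/2) := Real.rpow_nonneg (le_of_lt hr.1) _
      calc ‖r ^ ((N:ℝ)/2) * (u₂' r - u₁' r)
            + (((N:ℝ)-2)/2) * r ^ (((N:ℝ)-2)/2) * (z r)‖
          ≤ ‖r ^ ((N:ℝ)/2) * (u₂' r - u₁' r)‖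
            + ‖(((N:ℝ)-2)/2) * r ^ (((N:ℝ)-2)/2) * (z r)‖ := norm_add_le _ _
      _ ≤ (B₂' + B₁') * r ^ ((N:ℝ)/2)
            + (((N:ℝ)-2)/2) * ((B₂ + B₁) * r ^ (((N:ℝ)-2)/2)) := by
          rw [Real.norm_eq_abs, Real.norm_eq_abs, abs_mul, abs_mul, abs_mul,
            abs_of_nonneg hp1, abs_of_nonneg hp2,
            abs_of_nonneg (by linarith : (0:ℝ) ≤ ((N:ℝ)-2)/2)]
          refine add_le_add ?_ ?_
          · calc r ^ ((N:ℝ)/2) * |u₂' r - u₁' r| ≤ r ^ ((N:ℝ)/2) * (B₂' + B₁') :=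
                mul_le_mul_of_nonneg_left h1 hp1
            _ = (B₂' + B₁') * r ^ ((N:ℝ)/2) := mul_comm _ _
          · calc ((N:ℝ)-2)/2 * r ^ (((N:ℝ)-2)/2) * |z r|
                ≤ ((N:ℝ)-2)/2 * r ^ (((N:ℝ)-2)/2) * (B₂ + B₁) := by
                  refine mul_le_mul_of_nonneg_left h2 (by positivity)
            _ = (((N:ℝ)-2)/2) * ((B₂ + B₁) * r ^ (((N:ℝ)-2)/2)) := by ring
    refine squeeze_zero_norm' hb ?_
    have t1 := (FZ.rpow_tendsto_zero hNhalf).const_mul (B₂' + B₁')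
    have t2 := ((FZ.rpow_tendsto_zero hmpos).const_mul (B₂ + B₁)).const_mul (((N:ℝ)-2)/2)
    have := t1.add t2
    simpa using this
end

section
/- Let N ≥ 3 be an integer, let f : [0,∞) → (0,∞) be continuous and nondecreasing with ∫₀^∞ ds/f(s) < ∞, let δ > 0, and let w ∈ C¹((0,δ)) be positive with w(r) → ∞ as r → 0⁺ and satisfy the integral identity −r^{N−1}·w'(r) = ∫₀^r f(w(s))·s^{N−1} ds for all 0 < r < δ. Then F(w(r)) ≥ r²/(2N) for all 0 < r < δ. -/
open MeasureTheory Set Filter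

lemma Fint_eq_sub (f : ℝ → ℝ)
    (hInt : MeasureTheory.IntegrableOn (fun s => (f s)⁻¹) (Set.Ioi 0))
    {a b : ℝ} (ha : 0 < a) (hab : a ≤ b) :
    Fint f a = (∫ s in a..b, (f s)⁻¹) + Fint f b := by
  have h1 : MeasureTheory.IntegrableOn (fun s => (f s)⁻¹) (Set.Ioc a b) :=
    hInt.mono_set (fun x hx => ha.trans hx.1)
  have h2 : MeasureTheory.IntegrableOn (fun s => (f s)⁻¹) (Set.Ioi b) :=
    hInt.mono_set (fun x hx => (ha.trans_le hab).trans hx)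
  rw [Fint, Fint, intervalIntegral.integral_of_le hab,
    ← MeasureTheory.setIntegral_union (Set.Ioc_disjoint_Ioi le_rfl) measurableSet_Ioi h1 h2,
    Set.Ioc_union_Ioi_eq_Ioi hab]

lemma Fint_nonneg (f : ℝ → ℝ) (hfpos : ∀ u : ℝ, 0 ≤ u → 0 < f u) {u : ℝ} (hu : 0 < u) :
    0 ≤ Fint f u := by
  refine MeasureTheory.setIntegral_nonneg measurableSet_Ioi (fun s hs => ?_)
  exact (inv_nonneg).2 (hfpos s (hu.trans hs).le).le

lemma Fint_hasDerivAt (f : ℝ → ℝ)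
    (hfcont : ContinuousOn f (Set.Ici 0))
    (hfpos : ∀ u : ℝ, 0 ≤ u → 0 < f u)
    (hInt : MeasureTheory.IntegrableOn (fun s => (f s)⁻¹) (Set.Ioi 0))
    {x : ℝ} (hx : 0 < x) :
    HasDerivAt (Fint f) (-(f x)⁻¹) x := by
  have hcontinv : ∀ y ∈ Set.Ioi (0:ℝ), ContinuousAt (fun s => (f s)⁻¹) y := by
    intro y hy
    have hcy : ContinuousAt f y := hfcont.continuousAt (Ici_mem_nhds hy)
    exact hcy.inv₀ (ne_of_gt (hfpos y (le_of_lt hy)))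
  have hcong : ∀ u ∈ Set.Ioi (0:ℝ), Fint f u = Fint f x - ∫ s in x..u, (f s)⁻¹ := by
    intro u hu
    rcases le_total x u with h | h
    · have := Fint_eq_sub f hInt hx h
      linarith
    · have := Fint_eq_sub f hInt hu h
      rw [intervalIntegral.integral_symm]
      linarith
  have hmeas : StronglyMeasurableAtFilter (fun s => (f s)⁻¹) (nhds x) volume :=
    ContinuousAt.stronglyMeasurableAtFilter isOpen_Ioi hcontinv x hx
  have h1 : HasDerivAt (fun u => ∫ s in x..u, (f s)⁻¹) ((f x)⁻¹) x :=
    intervalIntegral.integral_hasDerivAt_right (by simp) hmeas (hcontinv x hx)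
  have hD : HasDerivAt (fun u => Fint f x - ∫ s in x..u, (f s)⁻¹) (-(f x)⁻¹) x := by
    simpa using (h1.const_sub (Fint f x))
  refine hD.congr_of_eventuallyEq ?_
  filter_upwards [Ioi_mem_nhds hx] with u hu
  exact hcong u hu

/-- If `w` is a positive `C¹` function on `(0,δ)` blowing up at the origin and
satisfying `-r^{N-1} w'(r) = ∫₀^r f(w(s)) s^{N-1} ds`, then
`F(w(r)) ≥ r² / (2N)` on `(0,δ)`. -/
theorem Fint_lower_bound_of_integral_identity
    (N : ℕ) (hN : 3 ≤ N) (f : ℝ → ℝ)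
    (hfcont : ContinuousOn f (Set.Ici 0))
    (hfpos : ∀ u : ℝ, 0 ≤ u → 0 < f u)
    (hfmono : MonotoneOn f (Set.Ici 0))
    (hInt : MeasureTheory.IntegrableOn (fun s => (f s)⁻¹) (Set.Ioi 0))
    (δ : ℝ) (hδ : 0 < δ)
    (w w' : ℝ → ℝ)
    (hw' : ∀ r ∈ Set.Ioo (0:ℝ) δ, HasDerivAt w (w' r) r)
    (hw'cont : ContinuousOn w' (Set.Ioo 0 δ))
    (hwpos : ∀ r ∈ Set.Ioo (0:ℝ) δ, 0 < w r)
    (hwinf : Filter.Tendsto w (nhdsWithin 0 (Set.Ioi 0)) Filter.atTop)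
    (hid : ∀ r ∈ Set.Ioo (0:ℝ) δ,
      -(r ^ (N - 1)) * w' r = ∫ s in (0:ℝ)..r, f (w s) * s ^ (N - 1)) :
    ∀ r ∈ Set.Ioo (0:ℝ) δ, r ^ 2 / (2 * (N : ℝ)) ≤ Fint f (w r) := by
  have hN1 : N - 1 ≠ 0 := by omega
  have hNR : (0:ℝ) < (N:ℝ) := by positivity
  -- continuity of w
  have hwcont : ContinuousOn w (Set.Ioo 0 δ) :=
    fun x hx => ((hw' x hx).continuousAt).continuousWithinAt
  set g : ℝ → ℝ := fun s => f (w s) * s ^ (N - 1) with hg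
  have hgcont : ContinuousOn g (Set.Ioo 0 δ) := by
    apply ContinuousOn.mul
    · exact hfcont.comp hwcont (fun x hx => (hwpos x hx).le)
    · fun_prop
  have hgpos : ∀ s ∈ Set.Ioo (0:ℝ) δ, 0 < g s := by
    intro s hs
    exact mul_pos (hfpos _ (hwpos s hs).le) (pow_pos hs.1 _)
  -- integrability of g near 0
  have hgint : ∀ ρ ∈ Set.Ioo (0:ℝ) δ, MeasureTheory.IntegrableOn g (Set.Ioc 0 ρ) := by
    intro ρ hρ
    by_contra hnot
    have hmid : ∀ ε ∈ Set.Ioc (0:ℝ) ρ, ¬ MeasureTheory.IntegrableOn g (Set.Ioc 0 ε) := by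
      intro ε hε hint
      apply hnot
      have h2 : MeasureTheory.IntegrableOn g (Set.Ioc ε ρ) := by
        have hIcc : Set.Icc ε ρ ⊆ Set.Ioo 0 δ := fun x hx =>
          ⟨hε.1.trans_le hx.1, lt_of_le_of_lt hx.2 hρ.2⟩
        exact ((hgcont.mono hIcc).integrableOn_Icc).mono_set Set.Ioc_subset_Icc_self
      have : Set.Ioc (0:ℝ) ρ = Set.Ioc 0 ε ∪ Set.Ioc ε ρ := (Set.Ioc_union_Ioc_eq_Ioc hε.1.le hε.2).symm
      rw [this]
      exact hint.union h2
    have hw'zero : ∀ ε ∈ Set.Ioc (0:ℝ) ρ, w' ε = 0 := by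
      intro ε hε
      have hεδ : ε ∈ Set.Ioo (0:ℝ) δ := ⟨hε.1, lt_of_le_of_lt hε.2 hρ.2⟩
      have h0 : (∫ s in (0:ℝ)..ε, g s) = 0 := by
        rw [intervalIntegral.integral_of_le hε.1.le]
        exact MeasureTheory.integral_undef (hmid ε hε)
      have := hid ε hεδ
      rw [h0] at this
      have hεpow : (ε:ℝ) ^ (N-1) ≠ 0 := pow_ne_zero _ (ne_of_gt hε.1)
      have : ε ^ (N-1) * w' ε = 0 := by linarith [this]
      exact (mul_eq_zero.1 this).resolve_left hεpow
    -- w is constant on (0, ρ]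
    have hconst : ∀ x ∈ Set.Ioc (0:ℝ) ρ, w x = w ρ := by
      intro x hx
      rcases eq_or_lt_of_le hx.2 with h | h
      · rw [h]
      have hsub : Set.Icc x ρ ⊆ Set.Ioo 0 δ := fun y hy => ⟨hx.1.trans_le hy.1, lt_of_le_of_lt hy.2 hρ.2⟩
      have := constant_of_has_deriv_right_zero (f := w) (a := x) (b := ρ)
        (hwcont.mono hsub)
        (fun y hy => by
          have hyδ : y ∈ Set.Ioo (0:ℝ) δ := hsub ⟨hy.1, hy.2.le⟩
          have := hw' y hyδ
          rw [hw'zero y ⟨hx.1.trans_le hy.1, hy.2.le⟩] at this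
          exact this.hasDerivWithinAt)
      exact (this ρ ⟨hx.2, le_rfl⟩).symm ▸ rfl
    -- contradiction with blow-up
    have h1 : ∀ᶠ x in nhdsWithin 0 (Set.Ioi 0), w ρ + 1 ≤ w x :=
      hwinf.eventually_ge_atTop (w ρ + 1)
    have h2 : ∀ᶠ x in nhdsWithin 0 (Set.Ioi 0), x ∈ Set.Ioc (0:ℝ) ρ :=
      eventually_of_mem (Ioc_mem_nhdsGT_of_mem ⟨le_rfl, hρ.1⟩) (fun _ h => h)
    obtain ⟨x, hx1, hx2⟩ := (h1.and h2).exists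
    rw [hconst x hx2] at hx1
    linarith
  -- interval integrability
  have hgii : ∀ ρ ∈ Set.Ioo (0:ℝ) δ, IntervalIntegrable g volume 0 ρ := by
    intro ρ hρ
    exact (intervalIntegrable_iff_integrableOn_Ioc_of_le hρ.1.le).2 (hgint ρ hρ)
  -- w' < 0
  have hw'neg : ∀ ρ ∈ Set.Ioo (0:ℝ) δ, w' ρ < 0 := by
    intro ρ hρ
    have hpos : 0 < ∫ s in (0:ℝ)..ρ, g s :=
      intervalIntegral.intervalIntegral_pos_of_pos_on (hgii ρ hρ)
        (fun x hx => hgpos x ⟨hx.1, hx.2.trans hρ.2⟩) hρ.1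
    have := hid ρ hρ
    nlinarith [pow_pos hρ.1 (N-1)]
  -- w is antitone on (0,δ)
  have hanti : StrictAntiOn w (Set.Ioo 0 δ) := by
    apply strictAntiOn_of_deriv_neg (convex_Ioo 0 δ) hwcont
    intro x hx
    rw [interior_Ioo] at hx
    rw [(hw' x hx).deriv]
    exact hw'neg x hx
  have hwmono : ∀ s r : ℝ, s ∈ Set.Ioo (0:ℝ) δ → r ∈ Set.Ioo (0:ℝ) δ → s ≤ r → w r ≤ w s := by
    intro s r hs hr hsr
    rcases eq_or_lt_of_le hsr with h | h
    · rw [h]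
    · exact (hanti hs hr h).le
  -- lower bound on the integral
  have hlow : ∀ ρ ∈ Set.Ioo (0:ℝ) δ, f (w ρ) * ρ ^ N / N ≤ ∫ s in (0:ℝ)..ρ, g s := by
    intro ρ hρ
    have hmono : ∀ x ∈ Set.Icc (0:ℝ) ρ, f (w ρ) * x ^ (N-1) ≤ g x := by
      intro x hx
      rcases eq_or_lt_of_le hx.1 with h | h
      · simp [g, ← h, zero_pow hN1]
      · have hxδ : x ∈ Set.Ioo (0:ℝ) δ := ⟨h, lt_of_le_of_lt hx.2 hρ.2⟩
        have hfle : f (w ρ) ≤ f (w x) :=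
          hfmono (hwpos ρ hρ).le (hwpos x hxδ).le (hwmono x ρ hxδ hρ hx.2)
        exact mul_le_mul_of_nonneg_right hfle (pow_nonneg h.le _)
    have hii2 : IntervalIntegrable (fun x => f (w ρ) * x ^ (N-1)) volume 0 ρ := by
      apply Continuous.intervalIntegrable; fun_prop
    have := intervalIntegral.integral_mono_on hρ.1.le hii2 (hgii ρ hρ) hmono
    calc f (w ρ) * ρ ^ N / N = ∫ x in (0:ℝ)..ρ, f (w ρ) * x ^ (N-1) := by
          rw [intervalIntegral.integral_const_mul, integral_pow]
          rw [Nat.sub_add_cancel (by omega : 1 ≤ N)]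
          have : ((N - 1 : ℕ) : ℝ) + 1 = (N : ℝ) := by
            push_cast [Nat.cast_sub (by omega : 1 ≤ N)]; ring
          rw [this, zero_pow (by omega : N ≠ 0)]
          ring
      _ ≤ _ := this
  -- derivative inequality
  have hkey : ∀ ρ ∈ Set.Ioo (0:ℝ) δ, ρ / (N:ℝ) ≤ -(f (w ρ))⁻¹ * w' ρ := by
    intro ρ hρ
    have hfρ : 0 < f (w ρ) := hfpos _ (hwpos ρ hρ).le
    have hp : 0 < ρ ^ (N-1) := pow_pos hρ.1 _
    have h1 : f (w ρ) * ρ ^ N / N ≤ -(ρ ^ (N-1)) * w' ρ := by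
      rw [hid ρ hρ]; exact hlow ρ hρ
    have hρN : ρ ^ N = ρ ^ (N-1) * ρ := by
      rw [← pow_succ, Nat.sub_add_cancel (by omega : 1 ≤ N)]
    have h2 : f (w ρ) * ρ / N ≤ -w' ρ := by
      have h3 : ρ ^ (N-1) * (f (w ρ) * ρ / N) ≤ ρ ^ (N-1) * (-w' ρ) := by
        calc ρ ^ (N-1) * (f (w ρ) * ρ / N) = f (w ρ) * ρ ^ N / N := by rw [hρN]; ring
          _ ≤ -(ρ ^ (N-1)) * w' ρ := h1
          _ = ρ ^ (N-1) * (-w' ρ) := by ring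
      exact le_of_mul_le_mul_left h3 hp
    have h4 := mul_le_mul_of_nonneg_left h2 (inv_nonneg.2 hfρ.le)
    calc ρ / (N:ℝ) = (f (w ρ))⁻¹ * (f (w ρ) * ρ / N) := by
          field_simp
      _ ≤ (f (w ρ))⁻¹ * (-w' ρ) := h4
      _ = -(f (w ρ))⁻¹ * w' ρ := by ring
  -- φ and its monotonicity
  set φ : ℝ → ℝ := fun t => Fint f (w t) - t ^ 2 / (2 * (N:ℝ)) with hφdef
  have hφ' : ∀ ρ ∈ Set.Ioo (0:ℝ) δ,
      HasDerivAt φ (-(f (w ρ))⁻¹ * w' ρ - ρ / (N:ℝ)) ρ := by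
    intro ρ hρ
    have hA : HasDerivAt (fun t => Fint f (w t)) (-(f (w ρ))⁻¹ * w' ρ) ρ :=
      (Fint_hasDerivAt f hfcont hfpos hInt (hwpos ρ hρ)).comp ρ (hw' ρ hρ)
    have hB : HasDerivAt (fun t : ℝ => t ^ 2 / (2 * (N:ℝ))) (ρ / (N:ℝ)) ρ := by
      have := (hasDerivAt_pow 2 ρ).div_const (2 * (N:ℝ))
      refine this.congr_deriv ?_
      field_simp
      ring
    exact hA.sub hB
  have hφmono : MonotoneOn φ (Set.Ioo 0 δ) := by
    apply monotoneOn_of_deriv_nonneg (convex_Ioo 0 δ)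
    · exact fun x hx => ((hφ' x hx).continuousAt).continuousWithinAt
    · intro x hx
      rw [interior_Ioo] at hx
      exact ((hφ' x hx).differentiableAt).differentiableWithinAt
    · intro x hx
      rw [interior_Ioo] at hx
      rw [(hφ' x hx).deriv]
      linarith [hkey x hx]
  -- conclude
  intro r hr
  refine le_of_forall_pos_le_add (fun ε hε => ?_)
  set a : ℝ := min r (Real.sqrt ε) with ha
  have ha0 : 0 < a := lt_min hr.1 (Real.sqrt_pos.2 hε)
  have har : a ≤ r := min_le_left _ _
  have haδ : a ∈ Set.Ioo (0:ℝ) δ := ⟨ha0, lt_of_le_of_lt har hr.2⟩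
  have hεa : a ^ 2 ≤ ε := by
    have h1 : a ≤ Real.sqrt ε := min_le_right _ _
    calc a ^ 2 ≤ Real.sqrt ε ^ 2 := by nlinarith [Real.sqrt_nonneg ε]
      _ = ε := Real.sq_sqrt hε.le
  have hmono := hφmono haδ hr har
  have hFa : 0 ≤ Fint f (w a) := Fint_nonneg f hfpos (hwpos a haδ)
  have hdiv : a ^ 2 / (2 * (N:ℝ)) ≤ a ^ 2 := by
    apply div_le_self (sq_nonneg a)
    have : (3:ℝ) ≤ (N:ℝ) := by exact_mod_cast hN
    linarith
  simp only [hφdef] at hmono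
  linarith
end

section
/- Let f ∈ C²([0,∞)) with f > 0, f' > 0, f'' > 0 and F(0) < ∞. Let r₀ > 0, set t₀ = −log r₀, let v ∈ C²((0,r₀]) be positive, let x ∈ C²([t₀,∞)), and suppose F(v(r)) = (r²/16)·e^{−x(−log r)} for all 0 < r ≤ r₀. Then v''(r) + (9/r)·v'(r) + f(v(r)) ≥ 0 for all 0 < r ≤ r₀ if and only if x''(t) − 8·x'(t) + 16·(e^{x(t)} − 1) − (1 − f'(v(e^{−t}))·F(v(e^{−t})))·(x'(t) + 2)² ≥ 0 for all t ≥ t₀. (This is the generalized Emden transformation in dimension N = 10 with parameter q = 1, where 2N − 4q = 16.) -/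
/-- Generalized Emden transformation in dimension `N = 10` with `q = 1`
(so `2N - 4q = 16`): if `F(v(r)) = (r²/16) e^{-x(-log r)}`, then `v` is a
subsolution on `(0,r₀]` iff the transformed inequality holds for `t ≥ t₀`. -/
theorem emden_transformation_subsolution_iff
    (f f' f'' : ℝ → ℝ)
    (hf'def : ∀ u : ℝ, 0 ≤ u → HasDerivWithinAt f (f' u) (Set.Ici 0) u)
    (hf''def : ∀ u : ℝ, 0 ≤ u → HasDerivWithinAt f' (f'' u) (Set.Ici 0) u)
    (hf''cont : ContinuousOn f'' (Set.Ici 0))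
    (hfpos : ∀ u : ℝ, 0 ≤ u → 0 < f u)
    (hf'pos : ∀ u : ℝ, 0 ≤ u → 0 < f' u)
    (hf''pos : ∀ u : ℝ, 0 ≤ u → 0 < f'' u)
    (hInt : MeasureTheory.IntegrableOn (fun s => (f s)⁻¹) (Set.Ioi 0))
    (r₀ : ℝ) (hr₀ : 0 < r₀) (t₀ : ℝ) (ht₀ : t₀ = -Real.log r₀)
    -- `v ∈ C²((0,r₀])` positive
    (v v' v'' : ℝ → ℝ)
    (hv' : ∀ r ∈ Set.Ioc (0:ℝ) r₀, HasDerivWithinAt v (v' r) (Set.Ioc 0 r₀) r)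
    (hv'' : ∀ r ∈ Set.Ioc (0:ℝ) r₀, HasDerivWithinAt v' (v'' r) (Set.Ioc 0 r₀) r)
    (hv''cont : ContinuousOn v'' (Set.Ioc 0 r₀))
    (hvpos : ∀ r ∈ Set.Ioc (0:ℝ) r₀, 0 < v r)
    -- `x ∈ C²([t₀,∞))`
    (x x' x'' : ℝ → ℝ)
    (hx' : ∀ t : ℝ, t₀ ≤ t → HasDerivWithinAt x (x' t) (Set.Ici t₀) t)
    (hx'' : ∀ t : ℝ, t₀ ≤ t → HasDerivWithinAt x' (x'' t) (Set.Ici t₀) t)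
    (hx''cont : ContinuousOn x'' (Set.Ici t₀))
    -- `F(v(r)) = (r²/16) e^{-x(-log r)}` for `0 < r ≤ r₀`
    (hrel : ∀ r ∈ Set.Ioc (0:ℝ) r₀,
      Fint f (v r) = r ^ 2 / 16 * Real.exp (-(x (-Real.log r)))) :
    (∀ r ∈ Set.Ioc (0:ℝ) r₀, 0 ≤ v'' r + 9 / r * v' r + f (v r)) ↔
    (∀ t : ℝ, t₀ ≤ t →
      0 ≤ x'' t - 8 * x' t + 16 * (Real.exp (x t) - 1)
          - (1 - f' (v (Real.exp (-t))) * Fint f (v (Real.exp (-t)))) * (x' t + 2) ^ 2) := by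
  have hfc : ContinuousOn f (Set.Ici 0) := fun u hu => (hf'def u hu).continuousWithinAt
  have hgc : ContinuousOn (fun s => (f s)⁻¹) (Set.Ioi 0) :=
    ContinuousOn.inv₀ (hfc.mono Set.Ioi_subset_Ici_self)
      (fun u hu => (hfpos u (le_of_lt hu)).ne')
  -- derivative of Fint
  have hF : ∀ u : ℝ, 0 < u → HasDerivAt (Fint f) (-(f u)⁻¹) u := by
    intro u hu
    have hsplit : ∀ w : ℝ, 0 < w → Fint f w = Fint f 0 - ∫ p in (0:ℝ)..w, (f p)⁻¹ := by
      intro w hw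
      have h1 : Fint f 0 = (∫ p in Set.Ioc 0 w, (f p)⁻¹) + ∫ p in Set.Ioi w, (f p)⁻¹ := by
        rw [Fint, ← Set.Ioc_union_Ioi_eq_Ioi hw.le]
        exact MeasureTheory.setIntegral_union (Set.Ioc_disjoint_Ioi le_rfl)
          measurableSet_Ioi (hInt.mono_set Set.Ioc_subset_Ioi_self)
          (hInt.mono_set (Set.Ioi_subset_Ioi hw.le))
      rw [Fint, intervalIntegral.integral_of_le hw.le, h1]
      ring
    have hii : IntervalIntegrable (fun s => (f s)⁻¹) MeasureTheory.volume 0 u := by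
      rw [intervalIntegrable_iff_integrableOn_Ioc_of_le hu.le]
      exact hInt.mono_set Set.Ioc_subset_Ioi_self
    have hderiv : HasDerivAt (fun w => ∫ p in (0:ℝ)..w, (f p)⁻¹) ((f u)⁻¹) u :=
      intervalIntegral.integral_hasDerivAt_right hii
        (hgc.stronglyMeasurableAtFilter isOpen_Ioi u hu)
        (hgc.continuousAt (isOpen_Ioi.mem_nhds hu))
    have h2 : HasDerivAt (fun w => Fint f 0 - ∫ p in (0:ℝ)..w, (f p)⁻¹) (-(f u)⁻¹) u := by
      simpa using hderiv.const_sub (Fint f 0)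
    apply h2.congr_of_eventuallyEq
    filter_upwards [isOpen_Ioi.eventually_mem hu] with w hw
    exact hsplit w hw
  set s : Set ℝ := Set.Ioc (0:ℝ) r₀ with hs
  have hmapslog : Set.MapsTo (fun p => -Real.log p) s (Set.Ici t₀) := by
    intro p hp
    have := Real.log_le_log hp.1 hp.2
    simp only [Set.mem_Ici, ht₀]
    linarith
  have hmapsv : Set.MapsTo v s (Set.Ici 0) := fun p hp => (hvpos p hp).le
  -- first-order relation
  have e1 : ∀ r ∈ s, v' r =
      -(f (v r) * Real.exp (-(x (-Real.log r))) * (r / 16) * (2 + x' (-Real.log r))) := by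
    intro r hr
    have hr0 : (0:ℝ) < r := hr.1
    have hrne : r ≠ 0 := hr0.ne'
    have htt : t₀ ≤ -Real.log r := hmapslog hr
    have hlog : HasDerivWithinAt (fun p => -Real.log p) (-r⁻¹) s r :=
      ((Real.hasDerivAt_log hrne).neg).hasDerivWithinAt
    have hX : HasDerivWithinAt (fun p => x (-Real.log p)) (x' (-Real.log r) * -r⁻¹) s r := by
      have h := HasDerivWithinAt.comp r (hx' _ htt) hlog hmapslog
      exact h
    have hE : HasDerivWithinAt (fun p => Real.exp (-(x (-Real.log p))))
        (Real.exp (-(x (-Real.log r))) * -(x' (-Real.log r) * -r⁻¹)) s r := hX.neg.exp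
    have hQ : HasDerivWithinAt (fun p : ℝ => p ^ 2 / 16) (r / 8) s r := by
      have h := ((hasDerivAt_pow 2 r).div_const 16).hasDerivWithinAt (s := s)
      refine h.congr_deriv ?_
      push_cast
      ring
    have hRHS1 := hQ.mul hE
    have hLHS1 : HasDerivWithinAt (fun p => Fint f (v p)) (-(f (v r))⁻¹ * v' r) s r := by
      have h := HasDerivAt.comp_hasDerivWithinAt r (hF (v r) (hvpos r hr)) (hv' r hr)
      exact h
    have hcongr : HasDerivWithinAt (fun p => p ^ 2 / 16 * Real.exp (-(x (-Real.log p))))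
        (-(f (v r))⁻¹ * v' r) s r :=
      hLHS1.congr (fun p hp => (hrel p hp).symm) (hrel r hr).symm
    have eq1 := (uniqueDiffOn_Ioc (0:ℝ) r₀ r hr).eq_deriv _ hcongr hRHS1
    have hfne : f (v r) ≠ 0 := (hfpos _ (hvpos r hr).le).ne'
    have h2 : v' r = -(f (v r)) * (r / 8 * Real.exp (-(x (-Real.log r))) +
        r ^ 2 / 16 * (Real.exp (-(x (-Real.log r))) * -(x' (-Real.log r) * -r⁻¹))) := by
      rw [← eq1]
      field_simp
    rw [h2]
    field_simp
    ring
  -- key pointwise identity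
  have key : ∀ r ∈ s, v'' r + 9 / r * v' r + f (v r) =
      f (v r) * Real.exp (-(x (-Real.log r))) / 16 *
      (x'' (-Real.log r) - 8 * x' (-Real.log r) + 16 * (Real.exp (x (-Real.log r)) - 1)
        - (1 - f' (v r) * Fint f (v r)) * (x' (-Real.log r) + 2) ^ 2) := by
    intro r hr
    have hr0 : (0:ℝ) < r := hr.1
    have hrne : r ≠ 0 := hr0.ne'
    have htt : t₀ ≤ -Real.log r := hmapslog hr
    have hv0 : 0 < v r := hvpos r hr
    have hlog : HasDerivWithinAt (fun p => -Real.log p) (-r⁻¹) s r :=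
      ((Real.hasDerivAt_log hrne).neg).hasDerivWithinAt
    have hX : HasDerivWithinAt (fun p => x (-Real.log p)) (x' (-Real.log r) * -r⁻¹) s r := by
      have h := HasDerivWithinAt.comp r (hx' _ htt) hlog hmapslog
      exact h
    have hE : HasDerivWithinAt (fun p => Real.exp (-(x (-Real.log p))))
        (Real.exp (-(x (-Real.log r))) * -(x' (-Real.log r) * -r⁻¹)) s r := hX.neg.exp
    have hA : HasDerivWithinAt (fun p => f (v p)) (f' (v r) * v' r) s r := by
      have h := HasDerivWithinAt.comp r (hf'def (v r) hv0.le) (hv' r hr) hmapsv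
      exact h
    have hC : HasDerivWithinAt (fun p : ℝ => p / 16) (1 / 16) s r := by
      simpa using ((hasDerivAt_id r).div_const 16).hasDerivWithinAt
    have hD : HasDerivWithinAt (fun p => 2 + x' (-Real.log p)) (x'' (-Real.log r) * -r⁻¹) s r := by
      have h := HasDerivWithinAt.comp r (hx'' _ htt) hlog hmapslog
      exact HasDerivWithinAt.const_add 2 h
    have hW := (((hA.mul hE).mul hC).mul hD).neg
    have hW' : HasDerivWithinAt v' (-((((f' (v r) * v' r) *
        Real.exp (-(x (-Real.log r))) + f (v r) * (Real.exp (-(x (-Real.log r))) *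
        -(x' (-Real.log r) * -r⁻¹))) * (r / 16) +
        f (v r) * Real.exp (-(x (-Real.log r))) * (1 / 16)) * (2 + x' (-Real.log r)) +
        f (v r) * Real.exp (-(x (-Real.log r))) * (r / 16) *
        (x'' (-Real.log r) * -r⁻¹))) s r :=
      hW.congr (fun p hp => e1 p hp) (e1 r hr)
    have eq2 := (uniqueDiffOn_Ioc (0:ℝ) r₀ r hr).eq_deriv _ (hv'' r hr) hW'
    have e1r := e1 r hr
    have hFv := hrel r hr
    rw [eq2, e1r, hFv]
    have hexp : Real.exp (x (-Real.log r)) = (Real.exp (-(x (-Real.log r))))⁻¹ := by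
      rw [← Real.exp_neg, neg_neg]
    rw [hexp]
    have hEne : Real.exp (-(x (-Real.log r))) ≠ 0 := (Real.exp_pos _).ne'
    field_simp
    ring
  constructor
  · intro h t ht
    set r := Real.exp (-t) with hrdef
    have hr : r ∈ s := by
      constructor
      · exact Real.exp_pos _
      · have : -t ≤ -t₀ := by linarith
        calc r ≤ Real.exp (-t₀) := Real.exp_le_exp.mpr this
          _ = r₀ := by rw [ht₀, neg_neg, Real.exp_log hr₀]
    have hlogr : -Real.log r = t := by rw [hrdef, Real.log_exp, neg_neg]
    have hk := key r hr
    rw [hlogr] at hk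
    have hpos : 0 < f (v r) * Real.exp (-(x t)) / 16 := by
      have := hfpos (v r) (hvpos r hr).le
      positivity
    have h0 := h r hr
    rw [hk] at h0
    nlinarith [h0, hpos]
  · intro h r hr
    have htt : t₀ ≤ -Real.log r := hmapslog hr
    have hexp : Real.exp (-(-Real.log r)) = r := by rw [neg_neg, Real.exp_log hr.1]
    have h0 := h (-Real.log r) htt
    rw [hexp] at h0
    rw [key r hr]
    have hpos : 0 ≤ f (v r) * Real.exp (-(x (-Real.log r))) / 16 := by
      have := hfpos (v r) (hvpos r hr).le
      positivity
    exact mul_nonneg hpos h0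
end

section
/- Let y₀ ∈ ℝ and let h ∈ C¹([y₀,∞)) satisfy h(y) → 0 as y → ∞ and h'(y) < 0 for all y > y₀. Then there exist t₀ ∈ ℝ and a function x ∈ C¹([t₀,∞)) such that: (1) 4·(e^{x(t)} − 1) = h(x(t) + 2t + log 16) for all t ≥ t₀; (2) x(t₀) + 2t₀ + log 16 = y₀; (3) |x(t)| ≤ 1 for all sufficiently large t; (4) −2 < x'(t) < 0 for all t > t₀, so that t ↦ x(t) + 2t + log 16 is strictly increasing on [t₀,∞). -/
open Real Filter Set

/-- Existence of the implicitly defined function `x` solving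
`4(e^x - 1) = h(x + 2t + log 16)`, defined on `[t₀, ∞)` with
`x(t₀) + 2t₀ + log 16 = y₀`, bounded by `1` for large `t`, and with
`-2 < x' < 0`, so that `t ↦ x(t) + 2t + log 16` is strictly increasing. -/
theorem exists_implicit_solution
    (y₀ : ℝ) (h h' : ℝ → ℝ)
    (hh' : ∀ y : ℝ, y₀ ≤ y → HasDerivWithinAt h (h' y) (Set.Ici y₀) y)
    (hh'cont : ContinuousOn h' (Set.Ici y₀))
    (hlim : Filter.Tendsto h Filter.atTop (nhds 0))
    (hneg : ∀ y : ℝ, y₀ < y → h' y < 0) :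
    ∃ (t₀ : ℝ) (x x' : ℝ → ℝ),
      (∀ t : ℝ, t₀ ≤ t → HasDerivWithinAt x (x' t) (Set.Ici t₀) t) ∧
      ContinuousOn x' (Set.Ici t₀) ∧
      (∀ t : ℝ, t₀ ≤ t → 4 * (Real.exp (x t) - 1) = h (x t + 2 * t + Real.log 16)) ∧
      x t₀ + 2 * t₀ + Real.log 16 = y₀ ∧
      (∀ᶠ t in Filter.atTop, |x t| ≤ 1) ∧
      (∀ t : ℝ, t₀ < t → -2 < x' t ∧ x' t < 0) ∧
      StrictMonoOn (fun t => x t + 2 * t + Real.log 16) (Set.Ici t₀) := by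
  have hcont : ContinuousOn h (Set.Ici y₀) := fun y hy => (hh' y hy).continuousWithinAt
  have hderiv_at : ∀ y : ℝ, y₀ < y → HasDerivAt h (h' y) y := fun y hy =>
    (hh' y hy.le).hasDerivAt (Ici_mem_nhds hy)
  -- h is antitone on Ici y₀
  have hanti : AntitoneOn h (Set.Ici y₀) := by
    apply antitoneOn_of_deriv_nonpos (convex_Ici y₀) hcont
    · intro y hy
      rw [interior_Ici] at hy
      exact ((hderiv_at y hy).differentiableAt).differentiableWithinAt
    · intro y hy
      rw [interior_Ici] at hy
      rw [(hderiv_at y hy).deriv]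
      exact (hneg y hy).le
  -- h is nonnegative on Ici y₀
  have hnonneg : ∀ y : ℝ, y₀ ≤ y → 0 ≤ h y := by
    intro y hy
    refine le_of_tendsto hlim ?_
    filter_upwards [eventually_ge_atTop y] with z hz
    exact hanti hy (hy.trans hz) hz
  -- h' y₀ ≤ 0
  have hm : h' y₀ ≤ 0 := by
    have h1 : Filter.Tendsto h' (nhdsWithin y₀ (Set.Ioi y₀)) (nhds (h' y₀)) :=
      ((hh'cont y₀ self_mem_Ici).tendsto).mono_left (nhdsWithin_mono _ Ioi_subset_Ici_self)
    refine le_of_tendsto h1 ?_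
    filter_upwards [self_mem_nhdsWithin] with z hz
    exact (hneg z hz).le
  set m := h' y₀ with hmdef
  -- C¹ extension of h to all of ℝ
  set H : ℝ → ℝ := fun y => if y < y₀ then h y₀ + m * (y - y₀) else h y with hHdef
  set H' : ℝ → ℝ := fun y => if y < y₀ then m else h' y with hH'def
  have hH_eq : ∀ y : ℝ, y₀ ≤ y → H y = h y := by
    intro y hy; simp only [hHdef, if_neg (not_lt.2 hy)]
  have hH'_eq : ∀ y : ℝ, y₀ ≤ y → H' y = h' y := by
    intro y hy; simp only [hH'def, if_neg (not_lt.2 hy)]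
  have hHnonneg : ∀ y : ℝ, 0 ≤ H y := by
    intro y
    by_cases hy : y < y₀
    · simp only [hHdef, if_pos hy]
      have h1 : 0 ≤ m * (y - y₀) := by nlinarith
      have h2 := hnonneg y₀ le_rfl
      linarith
    · rw [hHdef]; simp only [if_neg hy]; exact hnonneg y (not_lt.1 hy)
  have hH'nonpos : ∀ y : ℝ, H' y ≤ 0 := by
    intro y
    by_cases hy : y < y₀
    · simp only [hH'def, if_pos hy]; exact hm
    · rw [hH'def]; simp only [if_neg hy]
      rcases eq_or_lt_of_le (not_lt.1 hy) with heq | hlt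
      · rw [← heq]; exact hm
      · exact (hneg y hlt).le
  have hHderiv : ∀ y : ℝ, HasDerivAt H (H' y) y := by
    intro y
    rcases lt_trichotomy y y₀ with hy | hy | hy
    · have haff : HasDerivAt (fun z : ℝ => h y₀ + m * (z - y₀)) m y := by
        have h0 : HasDerivAt (fun z : ℝ => h y₀ + m * (z - y₀)) (0 + m * (1 - 0)) y :=
          (hasDerivAt_const y (h y₀)).add
            (((hasDerivAt_id y).sub (hasDerivAt_const y y₀)).const_mul m)
        simpa using h0
      have heq : H =ᶠ[nhds y] (fun z : ℝ => h y₀ + m * (z - y₀)) := by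
        filter_upwards [Iio_mem_nhds hy] with z hz
        simp only [hHdef, if_pos (Set.mem_Iio.mp hz)]
      rw [hH'def]; simp only [if_pos hy]
      exact haff.congr_of_eventuallyEq heq
    · subst hy
      rw [hH'def]; simp only [if_neg (lt_irrefl y)]
      rw [← hmdef]
      have h1 : HasDerivWithinAt H m (Set.Iic y) y := by
        have haff : HasDerivAt (fun z : ℝ => h y + m * (z - y)) m y := by
          have h0 : HasDerivAt (fun z : ℝ => h y + m * (z - y)) (0 + m * (1 - 0)) y :=
            (hasDerivAt_const y (h y)).add
              (((hasDerivAt_id y).sub (hasDerivAt_const y y)).const_mul m)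
          simpa using h0
        refine (haff.hasDerivWithinAt).congr ?_ ?_
        · intro z hz
          rcases lt_or_eq_of_le (Set.mem_Iic.mp hz) with hz' | hz'
          · simp only [hHdef, if_pos hz']
          · subst hz'; simp [hHdef]
        · simp [hHdef]
      have h2 : HasDerivWithinAt H m (Set.Ici y) y := by
        refine (hh' y le_rfl).congr (fun z hz => hH_eq z hz) (hH_eq y le_rfl)
      have h3 := h1.union h2
      rwa [Set.Iic_union_Ici, hasDerivWithinAt_univ] at h3
    · have heq : H =ᶠ[nhds y] h := by
        filter_upwards [Ioi_mem_nhds hy] with z hz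
        exact hH_eq z (le_of_lt hz)
      rw [hH'def]; simp only [if_neg (not_lt.2 hy.le)]
      exact (hderiv_at y hy).congr_of_eventuallyEq heq
  -- the derivative A of F
  set A : ℝ → ℝ := fun y => 1 - H' y / (4 + H y) with hAdef
  have h4H : ∀ y : ℝ, 0 < 4 + H y := fun y => by have := hHnonneg y; linarith
  have hA1 : ∀ y : ℝ, 1 ≤ A y := by
    intro y
    have h1 : H' y / (4 + H y) ≤ 0 := div_nonpos_iff.2 (Or.inr ⟨hH'nonpos y, (h4H y).le⟩)
    simp only [hAdef]; linarith
  have hApos : ∀ y : ℝ, 0 < A y := fun y => lt_of_lt_of_le one_pos (hA1 y)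
  have hAgt : ∀ y : ℝ, y₀ < y → 1 < A y := by
    intro y hy
    have h1 : H' y < 0 := by rw [hH'_eq y hy.le]; exact hneg y hy
    have h2 : H' y / (4 + H y) < 0 := div_neg_of_neg_of_pos h1 (h4H y)
    simp only [hAdef]; linarith
  have h1H : ∀ y : ℝ, 0 < 1 + H y / 4 := fun y => by have := hHnonneg y; linarith
  set F : ℝ → ℝ := fun y => y - Real.log (1 + H y / 4) with hFdef
  have hFderiv : ∀ y : ℝ, HasDerivAt F (A y) y := by
    intro y
    have hinner : HasDerivAt (fun z => 1 + H z / 4) (H' y / 4) y := by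
      simpa using (hHderiv y).div_const 4
    have hlog : HasDerivAt (fun z => Real.log (1 + H z / 4)) ((H' y / 4) / (1 + H y / 4)) y :=
      hinner.log (ne_of_gt (h1H y))
    have hsub := (hasDerivAt_id y).sub hlog
    have heq : (1 : ℝ) - (H' y / 4) / (1 + H y / 4) = A y := by
      rw [hAdef]
      have h2 := (h4H y).ne'
      have h3 := (h1H y).ne'
      field_simp
    rw [← heq]
    exact hsub
  have hFmono : StrictMono F := strictMono_of_hasDerivAt_pos hFderiv hApos
  have hFsub : Monotone (fun y => F y - y) := by
    apply monotone_of_hasDerivAt_nonneg (f' := fun y => A y - 1)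
      (fun y => (hFderiv y).sub (hasDerivAt_id y))
    intro y
    have := hA1 y
    simp only [Pi.zero_apply]
    linarith
  have hF_ge : ∀ y z : ℝ, z ≤ y → F z + (y - z) ≤ F y := by
    intro y z hzy
    have h1 := hFsub hzy
    simp only at h1
    linarith
  have hF_le_self : ∀ y : ℝ, F y ≤ y := by
    intro y
    have h1 : 0 ≤ Real.log (1 + H y / 4) :=
      Real.log_nonneg (by have := hHnonneg y; linarith)
    simp only [hFdef]; linarith
  have hFdiff : Differentiable ℝ F := fun y => (hFderiv y).differentiableAt
  have hFcont : Continuous F := hFdiff.continuous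
  have hFsurj : Function.Surjective F := by
    intro z
    set a := min 0 (z - F 0) with hadef
    have ha : F a ≤ z := by
      have h1 : a ≤ 0 := min_le_left _ _
      have h2 := hF_ge 0 a h1
      have h3 : a ≤ z - F 0 := min_le_right _ _
      linarith
    set b := max a (a + (z - F a)) with hbdef
    have hab : a ≤ b := le_max_left _ _
    have hb : z ≤ F b := by
      have h1 := hF_ge b a hab
      have h2 : a + (z - F a) ≤ b := le_max_right _ _
      linarith
    obtain ⟨c, _, hcz⟩ := intermediate_value_Icc hab hFcont.continuousOn ⟨ha, hb⟩
    exact ⟨c, hcz⟩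
  -- order isomorphism and inverse
  obtain ⟨G, hGcont, hGmono, hFG, hGF⟩ :
      ∃ G : ℝ → ℝ, Continuous G ∧ StrictMono G ∧
        (∀ z : ℝ, F (G z) = z) ∧ (∀ y : ℝ, G (F y) = y) := by
    refine ⟨fun z => (StrictMono.orderIsoOfSurjective F hFmono hFsurj).symm z,
      (StrictMono.orderIsoOfSurjective F hFmono hFsurj).symm.continuous,
      fun a b hab => (StrictMono.orderIsoOfSurjective F hFmono hFsurj).symm.strictMono hab,
      fun z => StrictMono.orderIsoOfSurjective_self_symm_apply F hFmono hFsurj z,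
      fun y => StrictMono.orderIsoOfSurjective_symm_apply_self F hFmono hFsurj y⟩
  have hGderiv : ∀ z : ℝ, HasDerivAt G (A (G z))⁻¹ z := fun z =>
    HasDerivAt.of_local_left_inverse hGcont.continuousAt (hFderiv (G z))
      (ne_of_gt (hApos (G z))) (Filter.Eventually.of_forall hFG)
  -- definitions of t₀, x, x'
  set t₀ : ℝ := (F y₀ - Real.log 16) / 2 with ht₀def
  have ht₀ : 2 * t₀ + Real.log 16 = F y₀ := by rw [ht₀def]; ring
  set Y : ℝ → ℝ := fun t => G (2 * t + Real.log 16) with hYdef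
  set x : ℝ → ℝ := fun t => Y t - 2 * t - Real.log 16 with hxdef
  set x' : ℝ → ℝ := fun t => 2 * (A (Y t))⁻¹ - 2 with hx'def
  have hYderiv : ∀ t : ℝ, HasDerivAt Y (2 * (A (Y t))⁻¹) t := by
    intro t
    have haff : HasDerivAt (fun t : ℝ => 2 * t + Real.log 16) 2 t := by
      simpa using (hasDerivAt_id t).const_mul (2:ℝ)
    have := (hGderiv (2 * t + Real.log 16)).comp t haff
    simpa [hYdef, mul_comm, Function.comp_def] using this
  have hxderiv : ∀ t : ℝ, HasDerivAt x (x' t) t := by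
    intro t
    have haff : HasDerivAt (fun t : ℝ => 2 * t + Real.log 16) 2 t := by
      simpa using (hasDerivAt_id t).const_mul (2:ℝ)
    have h1 := (hYderiv t).sub haff
    have h2 : x = fun t => Y t - (2 * t + Real.log 16) := by
      funext s; rw [hxdef]; ring
    rw [hx'def, h2]
    exact h1
  have hYt₀ : Y t₀ = y₀ := by rw [hYdef]; simp only [ht₀]; exact hGF y₀
  have hYge : ∀ t : ℝ, t₀ ≤ t → y₀ ≤ Y t := by
    intro t ht
    rcases eq_or_lt_of_le ht with rfl | hlt
    · rw [hYt₀]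
    · rw [← hYt₀]
      exact (hGmono (by linarith)).le
  have hYgt : ∀ t : ℝ, t₀ < t → y₀ < Y t := by
    intro t ht
    rw [← hYt₀]
    exact hGmono (by linarith)
  have hxval : ∀ t : ℝ, t₀ ≤ t → x t = Real.log (1 + h (Y t) / 4) := by
    intro t ht
    have h1 : F (Y t) = 2 * t + Real.log 16 := hFG _
    have h2 : H (Y t) = h (Y t) := hH_eq _ (hYge t ht)
    rw [hFdef] at h1
    simp only at h1
    rw [h2] at h1
    rw [hxdef]
    simp only
    linarith
  refine ⟨t₀, x, x', ?_, ?_, ?_, ?_, ?_, ?_, ?_⟩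
  · exact fun t _ => (hxderiv t).hasDerivWithinAt
  · -- continuity of x'
    have hYcont : Continuous Y :=
      hGcont.comp ((continuous_const.mul continuous_id).add continuous_const)
    have hYmaps : Set.MapsTo Y (Set.Ici t₀) (Set.Ici y₀) := fun t ht => hYge t ht
    have hAeq : ∀ t ∈ Set.Ici t₀, A (Y t) = 1 - h' (Y t) / (4 + h (Y t)) := by
      intro t ht
      rw [hAdef]
      simp only
      rw [hH'_eq _ (hYge t ht), hH_eq _ (hYge t ht)]
    have hc1 : ContinuousOn (fun t => h' (Y t)) (Set.Ici t₀) :=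
      hh'cont.comp hYcont.continuousOn hYmaps
    have hc2 : ContinuousOn (fun t => h (Y t)) (Set.Ici t₀) :=
      hcont.comp hYcont.continuousOn hYmaps
    have hc3 : ContinuousOn (fun t => 1 - h' (Y t) / (4 + h (Y t))) (Set.Ici t₀) := by
      apply ContinuousOn.sub continuousOn_const
      apply ContinuousOn.div hc1 (continuousOn_const.add hc2)
      intro t ht
      have h1 : 0 ≤ h (Y t) := hnonneg _ (hYge t ht)
      exact (by linarith : (0:ℝ) < 4 + h (Y t)).ne'
    have hc4 : ContinuousOn (fun t => 2 * (1 - h' (Y t) / (4 + h (Y t)))⁻¹ - 2)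
        (Set.Ici t₀) := by
      apply ContinuousOn.sub _ continuousOn_const
      apply ContinuousOn.mul continuousOn_const
      apply ContinuousOn.inv₀ hc3
      intro t ht
      have : A (Y t) = 1 - h' (Y t) / (4 + h (Y t)) := hAeq t ht
      rw [← this]
      exact (hApos _).ne'
    apply hc4.congr
    intro t ht
    rw [hx'def]
    simp only
    rw [hAeq t ht]
  · -- the functional equation
    intro t ht
    have h1 : x t = Real.log (1 + h (Y t) / 4) := hxval t ht
    have h2 : 0 < 1 + h (Y t) / 4 := by
      have := hnonneg _ (hYge t ht); linarith
    have h3 : Real.exp (x t) = 1 + h (Y t) / 4 := by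
      rw [h1, Real.exp_log h2]
    have h4 : x t + 2 * t + Real.log 16 = Y t := by
      rw [hxdef]; simp only; ring
    rw [h3, h4]
    ring
  · rw [hxdef]; simp only; rw [hYt₀]; ring
  · -- eventually |x t| ≤ 1
    have hYtend : Filter.Tendsto Y Filter.atTop Filter.atTop := by
      have hg : Filter.Tendsto (fun t : ℝ => 2 * t + Real.log 16) Filter.atTop
          Filter.atTop :=
        Filter.tendsto_atTop_add_const_right _ _
          (Filter.Tendsto.const_mul_atTop two_pos tendsto_id)
      refine tendsto_atTop_mono (fun t => ?_) hg
      have h1 : F (Y t) = 2 * t + Real.log 16 := hFG _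
      have h2 := hF_le_self (Y t)
      linarith
    have hhY : Filter.Tendsto (fun t => h (Y t)) Filter.atTop (nhds 0) :=
      hlim.comp hYtend
    have hxlim : Filter.Tendsto x Filter.atTop (nhds 0) := by
      have h1 : Filter.Tendsto (fun t => Real.log (1 + h (Y t) / 4)) Filter.atTop
          (nhds 0) := by
        have h2 : Filter.Tendsto (fun t => 1 + h (Y t) / 4) Filter.atTop (nhds 1) := by
          have := (hhY.div_const 4).const_add 1
          simpa using this
        have h3 := (Real.continuousAt_log (by norm_num : (1:ℝ) ≠ 0)).tendsto.comp h2
        simpa [Function.comp_def] using h3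
      apply h1.congr'
      filter_upwards [eventually_ge_atTop t₀] with t ht
      exact (hxval t ht).symm
    have hmem : {z : ℝ | |z| ≤ 1} ∈ nhds (0 : ℝ) := by
      have : Set.Icc (-1 : ℝ) 1 ∈ nhds (0 : ℝ) := Icc_mem_nhds (by norm_num) (by norm_num)
      apply Filter.mem_of_superset this
      intro z hz
      exact abs_le.2 ⟨hz.1, hz.2⟩
    exact hxlim hmem
  · -- derivative bounds
    intro t ht
    have h1 : 1 < A (Y t) := hAgt _ (hYgt t ht)
    have h2 : 0 < A (Y t) := hApos _
    have h3 : (A (Y t))⁻¹ < 1 := by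
      rw [inv_lt_one_iff₀]; right; exact h1
    have h4 : 0 < (A (Y t))⁻¹ := inv_pos.2 h2
    constructor
    · rw [hx'def]; simp only; nlinarith
    · rw [hx'def]; simp only; nlinarith
  · -- strict monotonicity
    intro a _ b _ hab
    have h1 : Y a < Y b := hGmono (by linarith)
    have h2 : ∀ t : ℝ, x t + 2 * t + Real.log 16 = Y t := by
      intro t; rw [hxdef]; ring
    simp only [h2]
    exact h1
end
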